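/- arXiv:2010.11100 — 7 statements merged into one kernel-verified Lean document; each statement's English description precedes it below -/
import Mathlib

section
/- Let n ≥ 3 and let P be a set of n points in the plane ℝ², no three of which are collinear. If H is a family of 3-element subsets of P such that no two members {x,y,c} and {x,y,d} of H share a pair {x,y} while c and d lie strictly on opposite sides of the line through x and y, then |H| ≤ ∇(n). Moreover, this bound is attained: there exists such a set P of n points and such a family H with |H| = ∇(n). -/
attribute [local instance] Classical.propDecidable

def nabla (n : ℕ) : ℕ :=
  if Odd n then n * (n - 1) * (n + 1) / 24 else n * (n - 2) * (n + 2) / 24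

/-- No two members of `H` share a pair `{x, y}` with their third vertices
strictly on opposite sides of the line through `x` and `y`. -/
def D1FreePlanar (H : Finset (Finset (EuclideanSpace ℝ (Fin 2)))) : Prop :=
  ∀ x y c d : EuclideanSpace ℝ (Fin 2),
    ({x, y, c} : Finset (EuclideanSpace ℝ (Fin 2))) ∈ H →
    ({x, y, d} : Finset (EuclideanSpace ℝ (Fin 2))) ∈ H →
    ¬ (affineSpan ℝ ({x, y} : Set (EuclideanSpace ℝ (Fin 2)))).SOppSide c d

/-- No three points of `P` are collinear. -/
def NoThreeCollinear (P : Finset (EuclideanSpace ℝ (Fin 2))) : Prop :=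
  ∀ x ∈ P, ∀ y ∈ P, ∀ z ∈ P, x ≠ y → x ≠ z → y ≠ z →
    ¬ Collinear ℝ ({x, y, z} : Set (EuclideanSpace ℝ (Fin 2)))

namespace PlanarD1



abbrev Pt : Type := EuclideanSpace ℝ (Fin 2)

noncomputable def sig (a b c : Pt) : ℝ :=
  (b 0 - a 0) * (c 1 - a 1) - (b 1 - a 1) * (c 0 - a 0)

lemma sig_cycle (a b c : Pt) : sig b c a = sig a b c := by
  simp only [sig]; ring

lemma sig_swap (a b c : Pt) : sig b a c = - sig a b c := by
  simp only [sig]; ring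

lemma pt_ext {a b : Pt} (h0 : a 0 = b 0) (h1 : a 1 = b 1) : a = b := by
  ext i
  fin_cases i <;> assumption

lemma sig_eq_zero_of_mem {x y p : Pt}
    (hp : p ∈ affineSpan ℝ ({x, y} : Set Pt)) : sig x y p = 0 := by
  rw [show p = (p -ᵥ x) +ᵥ x from (vsub_vadd p x).symm] at hp
  rw [vadd_left_mem_affineSpan_pair] at hp
  obtain ⟨r, hr⟩ := hp
  have h0 := congrArg (fun v : Pt => v 0) hr
  have h1 := congrArg (fun v : Pt => v 1) hr
  simp only [vsub_eq_sub, PiLp.smul_apply, PiLp.sub_apply, smul_eq_mul] at h0 h1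
  simp only [sig]
  linear_combination (y 1 - x 1) * h0 - (y 0 - x 0) * h1

lemma mem_of_sig_eq_zero {x y p : Pt} (hxy : x ≠ y) (h : sig x y p = 0) :
    p ∈ affineSpan ℝ ({x, y} : Set Pt) := by
  rw [show p = (p -ᵥ x) +ᵥ x from (vsub_vadd p x).symm,
    vadd_left_mem_affineSpan_pair]
  have hne : y 0 - x 0 ≠ 0 ∨ y 1 - x 1 ≠ 0 := by
    by_contra hc
    push_neg at hc
    exact hxy (pt_ext (by linarith [hc.1]) (by linarith [hc.2])).symm
  simp only [sig] at h
  rcases hne with h0 | h1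
  · refine ⟨(p 0 - x 0) / (y 0 - x 0), ?_⟩
    apply pt_ext <;>
      simp only [vsub_eq_sub, PiLp.smul_apply, PiLp.sub_apply, smul_eq_mul] <;>
      field_simp <;> nlinarith [h]
  · refine ⟨(p 1 - x 1) / (y 1 - x 1), ?_⟩
    apply pt_ext <;>
      simp only [vsub_eq_sub, PiLp.smul_apply, PiLp.sub_apply, smul_eq_mul] <;>
      field_simp <;> nlinarith [h]

lemma sig_lineMap (x y c d : Pt) (t : ℝ) :
    sig x y (AffineMap.lineMap c d t) = (1 - t) * sig x y c + t * sig x y d := by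
  have h0 : (AffineMap.lineMap c d t : Pt) 0 = t * (d 0 - c 0) + c 0 := by
    simp [AffineMap.lineMap_apply, vsub_eq_sub, vadd_eq_add, PiLp.smul_apply,
      PiLp.sub_apply, PiLp.add_apply, smul_eq_mul]
  have h1 : (AffineMap.lineMap c d t : Pt) 1 = t * (d 1 - c 1) + c 1 := by
    simp [AffineMap.lineMap_apply, vsub_eq_sub, vadd_eq_add, PiLp.smul_apply,
      PiLp.sub_apply, PiLp.add_apply, smul_eq_mul]
  simp only [sig, h0, h1]
  ring

lemma not_sOppSide_of_same_sign {x y c d : Pt} (h : 0 < sig x y c * sig x y d) :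
    ¬ (affineSpan ℝ ({x, y} : Set Pt)).SOppSide c d := by
  intro hopp
  obtain ⟨p, hps, hw⟩ := AffineSubspace.wOppSide_iff_exists_wbtw.1 hopp.1
  obtain ⟨t, ht, rfl⟩ := hw
  have hz : sig x y (AffineMap.lineMap c d t) = 0 := sig_eq_zero_of_mem hps
  rw [sig_lineMap] at hz
  have hcne : sig x y c ≠ 0 := by intro h0; rw [h0] at h; simp at h
  have h1t : 0 ≤ 1 - t := by linarith [ht.2]
  rcases lt_or_gt_of_ne hcne with hc | hc
  · have hd : sig x y d < 0 := by nlinarith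
    have e1 := mul_nonpos_of_nonneg_of_nonpos h1t hc.le
    have e2 := mul_nonpos_of_nonneg_of_nonpos ht.1 hd.le
    have c1 : (1 - t) * sig x y c = 0 := by linarith
    have c2 : t * sig x y d = 0 := by linarith
    rcases mul_eq_zero.1 c1 with h1 | h1
    · have htt : t = 1 := by linarith
      rw [htt] at c2
      simp at c2
      exact absurd c2 (ne_of_lt hd)
    · exact hcne h1
  · have hd : 0 < sig x y d := by nlinarith
    have e1 := mul_nonneg h1t hc.le
    have e2 := mul_nonneg ht.1 hd.le
    have c1 : (1 - t) * sig x y c = 0 := by linarith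
    have c2 : t * sig x y d = 0 := by linarith
    rcases mul_eq_zero.1 c1 with h1 | h1
    · have htt : t = 1 := by linarith
      rw [htt] at c2
      simp at c2
      exact absurd c2 (ne_of_gt hd)
    · exact hcne h1

lemma sOppSide_of_opp_sign {x y c d : Pt} (hxy : x ≠ y)
    (hc : 0 < sig x y c) (hd : sig x y d < 0) :
    (affineSpan ℝ ({x, y} : Set Pt)).SOppSide c d := by
  set t : ℝ := sig x y c / (sig x y c - sig x y d) with ht
  have hsub : 0 < sig x y c - sig x y d := by linarith
  have ht0 : 0 ≤ t := by positivity
  have ht1 : t ≤ 1 := by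
    rw [ht, div_le_one hsub]; linarith
  have hzero : sig x y (AffineMap.lineMap c d t) = 0 := by
    rw [sig_lineMap, ht]
    field_simp
    ring
  have hmem : (AffineMap.lineMap c d t : Pt) ∈ affineSpan ℝ ({x, y} : Set Pt) :=
    mem_of_sig_eq_zero hxy hzero
  have hwbtw : Wbtw ℝ c (AffineMap.lineMap c d t) d :=
    wbtw_lineMap_iff.2 (Or.inr ⟨ht0, ht1⟩)
  refine ⟨hwbtw.wOppSide₁₃ hmem, ?_, ?_⟩
  · intro hcs
    have := sig_eq_zero_of_mem hcs
    linarith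
  · intro hds
    have := sig_eq_zero_of_mem hds
    linarith


lemma sig_swap23 (a b c : Pt) : sig a c b = - sig a b c := by
  simp only [sig]; ring

lemma sig_rot (a b c : Pt) : sig b c a = sig a b c := by
  simp only [sig]; ring

lemma sig_rot2 (a b c : Pt) : sig c a b = sig a b c := by
  simp only [sig]; ring



lemma card3_ne {α : Type*} [DecidableEq α] {x y z : α}
    (h : ({x, y, z} : Finset α).card = 3) : x ≠ y ∧ x ≠ z ∧ y ≠ z := by
  have key : ∀ a b : α, ({a, b} : Finset α).card ≤ 2 := fun a b =>
    le_trans (Finset.card_insert_le _ _) (by simp)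
  refine ⟨?_, ?_, ?_⟩ <;> rintro rfl
  · have hs : ({x, x, z} : Finset α) ⊆ {x, z} := by
      intro a ha; simp at ha ⊢; tauto
    have := (Finset.card_le_card hs).trans (key x z); omega
  · have hs : ({x, y, x} : Finset α) ⊆ {x, y} := by
      intro a ha; simp at ha ⊢; tauto
    have := (Finset.card_le_card hs).trans (key x y); omega
  · have hs : ({x, y, y} : Finset α) ⊆ {x, y} := by
      intro a ha; simp at ha ⊢; tauto
    have := (Finset.card_le_card hs).trans (key x y); omega

lemma tri_swap12 {α : Type*} [DecidableEq α] (a b c : α) :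
    ({b, a, c} : Finset α) = {a, b, c} := by ext w; simp; tauto

lemma tri_swap23 {α : Type*} [DecidableEq α] (a b c : α) :
    ({a, c, b} : Finset α) = {a, b, c} := by ext w; simp; tauto

lemma tri_swap13 {α : Type*} [DecidableEq α] (a b c : α) :
    ({c, b, a} : Finset α) = {a, b, c} := by ext w; simp; tauto

lemma tri_rot {α : Type*} [DecidableEq α] (a b c : α) :
    ({b, c, a} : Finset α) = {a, b, c} := by ext w; simp; tauto

lemma tri_rot2 {α : Type*} [DecidableEq α] (a b c : α) :
    ({c, a, b} : Finset α) = {a, b, c} := by ext w; simp; tauto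

set_option maxHeartbeats 1000000 in
lemma perm3 {α : Type*} [DecidableEq α] {x y z a b c : α}
    (hxy : x ≠ y) (hxz : x ≠ z) (hyz : y ≠ z)
    (h : ({x, y, z} : Finset α) = {a, b, c}) :
    (x = a ∧ y = b ∧ z = c) ∨ (x = a ∧ y = c ∧ z = b) ∨
    (x = b ∧ y = a ∧ z = c) ∨ (x = b ∧ y = c ∧ z = a) ∨
    (x = c ∧ y = a ∧ z = b) ∨ (x = c ∧ y = b ∧ z = a) := by
  have hx : x = a ∨ x = b ∨ x = c := by
    have hx' : x ∈ ({a, b, c} : Finset α) := by rw [← h]; simp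
    simpa using hx'
  have hy : y = a ∨ y = b ∨ y = c := by
    have hy' : y ∈ ({a, b, c} : Finset α) := by rw [← h]; simp
    simpa using hy'
  have hz : z = a ∨ z = b ∨ z = c := by
    have hz' : z ∈ ({a, b, c} : Finset α) := by rw [← h]; simp
    simpa using hz'
  rcases hx with h1 | h1 | h1 <;> rcases hy with h2 | h2 | h2 <;>
    rcases hz with h3 | h3 | h3 <;>
    first
      | (exact absurd (h1.trans h2.symm) hxy)
      | (exact absurd (h1.trans h3.symm) hxz)
      | (exact absurd (h2.trans h3.symm) hyz)
      | tauto

lemma sorted3 {s : Finset ℕ} (h : s.card = 3) :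
    ∃ i j k, i < j ∧ j < k ∧ s = {i, j, k} := by
  obtain ⟨x, y, z, hxy, hxz, hyz, rfl⟩ := Finset.card_eq_three.1 h
  rcases Nat.lt_trichotomy x y with h1 | h1 | h1
  · rcases Nat.lt_trichotomy y z with h2 | h2 | h2
    · exact ⟨x, y, z, h1, h2, rfl⟩
    · exact absurd h2 hyz
    · rcases Nat.lt_trichotomy x z with h3 | h3 | h3
      · exact ⟨x, z, y, h3, h2, by ext w; simp; tauto⟩
      · exact absurd h3 hxz
      · exact ⟨z, x, y, h3, h1, by ext w; simp; tauto⟩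
  · exact absurd h1 hxy
  · rcases Nat.lt_trichotomy x z with h2 | h2 | h2
    · exact ⟨y, x, z, h1, h2, by ext w; simp; tauto⟩
    · exact absurd h2 hxz
    · rcases Nat.lt_trichotomy y z with h3 | h3 | h3
      · exact ⟨y, z, x, h3, h2, by ext w; simp; tauto⟩
      · exact absurd h3 hyz
      · exact ⟨z, y, x, h3, h1, by ext w; simp; tauto⟩

lemma two_mul_choose_two (q : ℕ) : 2 * q.choose 2 = q * (q - 1) := by
  rcases q with _ | q'
  · simp
  · rw [Nat.choose_two_right]
    have he : 2 ∣ (q' + 1) * (q' + 1 - 1) := by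
      simp only [Nat.add_sub_cancel]
      rcases Nat.even_or_odd q' with he | ho
      · exact Dvd.dvd.mul_left he.two_dvd _
      · exact Dvd.dvd.mul_right (ho.add_one).two_dvd _
    omega

lemma six_mul_choose_three (q : ℕ) : 6 * q.choose 3 = q * (q - 1) * (q - 2) := by
  induction q with
  | zero => simp
  | succ p ih =>
    rw [Nat.choose_succ_succ, Nat.mul_add, ih]
    have h2 := two_mul_choose_two p
    rcases p with _ | p'
    · simp
    rcases p' with _ | p''
    · simp
    · simp only [Nat.add_sub_cancel] at *
      have e1 : p'' + 1 + 1 - 1 = p'' + 1 := by omega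
      have e2 : p'' + 1 + 1 - 2 = p'' := by omega
      have e3 : p'' + 1 + 1 + 1 - 1 = p'' + 2 := by omega
      have e4 : p'' + 1 + 1 + 1 - 2 = p'' + 1 := by omega
      rw [e1, e2, e3, e4] at *
      nlinarith [h2, ih]

lemma choose2_bound (k q : ℕ) : (k : ℤ) * q ≤ (q.choose 2 : ℤ) + ((k + 1).choose 2 : ℤ) := by
  have h1 : (2 : ℤ) * (q.choose 2 : ℤ) = (q : ℤ) * ((q : ℤ) - 1) := by
    have := two_mul_choose_two q
    rcases q with _ | q'
    · simp
    · push_cast [Nat.add_sub_cancel] at this ⊢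
      push_cast at this
      linarith [this]
  have h2 : (2 : ℤ) * (((k + 1).choose 2 : ℕ) : ℤ) = ((k : ℤ) + 1) * (k : ℤ) := by
    have := two_mul_choose_two (k + 1)
    push_cast [Nat.add_sub_cancel] at this
    linarith [this]
  set x : ℤ := (q : ℤ) - (k : ℤ) with hx
  rcases le_or_gt 1 x with hge | hlt
  · nlinarith [hge]
  · have hle : x ≤ 0 := by omega
    nlinarith [hle]


lemma choose2_bound_q (k q : ℕ) :
    (k : ℚ) * (q : ℚ) ≤ ((q.choose 2 : ℕ) : ℚ) + (((k + 1).choose 2 : ℕ) : ℚ) := by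
  have h1 : (2 : ℚ) * ((q.choose 2 : ℕ) : ℚ) = (q : ℚ) * ((q : ℚ) - 1) := by
    have h := two_mul_choose_two q
    rcases q with _ | q'
    · simp
    · have f1 : q' + 1 - 1 = q' := by omega
      rw [f1] at h
      have hcast := congrArg (fun x : ℕ => (x : ℚ)) h
      push_cast at hcast ⊢
      linarith
  have h2 : (2 : ℚ) * (((k + 1).choose 2 : ℕ) : ℚ) = ((k : ℚ) + 1) * (k : ℚ) := by
    have h := two_mul_choose_two (k + 1)
    have f1 : k + 1 - 1 = k := by omega
    rw [f1] at h
    have hcast := congrArg (fun x : ℕ => (x : ℚ)) h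
    push_cast at hcast
    linarith
  rcases le_or_gt q k with hle | hlt
  · have : (q : ℚ) ≤ (k : ℚ) := by exact_mod_cast hle
    nlinarith [this]
  · have : (k : ℚ) + 1 ≤ (q : ℚ) := by exact_mod_cast hlt
    nlinarith [this]

section UpperBound

set_option maxHeartbeats 1600000 in
lemma upper_bound {n : ℕ} (hn : 3 ≤ n) (P : Finset Pt) (H : Finset (Finset Pt))
    (hPcard : P.card = n) (hNC : NoThreeCollinear P)
    (hH : ∀ e ∈ H, e.card = 3 ∧ e ⊆ P) (hD1 : D1FreePlanar H) :
    H.card ≤ nabla n := by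
  classical
  set T : Pt → Pt → Prop := fun a b =>
    (∃ c, ({a, b, c} : Finset Pt) ∈ H ∧ 0 < sig a b c) ∨
      ((∀ c, ({a, b, c} : Finset Pt) ∉ H) ∧ WellOrderingRel a b) with hTdef
  have hmem3 : ∀ {x y z : Pt}, ({x, y, z} : Finset Pt) ∈ H →
      (x ≠ y ∧ x ≠ z ∧ y ≠ z) ∧ x ∈ P ∧ y ∈ P ∧ z ∈ P := by
    intro x y z hm
    obtain ⟨hc, hs⟩ := hH _ hm
    exact ⟨card3_ne hc, hs (by simp), hs (by simp), hs (by simp)⟩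
  have hsig0 : ∀ {x y z : Pt}, ({x, y, z} : Finset Pt) ∈ H → sig x y z ≠ 0 := by
    intro x y z hm h0
    obtain ⟨⟨d1, d2, d3⟩, hx, hy, hz⟩ := hmem3 hm
    apply hNC x hx y hy z hz d1 d2 d3
    have hzmem : z ∈ affineSpan ℝ ({x, y} : Set Pt) := mem_of_sig_eq_zero d1 h0
    have hcol := collinear_insert_of_mem_affineSpan_pair hzmem
    have hset : ({z, x, y} : Set Pt) = {x, y, z} := by
      ext w; simp; tauto
    rwa [hset] at hcol
  have hasym : ∀ a b : Pt, ¬ (T a b ∧ T b a) := by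
    rintro a b ⟨hab, hba⟩
    rcases hab with ⟨c, hc, hcs⟩ | ⟨hno, hw⟩
    · rcases hba with ⟨d, hd, hds⟩ | ⟨hno, _⟩
      · rw [tri_swap12] at hd
        have hds' : sig a b d < 0 := by
          have := sig_swap a b d; linarith
        have hne : a ≠ b := ((hmem3 hc).1).1
        exact hD1 a b c d hc hd (sOppSide_of_opp_sign hne hcs hds')
      · exact hno c (by rwa [tri_swap12])
    · rcases hba with ⟨d, hd, _⟩ | ⟨_, hw2⟩
      · exact hno d (by rwa [tri_swap12] at hd)
      · exact (IsWellFounded.wf (r := @WellOrderingRel Pt)).asymmetric _ _ hw hw2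
  have htot : ∀ a ∈ P, ∀ b ∈ P, a ≠ b → T a b ∨ T b a := by
    intro a _ b _ hab
    by_cases hex : ∃ c, ({a, b, c} : Finset Pt) ∈ H
    · obtain ⟨c, hc⟩ := hex
      rcases lt_or_gt_of_ne (hsig0 hc) with hlt | hgt
      · right; left
        refine ⟨c, by rw [tri_swap12]; exact hc, ?_⟩
        have := sig_swap a b c; linarith
      · left; left; exact ⟨c, hc, hgt⟩
    · push_neg at hex
      rcases trichotomous_of WellOrderingRel a b with h | h | h
      · left; right; exact ⟨hex, h⟩
      · exact absurd h hab
      · right; right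
        exact ⟨fun c => by rw [tri_swap12]; exact hex c, h⟩
  have hcyc : ∀ e ∈ H, ∃ a b c : Pt, e = {a, b, c} ∧ T a b ∧ T b c ∧ T c a := by
    intro e he
    obtain ⟨a, b, c, hab, hac, hbc, rfl⟩ := Finset.card_eq_three.1 (hH e he).1
    rcases lt_or_gt_of_ne (hsig0 he) with hneg | hpos
    · refine ⟨a, c, b, (tri_swap23 a b c).symm, ?_, ?_, ?_⟩
      · refine Or.inl ⟨b, by rw [tri_swap23]; exact he, ?_⟩
        have := sig_swap23 a b c; linarith
      · refine Or.inl ⟨a, by rw [tri_swap13]; exact he, ?_⟩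
        have h1 := sig_rot a c b
        have h2 := sig_swap23 a b c
        linarith
      · refine Or.inl ⟨c, by rw [tri_swap12]; exact he, ?_⟩
        have h1 := sig_rot c b a
        have h2 := sig_rot a c b
        have h3 := sig_swap23 a b c
        linarith
    · refine ⟨a, b, c, rfl, Or.inl ⟨c, he, hpos⟩, ?_, ?_⟩
      · refine Or.inl ⟨a, by rw [tri_rot]; exact he, ?_⟩
        have := sig_rot a b c; linarith
      · refine Or.inl ⟨b, by rw [tri_rot2]; exact he, ?_⟩
        have h1 := sig_rot2 a b c; linarith
  set Out : Pt → Finset Pt := fun v => (P.erase v).filter (fun u => T v u) with hOutdef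
  have hOutMem : ∀ {v u : Pt}, u ∈ Out v ↔ u ∈ P ∧ u ≠ v ∧ T v u := by
    intro v u
    simp only [hOutdef, Finset.mem_filter, Finset.mem_erase]
    constructor
    · rintro ⟨⟨h1, h2⟩, h3⟩; exact ⟨h2, h1, h3⟩
    · rintro ⟨h1, h2, h3⟩; exact ⟨⟨h2, h1⟩, h3⟩
  set B : Pt → Finset (Finset Pt) := fun v => ((Out v).powersetCard 2).image (insert v) with hBdef
  have hBmem : ∀ {v : Pt} {e : Finset Pt}, e ∈ B v →
      ∃ a b : Pt, a ≠ b ∧ e = insert v {a, b} ∧ a ∈ Out v ∧ b ∈ Out v := by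
    intro v e he
    simp only [hBdef, Finset.mem_image] at he
    obtain ⟨s, hs, rfl⟩ := he
    rw [Finset.mem_powersetCard] at hs
    obtain ⟨a, b, hab, rfl⟩ := Finset.card_eq_two.1 hs.2
    exact ⟨a, b, hab, rfl, hs.1 (by simp), hs.1 (by simp)⟩
  have hBnotH : ∀ v : Pt, ∀ e ∈ B v, e ∉ H := by
    intro v e heB heH
    obtain ⟨a, b, hab, rfl, ha, hb⟩ := hBmem heB
    obtain ⟨x, y, z, hxyz, hTxy, hTyz, hTzx⟩ := hcyc _ heH
    have hv : v ∈ ({x, y, z} : Finset Pt) := by rw [← hxyz]; simp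
    have hbeat : ∃ w ∈ ({x, y, z} : Finset Pt), T w v := by
      simp only [Finset.mem_insert, Finset.mem_singleton] at hv
      rcases hv with rfl | rfl | rfl
      · exact ⟨z, by simp, hTzx⟩
      · exact ⟨x, by simp, hTxy⟩
      · exact ⟨y, by simp, hTyz⟩
    obtain ⟨w, hw, hTwv⟩ := hbeat
    rw [← hxyz] at hw
    simp only [Finset.mem_insert, Finset.mem_singleton] at hw
    rcases hw with h | h | h
    · rw [h] at hTwv; exact hasym v v ⟨hTwv, hTwv⟩
    · rw [h] at hTwv; exact hasym v a ⟨(hOutMem.1 ha).2.2, hTwv⟩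
    · rw [h] at hTwv; exact hasym v b ⟨(hOutMem.1 hb).2.2, hTwv⟩
  have hBB : ∀ v ∈ P, ∀ w ∈ P, v ≠ w → Disjoint (B v) (B w) := by
    intro v _ w _ hvw
    rw [Finset.disjoint_left]
    intro e hev hew
    obtain ⟨a, b, hab, he1, ha, hb⟩ := hBmem hev
    obtain ⟨a', b', hab', he2, ha', hb'⟩ := hBmem hew
    have hTvw : T v w := by
      have hmem : w ∈ insert v ({a, b} : Finset Pt) := by
        rw [← he1, he2]; simp
      simp only [Finset.mem_insert, Finset.mem_singleton] at hmem
      rcases hmem with h | h | h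
      · exact absurd h.symm hvw
      · rw [h]; exact (hOutMem.1 ha).2.2
      · rw [h]; exact (hOutMem.1 hb).2.2
    have hTwv : T w v := by
      have hmem : v ∈ insert w ({a', b'} : Finset Pt) := by
        rw [← he2, he1]; simp
      simp only [Finset.mem_insert, Finset.mem_singleton] at hmem
      rcases hmem with h | h | h
      · exact absurd h hvw
      · rw [h]; exact (hOutMem.1 ha').2.2
      · rw [h]; exact (hOutMem.1 hb').2.2
    exact hasym v w ⟨hTvw, hTwv⟩
  have hBsub : ∀ v ∈ P, B v ⊆ P.powersetCard 3 := by
    intro v hv e he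
    obtain ⟨a, b, hab, rfl, ha, hb⟩ := hBmem he
    rw [Finset.mem_powersetCard]
    constructor
    · intro u hu
      simp only [Finset.mem_insert, Finset.mem_singleton] at hu
      rcases hu with rfl | rfl | rfl
      · exact hv
      · exact (hOutMem.1 ha).1
      · exact (hOutMem.1 hb).1
    · have hva : v ≠ a := fun h => (hOutMem.1 ha).2.1 h.symm
      have hvb : v ≠ b := fun h => (hOutMem.1 hb).2.1 h.symm
      rw [Finset.card_insert_of_notMem (by simp [hva, hvb]),
        Finset.card_insert_of_notMem (by simp [hab]), Finset.card_singleton]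
  have hHsub3 : H ⊆ P.powersetCard 3 := fun e he =>
    Finset.mem_powersetCard.2 ⟨(hH e he).2, (hH e he).1⟩
  have hBcard : ∀ v : Pt, (B v).card = (Out v).card.choose 2 := by
    intro v
    rw [hBdef]
    simp only
    rw [Finset.card_image_of_injOn, Finset.card_powersetCard]
    intro s hs t ht hst
    rw [Finset.mem_coe, Finset.mem_powersetCard] at hs ht
    have hvs : v ∉ s := fun hmem =>
      (Finset.mem_erase.1 (Finset.mem_filter.1 (hs.1 hmem)).1).1 rfl
    have hvt : v ∉ t := fun hmem =>
      (Finset.mem_erase.1 (Finset.mem_filter.1 (ht.1 hmem)).1).1 rfl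
    rw [← Finset.erase_insert hvs, ← Finset.erase_insert hvt, hst]
  have hdisjHB : Disjoint H (P.biUnion B) := by
    rw [Finset.disjoint_left]
    intro e he hb
    obtain ⟨v, _, hev⟩ := Finset.mem_biUnion.1 hb
    exact hBnotH v e hev he
  have hcard1 : H.card + ∑ v ∈ P, ((Out v).card.choose 2) ≤ n.choose 3 := by
    have hsubU : H ∪ P.biUnion B ⊆ P.powersetCard 3 :=
      Finset.union_subset hHsub3 (Finset.biUnion_subset.2 hBsub)
    have h1 := Finset.card_le_card hsubU
    rw [Finset.card_union_of_disjoint hdisjHB, Finset.card_biUnion hBB,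
      Finset.card_powersetCard, hPcard] at h1
    calc H.card + ∑ v ∈ P, ((Out v).card.choose 2)
        = H.card + ∑ v ∈ P, (B v).card := by
          congr 1; exact (Finset.sum_congr rfl fun v _ => (hBcard v).symm)
      _ ≤ n.choose 3 := h1
  have hDsum : n * n = 2 * (∑ v ∈ P, (Out v).card) + n := by
    set O : Finset (Pt × Pt) := P.offDiag.filter (fun p => T p.1 p.2) with hOdef
    have hfib : O.card = ∑ v ∈ P, (Out v).card := by
      rw [Finset.card_eq_sum_card_fiberwise
        (f := Prod.fst) (t := P)
        (fun p hp => (Finset.mem_offDiag.1 (Finset.mem_filter.1 hp).1).1)]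
      apply Finset.sum_congr rfl
      intro v hv
      apply Finset.card_bij (fun p _ => p.2)
      · intro p hp
        simp only [Finset.mem_filter, hOdef] at hp
        obtain ⟨⟨hod, hT⟩, hfst⟩ := hp
        rw [Finset.mem_offDiag] at hod
        refine hOutMem.2 ⟨hod.2.1, ?_, ?_⟩
        · intro h; exact hod.2.2 (hfst.trans h.symm)
        · rw [← hfst]; exact hT
      · intro p hp q hq hpq
        have h1 : p.1 = v := (Finset.mem_filter.1 hp).2
        have h2 : q.1 = v := (Finset.mem_filter.1 hq).2
        exact Prod.ext (h1.trans h2.symm) hpq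
      · intro u hu
        refine ⟨(v, u), Finset.mem_filter.2 ⟨Finset.mem_filter.2 ⟨?_, ?_⟩, rfl⟩, rfl⟩
        · exact Finset.mem_offDiag.2 ⟨hv, (hOutMem.1 hu).1,
            fun h => (hOutMem.1 hu).2.1 h.symm⟩
        · exact (hOutMem.1 hu).2.2
    have hswap : P.offDiag = O ∪ O.image Prod.swap := by
      ext p
      simp only [Finset.mem_union, Finset.mem_image, hOdef, Finset.mem_filter]
      constructor
      · intro hp
        have hod := Finset.mem_offDiag.1 hp
        rcases htot p.1 hod.1 p.2 hod.2.1 hod.2.2 with h | h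
        · exact Or.inl ⟨hp, h⟩
        · refine Or.inr ⟨(p.2, p.1), ⟨?_, h⟩, ?_⟩
          · exact Finset.mem_offDiag.2 ⟨hod.2.1, hod.1, fun hh => hod.2.2 hh.symm⟩
          · simp
      · rintro (hp | ⟨q, hq, rfl⟩)
        · exact hp.1
        · have hod := Finset.mem_offDiag.1 hq.1
          exact Finset.mem_offDiag.2 ⟨hod.2.1, hod.1, fun hh => hod.2.2 hh.symm⟩
    have hdisjO : Disjoint O (O.image Prod.swap) := by
      rw [Finset.disjoint_left]
      intro p hp hq
      obtain ⟨q, hq', rfl⟩ := Finset.mem_image.1 hq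
      refine hasym q.1 q.2 ⟨(Finset.mem_filter.1 hq').2, ?_⟩
      have := (Finset.mem_filter.1 hp).2
      simpa using this
    have hc3 := congrArg Finset.card hswap
    rw [Finset.card_union_of_disjoint hdisjO,
      Finset.card_image_of_injective _ Prod.swap_injective,
      Finset.offDiag_card, hPcard, hfib] at hc3
    have hnn : n ≤ n * n := Nat.le_mul_of_pos_left n (by omega)
    omega
  -- rational versions
  have hsumk : ∀ k : ℕ, (k : ℚ) * ((∑ v ∈ P, (Out v).card : ℕ) : ℚ) ≤
      ((∑ v ∈ P, ((Out v).card.choose 2) : ℕ) : ℚ) + (n : ℚ) * (((k + 1).choose 2 : ℕ) : ℚ) := by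
    intro k
    have hterm : ∀ v ∈ P, (k : ℚ) * (((Out v).card : ℕ) : ℚ) ≤
        (((Out v).card.choose 2 : ℕ) : ℚ) + (((k + 1).choose 2 : ℕ) : ℚ) :=
      fun v _ => choose2_bound_q k (Out v).card
    have h := Finset.sum_le_sum hterm
    rw [Finset.sum_add_distrib, Finset.sum_const, ← Finset.mul_sum] at h
    rw [hPcard] at h
    push_cast at h ⊢
    calc (k : ℚ) * ∑ v ∈ P, ((Out v).card : ℚ)
        ≤ (∑ v ∈ P, (((Out v).card.choose 2 : ℕ) : ℚ)) + n • (((k + 1).choose 2 : ℕ) : ℚ) := h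
      _ = (∑ v ∈ P, (((Out v).card.choose 2 : ℕ) : ℚ)) + (n : ℚ) * (((k + 1).choose 2 : ℕ) : ℚ) := by
          rw [nsmul_eq_mul]
  set DD : ℕ := ∑ v ∈ P, (Out v).card with hDDdef
  set SS : ℕ := ∑ v ∈ P, ((Out v).card.choose 2) with hSSdef
  rcases Nat.even_or_odd n with he | ho
  · -- n even, n = 2m+4
    obtain ⟨j, hj⟩ := id he
    obtain ⟨m, hm⟩ : ∃ m, n = 2 * m + 4 := ⟨j - 2, by omega⟩
    rw [nabla, if_neg (Nat.not_odd_iff_even.2 he)]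
    apply (Nat.le_div_iff_mul_le (by norm_num)).2
    have e1 : n - 2 = 2 * m + 2 := by omega
    have e2 : n + 2 = 2 * m + 6 := by omega
    rw [e1, e2, hm]
    rw [← @Nat.cast_le ℚ]
    push_cast
    have hmn : (n : ℚ) = 2 * (m : ℚ) + 4 := by rw [hm]; push_cast; ring
    have hDv : ((DD : ℕ) : ℚ) = ((m : ℚ) + 2) * (2 * (m : ℚ) + 3) := by
      have hcast := congrArg (fun x : ℕ => (x : ℚ)) hDsum
      push_cast at hcast
      rw [hmn] at hcast
      linarith
    have hc3v : ((n.choose 3 : ℕ) : ℚ) =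
        (2 * (m : ℚ) + 4) * (2 * (m : ℚ) + 3) * (2 * (m : ℚ) + 2) / 6 := by
      have h6 := six_mul_choose_three n
      have f1 : n - 1 = 2 * m + 3 := by omega
      have f2 : n - 2 = 2 * m + 2 := by omega
      rw [f1, f2] at h6
      have hcast := congrArg (fun x : ℕ => (x : ℚ)) h6
      push_cast at hcast
      rw [hmn] at hcast
      linarith
    have hc2v : (((m + 2).choose 2 : ℕ) : ℚ) = ((m : ℚ) + 2) * ((m : ℚ) + 1) / 2 := by
      have h2 := two_mul_choose_two (m + 2)
      have f1 : m + 2 - 1 = m + 1 := by omega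
      rw [f1] at h2
      have hcast := congrArg (fun x : ℕ => (x : ℚ)) h2
      push_cast at hcast
      linarith
    have hA1 : ((H.card : ℕ) : ℚ) + ((SS : ℕ) : ℚ) ≤ ((n.choose 3 : ℕ) : ℚ) := by
      exact_mod_cast hcard1
    have hA2 := hsumk (m + 1)
    rw [hDv, hc2v, hmn] at hA2
    rw [hc3v] at hA1
    push_cast at hA1 hA2 ⊢
    nlinarith [hA1, hA2]
  · -- n odd, n = 2m+3
    obtain ⟨j, hj⟩ := id ho
    obtain ⟨m, hm⟩ : ∃ m, n = 2 * m + 3 := ⟨j - 1, by omega⟩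
    rw [nabla, if_pos ⟨j, hj⟩]
    apply (Nat.le_div_iff_mul_le (by norm_num)).2
    have e1 : n - 1 = 2 * m + 2 := by omega
    have e2 : n + 1 = 2 * m + 4 := by omega
    rw [e1, e2, hm]
    rw [← @Nat.cast_le ℚ]
    push_cast
    have hmn : (n : ℚ) = 2 * (m : ℚ) + 3 := by rw [hm]; push_cast; ring
    have hDv : ((DD : ℕ) : ℚ) = (2 * (m : ℚ) + 3) * ((m : ℚ) + 1) := by
      have hcast := congrArg (fun x : ℕ => (x : ℚ)) hDsum
      push_cast at hcast
      rw [hmn] at hcast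
      linarith
    have hc3v : ((n.choose 3 : ℕ) : ℚ) =
        (2 * (m : ℚ) + 3) * (2 * (m : ℚ) + 2) * (2 * (m : ℚ) + 1) / 6 := by
      have h6 := six_mul_choose_three n
      have f1 : n - 1 = 2 * m + 2 := by omega
      have f2 : n - 2 = 2 * m + 1 := by omega
      rw [f1, f2] at h6
      have hcast := congrArg (fun x : ℕ => (x : ℚ)) h6
      push_cast at hcast
      rw [hmn] at hcast
      linarith
    have hc2v : (((m + 2).choose 2 : ℕ) : ℚ) = ((m : ℚ) + 2) * ((m : ℚ) + 1) / 2 := by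
      have h2 := two_mul_choose_two (m + 2)
      have f1 : m + 2 - 1 = m + 1 := by omega
      rw [f1] at h2
      have hcast := congrArg (fun x : ℕ => (x : ℚ)) h2
      push_cast at hcast
      linarith
    have hA1 : ((H.card : ℕ) : ℚ) + ((SS : ℕ) : ℚ) ≤ ((n.choose 3 : ℕ) : ℚ) := by
      exact_mod_cast hcard1
    have hA2 := hsumk (m + 1)
    rw [hDv, hc2v, hmn] at hA2
    rw [hc3v] at hA1
    push_cast at hA1 hA2 ⊢
    nlinarith [hA1, hA2]

end UpperBound

set_option maxHeartbeats 1600000 in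
lemma construction {n : ℕ} (hn : 3 ≤ n) :
    ∃ (P : Finset Pt) (H : Finset (Finset Pt)),
      P.card = n ∧ NoThreeCollinear P ∧
      (∀ e ∈ H, e.card = 3 ∧ e ⊆ P) ∧ D1FreePlanar H ∧
      H.card = nabla n := by
  classical
  set f : ℕ → Pt := fun i => !₂[(i : ℝ), (i : ℝ)^2] with hfdef
  have hf0 : ∀ i : ℕ, f i 0 = (i : ℝ) := fun i => rfl
  have hf1 : ∀ i : ℕ, f i 1 = (i : ℝ)^2 := fun i => rfl
  have hsigf : ∀ a b c : ℕ, sig (f a) (f b) (f c) =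
      (((b : ℝ) - a) * ((c : ℝ) - a)) * ((c : ℝ) - b) := by
    intro a b c
    simp only [sig, hf0, hf1]
    ring
  have hfinj : Function.Injective f := by
    intro a b h
    have h0 : (a : ℝ) = b := by
      have := congrArg (fun v : Pt => v 0) h
      simpa [hf0] using this
    exact_mod_cast h0
  set P : Finset Pt := (Finset.range n).image f with hPdef
  have hPcard : P.card = n := by
    rw [hPdef, Finset.card_image_of_injective _ hfinj, Finset.card_range]
  have hsignz : ∀ a b c : ℕ, a ≠ b → a ≠ c → b ≠ c → sig (f a) (f b) (f c) ≠ 0 := by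
    intro a b c hab hac hbc h0
    rw [hsigf] at h0
    rcases mul_eq_zero.1 h0 with h | h
    · rcases mul_eq_zero.1 h with h' | h'
      · exact hab (Nat.cast_inj.1 (sub_eq_zero.1 h')).symm
      · exact hac (Nat.cast_inj.1 (sub_eq_zero.1 h')).symm
    · exact hbc (Nat.cast_inj.1 (sub_eq_zero.1 h)).symm
  have hNC : NoThreeCollinear P := by
    intro x hx y hy z hz hxy hxz hyz hcol
    obtain ⟨a, ha, rfl⟩ := Finset.mem_image.1 hx
    obtain ⟨b, hb, rfl⟩ := Finset.mem_image.1 hy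
    obtain ⟨c, hc, rfl⟩ := Finset.mem_image.1 hz
    have hzmem : f c ∈ affineSpan ℝ ({f a, f b} : Set Pt) :=
      hcol.mem_affineSpan_of_mem_of_ne (by simp) (by simp) (by simp) hxy
    have h0 := sig_eq_zero_of_mem hzmem
    exact hsignz a b c (fun h => hxy (by rw [h])) (fun h => hxz (by rw [h]))
      (fun h => hyz (by rw [h])) h0
  set R : ℕ → ℕ → Prop := fun i j =>
    (i < j ∧ 2 * (j - i) ≤ n) ∨ (j < i ∧ n < 2 * (i - j)) with hRdef
  have hRasym : ∀ i j, ¬ (R i j ∧ R j i) := by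
    intro i j; simp only [hRdef]; omega
  have hRtot : ∀ i j : ℕ, i ≠ j → R i j ∨ R j i := by
    intro i j hij; simp only [hRdef]; omega
  set cyc : Finset ℕ → Prop := fun s =>
    ∃ i j k, i < j ∧ j < k ∧ s = ({i, j, k} : Finset ℕ) ∧ R i j ∧ R j k ∧ R k i with hcycdef
  set S : Finset (Finset ℕ) := ((Finset.range n).powersetCard 3).filter cyc with hSdef
  set H : Finset (Finset Pt) := S.image (fun s => s.image f) with hHdef
  have hHelem : ∀ e ∈ H, ∃ i j k : ℕ, i < j ∧ j < k ∧ i < n ∧ j < n ∧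
      k < n ∧ R i j ∧ R j k ∧ R k i ∧ e = ({f i, f j, f k} : Finset Pt) := by
    intro e he
    obtain ⟨s, hsS, rfl⟩ := Finset.mem_image.1 he
    obtain ⟨hs1, hc⟩ := Finset.mem_filter.1 hsS
    rw [Finset.mem_powersetCard] at hs1
    obtain ⟨i, j, k, hij, hjk, rfl, r1, r2, r3⟩ := hc
    refine ⟨i, j, k, hij, hjk, Finset.mem_range.1 (hs1.1 (by simp)),
      Finset.mem_range.1 (hs1.1 (by simp)), Finset.mem_range.1 (hs1.1 (by simp)),
      r1, r2, r3, ?_⟩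
    rw [Finset.image_insert, Finset.image_insert, Finset.image_singleton]
  have hHprops : ∀ e ∈ H, e.card = 3 ∧ e ⊆ P := by
    intro e he
    obtain ⟨i, j, k, hij, hjk, hi, hj, hk, _, _, _, rfl⟩ := hHelem e he
    constructor
    · rw [Finset.card_insert_of_notMem, Finset.card_insert_of_notMem,
        Finset.card_singleton]
      · simp only [Finset.mem_singleton]
        exact fun h => (by omega : j ≠ k) (hfinj h)
      · simp only [Finset.mem_insert, Finset.mem_singleton]
        rintro (h | h)
        · exact (by omega : i ≠ j) (hfinj h)
        · exact (by omega : i ≠ k) (hfinj h)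
    · intro u hu
      simp only [Finset.mem_insert, Finset.mem_singleton] at hu
      rcases hu with rfl | rfl | rfl
      · exact Finset.mem_image_of_mem f (Finset.mem_range.2 hi)
      · exact Finset.mem_image_of_mem f (Finset.mem_range.2 hj)
      · exact Finset.mem_image_of_mem f (Finset.mem_range.2 hk)
  have hkey : ∀ x y c : Pt, ({x, y, c} : Finset Pt) ∈ H → 0 < sig x y c →
      ∃ a b : ℕ, x = f a ∧ y = f b ∧ R a b := by
    intro x y c hmem hpos
    obtain ⟨i, j, k, hij, hjk, _, _, _, r1, r2, r3, heq⟩ := hHelem _ hmem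
    obtain ⟨hxy, hxc, hyc⟩ := card3_ne (hHprops _ hmem).1
    have hperm := perm3 hxy hxc hyc heq
    have hijR : (i : ℝ) < j := by exact_mod_cast hij
    have hjkR : (j : ℝ) < k := by exact_mod_cast hjk
    have hikR : (i : ℝ) < k := by linarith
    rcases hperm with ⟨e1, e2, e3⟩ | ⟨e1, e2, e3⟩ | ⟨e1, e2, e3⟩ | ⟨e1, e2, e3⟩ |
      ⟨e1, e2, e3⟩ | ⟨e1, e2, e3⟩ <;> subst e1 <;> subst e2 <;> subst e3
    · exact ⟨i, j, rfl, rfl, r1⟩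
    · exfalso
      rw [hsigf] at hpos
      have hA : (0 : ℝ) < ((k : ℝ) - i) * ((j : ℝ) - i) :=
        mul_pos (by linarith) (by linarith)
      have := mul_pos hA (show (0 : ℝ) < (k : ℝ) - j by linarith)
      nlinarith [hpos, this]
    · exfalso
      rw [hsigf] at hpos
      have hA : (0 : ℝ) < ((j : ℝ) - i) * ((k : ℝ) - j) :=
        mul_pos (by linarith) (by linarith)
      have := mul_pos hA (show (0 : ℝ) < (k : ℝ) - i by linarith)
      nlinarith [hpos, this]
    · exact ⟨j, k, rfl, rfl, r2⟩
    · exact ⟨k, i, rfl, rfl, r3⟩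
    · exfalso
      rw [hsigf] at hpos
      have hA : (0 : ℝ) < ((k : ℝ) - j) * ((k : ℝ) - i) :=
        mul_pos (by linarith) (by linarith)
      have := mul_pos hA (show (0 : ℝ) < (j : ℝ) - i by linarith)
      nlinarith [hpos, this]
  have hD1 : D1FreePlanar H := by
    intro x y c d h1 h2 hopp
    have hxy : x ≠ y := (card3_ne (hHprops _ h1).1).1
    obtain ⟨p, hps, hw⟩ := AffineSubspace.wOppSide_iff_exists_wbtw.1 hopp.1
    obtain ⟨t, ht, rfl⟩ := hw
    have hz : (1 - t) * sig x y c + t * sig x y d = 0 := by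
      rw [← sig_lineMap]; exact sig_eq_zero_of_mem hps
    have hc0 : sig x y c ≠ 0 := fun h0 => hopp.2.1 (mem_of_sig_eq_zero hxy h0)
    have hd0 : sig x y d ≠ 0 := fun h0 => hopp.2.2 (mem_of_sig_eq_zero hxy h0)
    have hprod : sig x y c * sig x y d < 0 := by
      rcases lt_trichotomy (sig x y c * sig x y d) 0 with h | h | h
      · exact h
      · exact absurd h (mul_ne_zero hc0 hd0)
      · exact absurd hopp (not_sOppSide_of_same_sign h)
    rcases lt_or_gt_of_ne hc0 with hc | hc
    · have hd : 0 < sig x y d := by nlinarith [hprod]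
      obtain ⟨a, b, hya, hxb, hab⟩ := hkey y x c (by rw [tri_swap12]; exact h1)
        (by have := sig_swap x y c; linarith)
      obtain ⟨a', b', hxa', hyb', hab'⟩ := hkey x y d h2 hd
      have eb : a' = b := hfinj (hxa'.symm.trans hxb)
      have ea : b' = a := hfinj (hyb'.symm.trans hya)
      rw [eb, ea] at hab'
      exact hRasym a b ⟨hab, hab'⟩
    · have hd : sig x y d < 0 := by nlinarith [hprod]
      obtain ⟨a, b, hxa, hyb, hab⟩ := hkey x y c h1 hc
      obtain ⟨a', b', hya', hxb', hab'⟩ := hkey y x d (by rw [tri_swap12]; exact h2)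
        (by have := sig_swap x y d; linarith)
      have eb : b' = a := hfinj (hxb'.symm.trans hxa)
      have ea : a' = b := hfinj (hya'.symm.trans hyb)
      rw [eb, ea] at hab'
      exact hRasym a b ⟨hab, hab'⟩
  have hHcard : H.card = S.card :=
    Finset.card_image_of_injOn (fun s _ t _ h => Finset.image_injective hfinj h)
  set NC : Finset (Finset ℕ) :=
    ((Finset.range n).powersetCard 3).filter (fun s => ¬ cyc s) with hNCdef
  have hpart : S.card + NC.card = n.choose 3 := by
    have := Finset.card_filter_add_card_filter_not
      (s := (Finset.range n).powersetCard 3) (p := cyc)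
    rwa [Finset.card_powersetCard, Finset.card_range] at this
  set outR : ℕ → Finset ℕ := fun v => (Finset.range n).filter (fun u => u ≠ v ∧ R v u)
    with houtdef
  set Bn : ℕ → Finset (Finset ℕ) := fun v => ((outR v).powersetCard 2).image (insert v)
    with hBndef
  have hbuild : ∀ v a b : ℕ, v < n → a < n → b < n → a ≠ b → a ≠ v → b ≠ v →
      R v a → R v b → insert v ({a, b} : Finset ℕ) ∈ (Finset.range n).biUnion Bn := by
    intro v a b hv ha hb hab hav hbv hra hrb
    refine Finset.mem_biUnion.2 ⟨v, Finset.mem_range.2 hv, ?_⟩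
    simp only [hBndef]
    refine Finset.mem_image.2 ⟨{a, b}, ?_, rfl⟩
    rw [Finset.mem_powersetCard]
    constructor
    · intro u hu
      simp only [Finset.mem_insert, Finset.mem_singleton] at hu
      simp only [houtdef, Finset.mem_filter, Finset.mem_range]
      rcases hu with rfl | rfl
      · exact ⟨ha, hav, hra⟩
      · exact ⟨hb, hbv, hrb⟩
    · rw [Finset.card_insert_of_notMem (by simp [hab]), Finset.card_singleton]
  have hNCsub : NC ⊆ (Finset.range n).biUnion Bn := by
    intro s hs
    obtain ⟨hs3, hnotcyc⟩ := Finset.mem_filter.1 hs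
    rw [Finset.mem_powersetCard] at hs3
    obtain ⟨i, j, k, hij, hjk, rfl⟩ := sorted3 hs3.2
    have hi : i < n := Finset.mem_range.1 (hs3.1 (by simp))
    have hj : j < n := Finset.mem_range.1 (hs3.1 (by simp))
    have hk : k < n := Finset.mem_range.1 (hs3.1 (by simp))
    rcases hRtot i j (by omega) with rij | rji <;>
      rcases hRtot j k (by omega) with rjk | rkj <;>
      rcases hRtot i k (by omega) with rik | rki
    · exact hbuild i j k hi hj hk (by omega) (by omega) (by omega) rij rik
    · exact absurd ⟨i, j, k, hij, hjk, rfl, rij, rjk, rki⟩ hnotcyc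
    · exact hbuild i j k hi hj hk (by omega) (by omega) (by omega) rij rik
    · rw [← tri_rot2 i j k]
      exact hbuild k i j hk hi hj (by omega) (by omega) (by omega) rki rkj
    · rw [← tri_swap12 i j k]
      exact hbuild j i k hj hi hk (by omega) (by omega) (by omega) rji rjk
    · rw [← tri_swap12 i j k]
      exact hbuild j i k hj hi hk (by omega) (by omega) (by omega) rji rjk
    · exfalso
      simp only [hRdef] at rji rkj rik
      omega
    · rw [← tri_rot2 i j k]
      exact hbuild k i j hk hi hj (by omega) (by omega) (by omega) rki rkj
  have hNCle : NC.card ≤ ∑ v ∈ Finset.range n, ((outR v).card.choose 2) := by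
    calc NC.card ≤ ((Finset.range n).biUnion Bn).card := Finset.card_le_card hNCsub
      _ ≤ ∑ v ∈ Finset.range n, (Bn v).card := Finset.card_biUnion_le
      _ ≤ ∑ v ∈ Finset.range n, ((outR v).card.choose 2) := by
          apply Finset.sum_le_sum
          intro v _
          calc (Bn v).card ≤ ((outR v).powersetCard 2).card := Finset.card_image_le
            _ = (outR v).card.choose 2 := by rw [Finset.card_powersetCard]
  have houtcard : ∀ v, v < n →
      (outR v).card = min (n - 1 - v) (n / 2) + (v - n / 2) := by
    intro v hv
    have hset : outR v =
        (Finset.Ico (v + 1) (min n (v + n / 2 + 1))) ∪ (Finset.range (v - n / 2)) := by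
      ext u
      simp only [houtdef, hRdef, Finset.mem_filter, Finset.mem_range,
        Finset.mem_union, Finset.mem_Ico]
      omega
    rw [hset, Finset.card_union_of_disjoint, Nat.card_Ico, Finset.card_range]
    · omega
    · rw [Finset.disjoint_left]
      intro u hu1 hu2
      rw [Finset.mem_Ico] at hu1
      rw [Finset.mem_range] at hu2
      omega
  have hle : H.card ≤ nabla n := upper_bound hn P H hPcard hNC hHprops hD1
  have hkeyineq : n.choose 3 ≤ S.card + ∑ v ∈ Finset.range n, ((outR v).card.choose 2) := by
    omega
  have hge : nabla n ≤ H.card := by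
    rw [hHcard]
    rcases Nat.even_or_odd n with he | ho
    · obtain ⟨m, hm⟩ : ∃ m, n = 2 * m + 4 := by
        obtain ⟨j, hj⟩ := he; exact ⟨j - 2, by omega⟩
      have hsumval : ∑ v ∈ Finset.range n, ((outR v).card.choose 2)
          = (m + 2) * (m + 2).choose 2 + (m + 2) * (m + 1).choose 2 := by
        have hdeg : ∀ v, v < n → (outR v).card = if v < m + 2 then m + 2 else m + 1 := by
          intro v hv
          rw [houtcard v hv]
          have hhalf : n / 2 = m + 2 := by omega
          rw [hhalf]
          split_ifs with h <;> omega
        rw [Finset.range_eq_Ico,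
          ← Finset.sum_Ico_consecutive _ (by omega : 0 ≤ m + 2) (by omega : m + 2 ≤ n)]
        have hsum1 : ∑ v ∈ Finset.Ico 0 (m + 2), ((outR v).card.choose 2)
            = (m + 2) * (m + 2).choose 2 := by
          rw [Finset.sum_congr rfl (fun v hv => by
            rw [hdeg v (by have := Finset.mem_Ico.1 hv; omega),
              if_pos (Finset.mem_Ico.1 hv).2])]
          rw [Finset.sum_const, Nat.card_Ico, smul_eq_mul, Nat.sub_zero]
        have hsum2 : ∑ v ∈ Finset.Ico (m + 2) n, ((outR v).card.choose 2)
            = (m + 2) * (m + 1).choose 2 := by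
          rw [Finset.sum_congr rfl (fun v hv => by
            rw [hdeg v (Finset.mem_Ico.1 hv).2,
              if_neg (by have := (Finset.mem_Ico.1 hv).1; omega)])]
          rw [Finset.sum_const, Nat.card_Ico, smul_eq_mul]
          congr 1
          omega
        rw [hsum1, hsum2]
      rw [nabla, if_neg (Nat.not_odd_iff_even.2 he)]
      have h24 : n * (n - 2) * (n + 2) ≤ 24 * S.card := by
        have e1 : n - 2 = 2 * m + 2 := by omega
        have e2 : n + 2 = 2 * m + 6 := by omega
        rw [e1, e2, hm]
        rw [← @Nat.cast_le ℚ]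
        push_cast
        have hmn : (n : ℚ) = 2 * (m : ℚ) + 4 := by rw [hm]; push_cast; ring
        have hc3v : ((n.choose 3 : ℕ) : ℚ) =
            (2 * (m : ℚ) + 4) * (2 * (m : ℚ) + 3) * (2 * (m : ℚ) + 2) / 6 := by
          have h6 := six_mul_choose_three n
          have f1 : n - 1 = 2 * m + 3 := by omega
          have f2 : n - 2 = 2 * m + 2 := by omega
          rw [f1, f2] at h6
          have hcast := congrArg (fun x : ℕ => (x : ℚ)) h6
          push_cast at hcast
          rw [hmn] at hcast
          linarith
        have hc2a : (((m + 2).choose 2 : ℕ) : ℚ) = ((m : ℚ) + 2) * ((m : ℚ) + 1) / 2 := by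
          have h2 := two_mul_choose_two (m + 2)
          have f1 : m + 2 - 1 = m + 1 := by omega
          rw [f1] at h2
          have hcast := congrArg (fun x : ℕ => (x : ℚ)) h2
          push_cast at hcast
          linarith
        have hc2b : (((m + 1).choose 2 : ℕ) : ℚ) = ((m : ℚ) + 1) * (m : ℚ) / 2 := by
          have h2 := two_mul_choose_two (m + 1)
          have f1 : m + 1 - 1 = m := by omega
          rw [f1] at h2
          have hcast := congrArg (fun x : ℕ => (x : ℚ)) h2
          push_cast at hcast
          linarith
        have hkc : ((n.choose 3 : ℕ) : ℚ) ≤ (S.card : ℚ) +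
            ((∑ v ∈ Finset.range n, ((outR v).card.choose 2) : ℕ) : ℚ) := by
          exact_mod_cast hkeyineq
        rw [hsumval] at hkc
        push_cast at hkc
        rw [hc2a, hc2b] at hkc
        rw [hc3v] at hkc
        linarith
      calc n * (n - 2) * (n + 2) / 24 ≤ (24 * S.card) / 24 := Nat.div_le_div_right h24
        _ = S.card := by rw [Nat.mul_div_cancel_left _ (by norm_num : (0:ℕ) < 24)]
    · obtain ⟨m, hm⟩ : ∃ m, n = 2 * m + 3 := by
        obtain ⟨j, hj⟩ := ho; exact ⟨j - 1, by omega⟩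
      have hsumval : ∑ v ∈ Finset.range n, ((outR v).card.choose 2)
          = n * (m + 1).choose 2 := by
        have hdeg : ∀ v, v < n → (outR v).card = m + 1 := by
          intro v hv
          rw [houtcard v hv]
          have hhalf : n / 2 = m + 1 := by omega
          rw [hhalf]
          omega
        rw [Finset.sum_congr rfl (fun v hv => by
          rw [hdeg v (Finset.mem_range.1 hv)])]
        rw [Finset.sum_const, Finset.card_range, smul_eq_mul]
      rw [nabla, if_pos ho]
      have h24 : n * (n - 1) * (n + 1) ≤ 24 * S.card := by
        have e1 : n - 1 = 2 * m + 2 := by omega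
        have e2 : n + 1 = 2 * m + 4 := by omega
        rw [e1, e2, hm]
        rw [← @Nat.cast_le ℚ]
        push_cast
        have hmn : (n : ℚ) = 2 * (m : ℚ) + 3 := by rw [hm]; push_cast; ring
        have hc3v : ((n.choose 3 : ℕ) : ℚ) =
            (2 * (m : ℚ) + 3) * (2 * (m : ℚ) + 2) * (2 * (m : ℚ) + 1) / 6 := by
          have h6 := six_mul_choose_three n
          have f1 : n - 1 = 2 * m + 2 := by omega
          have f2 : n - 2 = 2 * m + 1 := by omega
          rw [f1, f2] at h6
          have hcast := congrArg (fun x : ℕ => (x : ℚ)) h6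
          push_cast at hcast
          rw [hmn] at hcast
          linarith
        have hc2b : (((m + 1).choose 2 : ℕ) : ℚ) = ((m : ℚ) + 1) * (m : ℚ) / 2 := by
          have h2 := two_mul_choose_two (m + 1)
          have f1 : m + 1 - 1 = m := by omega
          rw [f1] at h2
          have hcast := congrArg (fun x : ℕ => (x : ℚ)) h2
          push_cast at hcast
          linarith
        have hkc : ((n.choose 3 : ℕ) : ℚ) ≤ (S.card : ℚ) +
            ((∑ v ∈ Finset.range n, ((outR v).card.choose 2) : ℕ) : ℚ) := by
          exact_mod_cast hkeyineq
        rw [hsumval] at hkc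
        push_cast at hkc
        rw [hc2b, hmn] at hkc
        rw [hc3v] at hkc
        linarith
      calc n * (n - 1) * (n + 1) / 24 ≤ (24 * S.card) / 24 := Nat.div_le_div_right h24
        _ = S.card := by rw [Nat.mul_div_cancel_left _ (by norm_num : (0:ℕ) < 24)]
  exact ⟨P, H, hPcard, hNC, hHprops, hD1, le_antisymm hle hge⟩


end PlanarD1

theorem planar_D1 (n : ℕ) (hn : 3 ≤ n) :
    (∀ (P : Finset (EuclideanSpace ℝ (Fin 2)))
       (H : Finset (Finset (EuclideanSpace ℝ (Fin 2)))),
      P.card = n → NoThreeCollinear P →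
      (∀ e ∈ H, e.card = 3 ∧ e ⊆ P) → D1FreePlanar H →
      H.card ≤ nabla n) ∧
    (∃ (P : Finset (EuclideanSpace ℝ (Fin 2)))
       (H : Finset (Finset (EuclideanSpace ℝ (Fin 2)))),
      P.card = n ∧ NoThreeCollinear P ∧
      (∀ e ∈ H, e.card = 3 ∧ e ⊆ P) ∧ D1FreePlanar H ∧
      H.card = nabla n) := by
  constructor
  · intro P H h1 h2 h3 h4
    exact PlanarD1.upper_bound hn P H h1 h2 h3 h4
  · exact PlanarD1.construction hn
end

section
/- For every integer n ≥ 3, the maximum number of triples in a D_1-free cgh on Ω_n equals ∇(n); that is, ex_circ(n, D_1) = ∇(n). -/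
/-- The list of points of `ZMod n` occurs in this clockwise cyclic order:
anchored at the first point, the clockwise arc-distances from it are
positive and strictly increasing. -/
def CWList (n : ℕ) : List (ZMod n) → Prop
  | [] => True
  | a :: l => ((0 : ℕ) :: l.map fun b => (b - a).val).Chain' (· < ·)

/-- `H` is a 3-uniform (convex geometric) hypergraph on `Ω_n = ZMod n`. -/
def IsCgh (n : ℕ) (H : Finset (Finset (ZMod n))) : Prop :=
  ∀ e ∈ H, e.card = 3

/-- `H` contains a copy of the configuration `D₁`: two triples sharing exactly
the pair `{x, y}`, with the four vertices in clockwise cyclic order `x, c, y, d`. -/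
def HasD1 (n : ℕ) (H : Finset (Finset (ZMod n))) : Prop :=
  ∃ x c y d : ZMod n,
    CWList n [x, c, y, d] ∧
    ({x, y, c} : Finset (ZMod n)) ∈ H ∧ ({x, y, d} : Finset (ZMod n)) ∈ H

set_option linter.unusedSectionVars false
set_option linter.unnecessarySeqFocus false

open Finset

def Qset : ℕ → Finset (ℕ × ℕ) := fun m =>
  (Finset.range m ×ˢ Finset.range m).filter fun p => 2*p.1 + 2*p.2 + 2 ≤ m

def Efun (n : ℕ) : ℕ := if Odd n then n*(n-1)*(n+1) else n*(n-2)*(n+2)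

lemma CT (m k : ℕ) (h : k < m) :
    2 * (((Finset.range m ×ˢ Finset.range m).filter fun p => p.1 + p.2 ≤ k).card)
      = (k+1)*(k+2) := by
  have hcard : (((Finset.range m ×ˢ Finset.range m).filter fun p => p.1 + p.2 ≤ k).card)
      = ∑ i ∈ Finset.range m, (k + 1 - i) := by
    rw [Finset.card_filter, Finset.sum_product]
    refine Finset.sum_congr rfl fun i _ => ?_
    rw [← Finset.card_filter]
    have : (Finset.range m).filter (fun j => i + j ≤ k) = Finset.range (k + 1 - i) := by
      ext j; simp only [Finset.mem_filter, Finset.mem_range]; omega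
    rw [this, Finset.card_range]
  rw [hcard]
  have hsub : ∑ i ∈ Finset.range m, (k + 1 - i) = ∑ i ∈ Finset.range (k+1), (k + 1 - i) := by
    rw [← Finset.sum_subset (Finset.range_subset_range.2 (by omega : k+1 ≤ m))]
    intro x _ hx
    simp only [Finset.mem_range] at hx; omega
  rw [hsub]
  have hrefl : ∑ i ∈ Finset.range (k+1), (k + 1 - i) = ∑ i ∈ Finset.range (k+1), (i+1) := by
    have := Finset.sum_range_reflect (fun i => i + 1) (k+1)
    rw [← this]
    refine Finset.sum_congr rfl fun i hi => ?_
    simp only [Finset.mem_range] at hi; omega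
  rw [hrefl, Finset.sum_add_distrib, Finset.sum_const, Finset.card_range, smul_eq_mul, mul_one]
  have h2 : (∑ i ∈ Finset.range (k+1), i) * 2 = k*k + k := by
    rw [Finset.sum_range_id_mul_two (k+1), Nat.add_sub_cancel]
    ring
  rw [show (k+1)*(k+2) = k*k + 3*k + 2 by ring]
  omega

lemma cardQ (m : ℕ) : 2 * (Qset m).card = (m/2) * (m/2 + 1) := by
  rcases lt_or_ge m 2 with h | h
  · have : Qset m = ∅ := by
      ext p; simp [Qset]; omega
    rw [this]
    interval_cases m <;> simp
  · have hq : Qset m = (Finset.range m ×ˢ Finset.range m).filter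
        fun p => p.1 + p.2 ≤ (m-2)/2 := by
      ext p
      simp only [Qset, Finset.mem_filter, Finset.mem_product, Finset.mem_range]
      omega
    rw [hq, CT m _ (by omega)]
    have e1 : (m-2)/2 + 1 = m/2 := by omega
    have e2 : (m-2)/2 + 2 = m/2 + 1 := by omega
    rw [e1, e2]

lemma sumS : ∀ N, 12 * (∑ u ∈ Finset.range N, (u/2)*(u/2+1)) = Efun N := by
  intro N
  induction N with
  | zero => simp [Efun]
  | succ N ih =>
    rw [Finset.sum_range_succ, Nat.mul_add, ih]
    rcases Nat.even_or_odd N with ⟨w, hw⟩ | ⟨w, hw⟩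
    · subst hw
      have h2 : (w + w) / 2 = w := by omega
      rw [h2]
      have hodd : Odd (w + w + 1) := ⟨w, by omega⟩
      have heven : ¬ Odd (w + w) := by simp [Nat.odd_iff]; omega
      simp only [Efun, if_pos hodd, if_neg heven]
      rcases Nat.eq_zero_or_pos w with rfl | hw0
      · simp
      · obtain ⟨v, rfl⟩ := Nat.exists_eq_add_of_le hw0
        rw [show 1 + v + (1 + v) - 2 = 2*v by omega,
            show 1 + v + (1 + v) + 1 - 1 = 2*v + 2 by omega]
        ring
    · subst hw
      have h2 : (2*w + 1) / 2 = w := by omega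
      rw [h2]
      have hodd : Odd (2*w + 1) := ⟨w, by omega⟩
      have heven : ¬ Odd (2*w + 1 + 1) := by simp [Nat.odd_iff]; omega
      simp only [Efun, if_pos hodd, if_neg heven]
      rw [show 2*w + 1 - 1 = 2*w by omega, show 2*w + 1 + 1 - 2 = 2*w by omega]
      ring

lemma nabla24 (N : ℕ) : 24 * nabla N = Efun N := by
  have hev : 2 ∣ (∑ u ∈ Finset.range N, (u/2)*(u/2+1)) := by
    refine Finset.dvd_sum fun u _ => ?_
    exact (Nat.even_mul_succ_self (u/2)).two_dvd
  obtain ⟨s, hs⟩ := hev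
  have h24 : Efun N = 24 * s := by rw [← sumS N, hs]; ring
  unfold nabla
  by_cases hpar : Odd N
  · rw [if_pos hpar]
    rw [Efun, if_pos hpar] at h24 ⊢
    set X := N*(N-1)*(N+1) with hX
    omega
  · rw [if_neg hpar]
    rw [Efun, if_neg hpar] at h24 ⊢
    set X := N*(N-2)*(N+2) with hX
    omega

def Pset (n : ℕ) : Finset ((_ : ℕ) × ℕ × ℕ) :=
  (Finset.range n).sigma fun x => Qset (n - 1 - x)

def fK (n : ℕ) : ((_ : ℕ) × ℕ × ℕ) → Finset (ZMod n) := fun s =>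
  {((s.1 : ℕ) : ZMod n), ((s.1 + 2*s.2.1 + 1 : ℕ) : ZMod n),
   ((s.1 + 2*s.2.1 + 2*s.2.2 + 2 : ℕ) : ZMod n)}

def Kset (n : ℕ) : Finset (Finset (ZMod n)) := (Pset n).image (fK n)

variable {n : ℕ} [NeZero n]

lemma sorted_ext {a b c a' b' c' : ZMod n}
    (h : ({a,b,c} : Finset (ZMod n)) = {a',b',c'})
    (o1 : a.val < b.val) (o2 : b.val < c.val)
    (o1' : a'.val < b'.val) (o2' : b'.val < c'.val) :
    a = a' ∧ b = b' ∧ c = c' := by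
  have key : ∀ p q : ZMod n, p = q → p.val = q.val := fun p q h => by rw [h]
  have ha : a ∈ ({a',b',c'} : Finset (ZMod n)) := by rw [← h]; simp
  have hb : b ∈ ({a',b',c'} : Finset (ZMod n)) := by rw [← h]; simp
  have hc : c ∈ ({a',b',c'} : Finset (ZMod n)) := by rw [← h]; simp
  simp only [Finset.mem_insert, Finset.mem_singleton] at ha hb hc
  have ha' := ha.imp (key a a') (fun h => h.imp (key a b') (key a c'))
  have hb' := hb.imp (key b a') (fun h => h.imp (key b b') (key b c'))
  have hc' := hc.imp (key c a') (fun h => h.imp (key c b') (key c c'))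
  have : a.val = a'.val ∧ b.val = b'.val ∧ c.val = c'.val := by omega
  exact ⟨ZMod.val_injective n this.1, ZMod.val_injective n this.2.1,
    ZMod.val_injective n this.2.2⟩

lemma K_mem {e : Finset (ZMod n)} (he : e ∈ Kset n) :
    ∃ A B C : ℕ, A < B ∧ B < C ∧ C < n ∧ (B - A) % 2 = 1 ∧ (C - B) % 2 = 1 ∧
      e = {(A : ZMod n), (B : ZMod n), (C : ZMod n)} := by
  simp only [Kset, Finset.mem_image] at he
  obtain ⟨s, hs, rfl⟩ := he
  simp only [Pset, Finset.mem_sigma, Finset.mem_range, Qset, Finset.mem_filter,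
    Finset.mem_product] at hs
  exact ⟨s.1, s.1 + 2*s.2.1 + 1, s.1 + 2*s.2.1 + 2*s.2.2 + 2, by omega, by omega,
    by omega, by omega, by omega, rfl⟩

lemma K_inj : Set.InjOn (fK n) (Pset n) := by
  rintro ⟨x, i, j⟩ hs ⟨x', i', j'⟩ ht h
  simp only [fK] at h
  simp only [Pset, Finset.mem_coe, Finset.mem_sigma, Finset.mem_range, Qset,
    Finset.mem_filter, Finset.mem_product] at hs ht
  have hv : ∀ a : ℕ, a < n → ((a : ZMod n)).val = a := fun a ha => ZMod.val_cast_of_lt ha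
  have h1 : x < n := hs.1
  have h2 : x + 2*i + 2*j + 2 < n := by omega
  have h1' : x' < n := ht.1
  have h2' : x' + 2*i' + 2*j' + 2 < n := by omega
  have := sorted_ext h
    (by rw [hv x h1, hv _ (by omega : x + 2*i + 1 < n)]; omega)
    (by rw [hv _ (by omega : x + 2*i + 1 < n), hv _ h2]; omega)
    (by rw [hv x' h1', hv _ (by omega : x' + 2*i' + 1 < n)]; omega)
    (by rw [hv _ (by omega : x' + 2*i' + 1 < n), hv _ h2']; omega)
  obtain ⟨e1, e2, e3⟩ := this
  have f1 : x = x' := by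
    have := congrArg ZMod.val e1; rwa [hv x h1, hv x' h1'] at this
  have f2 : x + 2*i + 1 = x' + 2*i' + 1 := by
    have := congrArg ZMod.val e2; rwa [hv _ (by omega), hv _ (by omega)] at this
  have f3 : x + 2*i + 2*j + 2 = x' + 2*i' + 2*j' + 2 := by
    have := congrArg ZMod.val e3; rwa [hv _ h2, hv _ h2'] at this
  have : i = i' := by omega
  have : j = j' := by omega
  subst f1; simp_all

lemma valsub (u x : ZMod n) : u.val = (x.val + (u - x).val) % n := by
  conv_lhs => rw [show u = x + (u - x) by ring]
  exact ZMod.val_add x (u - x)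

lemma cwlist4 (x c y d : ZMod n) : CWList n [x, c, y, d] ↔
    0 < (c - x).val ∧ (c - x).val < (y - x).val ∧ (y - x).val < (d - x).val := by
  simp [CWList, List.Chain', List.isChain_cons_cons, and_assoc]

lemma addmod (a b : ℕ) (hb : b < n) (ha : a < n) :
    (a + b) % n = a + b ∧ a + b < n ∨ (a + b) % n + n = a + b := by
  rcases lt_or_ge (a + b) n with h | h
  · exact Or.inl ⟨Nat.mod_eq_of_lt h, h⟩
  · right
    rw [Nat.mod_eq_sub_mod h, Nat.mod_eq_of_lt (by omega)]
    omega

lemma K_sorted {e : Finset (ZMod n)} (he : e ∈ Kset n) {p q r : ZMod n}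
    (hpq : p.val < q.val) (hqr : q.val < r.val)
    (h : ({p,q,r} : Finset (ZMod n)) = e) :
    (q.val - p.val) % 2 = 1 ∧ (r.val - q.val) % 2 = 1 := by
  obtain ⟨A, B, C, hAB, hBC, hCn, p1, p2, he'⟩ := K_mem he
  subst he'
  have hv : ∀ a : ℕ, a < n → ((a : ZMod n)).val = a := fun a ha => ZMod.val_cast_of_lt ha
  obtain ⟨e1, e2, e3⟩ := sorted_ext h hpq hqr
    (by rw [hv A (by omega), hv B (by omega)]; omega)
    (by rw [hv B (by omega), hv C hCn]; omega)
  rw [e1, e2, e3, hv A (by omega), hv B (by omega), hv C hCn]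
  exact ⟨p1, p2⟩

lemma K_D1free : ¬ HasD1 n (Kset n) := by
  rintro ⟨x, c, y, d, hcw, h1, h2⟩
  rw [cwlist4] at hcw
  obtain ⟨g1, g2, g3⟩ := hcw
  have hc := valsub c x
  have hy := valsub y x
  have hd := valsub d x
  have bX : x.val < n := ZMod.val_lt x
  have bc : (c - x).val < n := ZMod.val_lt _
  have by' : (y - x).val < n := ZMod.val_lt _
  have bd : (d - x).val < n := ZMod.val_lt _
  rcases addmod x.val (c - x).val bc bX with ⟨ec, lc⟩ | ec <;>
  rcases addmod x.val (y - x).val by' bX with ⟨ey, ly⟩ | ey <;>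
  rcases addmod x.val (d - x).val bd bX with ⟨ed, ld⟩ | ed <;>
  [skip; skip; omega; skip; omega; omega; omega; skip] <;>
  [(have Hc : c.val = x.val + (c - x).val := by omega;
    have Hy : y.val = x.val + (y - x).val := by omega;
    have Hd : d.val = x.val + (d - x).val := by omega);
   (have Hc : c.val = x.val + (c - x).val := by omega;
    have Hy : y.val = x.val + (y - x).val := by omega;
    have Hd : d.val + n = x.val + (d - x).val := by omega);
   (have Hc : c.val = x.val + (c - x).val := by omega;
    have Hy : y.val + n = x.val + (y - x).val := by omega;
    have Hd : d.val + n = x.val + (d - x).val := by omega);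
   (have Hc : c.val + n = x.val + (c - x).val := by omega;
    have Hy : y.val + n = x.val + (y - x).val := by omega;
    have Hd : d.val + n = x.val + (d - x).val := by omega)] <;>
  clear hc hy hd
  -- case 1: no wrap
  · have P1 := K_sorted h1 (show x.val < c.val by omega) (show c.val < y.val by omega)
      (by ext t; simp; tauto)
    have P2 := K_sorted h2 (show x.val < y.val by omega) (show y.val < d.val by omega) rfl
    omega
  -- case 2: d wraps
  · have P1 := K_sorted h1 (show x.val < c.val by omega) (show c.val < y.val by omega)
      (by ext t; simp; tauto)
    have P2 := K_sorted h2 (show d.val < x.val by omega) (show x.val < y.val by omega)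
      (by ext t; simp; tauto)
    omega
  -- case 3: y, d wrap (c not)
  · have P1 := K_sorted h1 (show y.val < x.val by omega) (show x.val < c.val by omega)
      (by ext t; simp; tauto)
    have P2 := K_sorted h2 (show y.val < d.val by omega) (show d.val < x.val by omega)
      (by ext t; simp; tauto)
    omega
  -- case 4: all wrap
  · have P1 := K_sorted h1 (show c.val < y.val by omega) (show y.val < x.val by omega)
      (by ext t; simp; tauto)
    have P2 := K_sorted h2 (show y.val < d.val by omega) (show d.val < x.val by omega)
      (by ext t; simp; tauto)
    omega

lemma K_cgh : ∀ e ∈ Kset n, e.card = 3 := by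
  intro e he
  obtain ⟨A, B, C, hAB, hBC, hCn, _, _, rfl⟩ := K_mem he
  have hv : ∀ a : ℕ, a < n → ((a : ZMod n)).val = a := fun a ha => ZMod.val_cast_of_lt ha
  refine Finset.card_eq_three.mpr ⟨_, _, _, ?_, ?_, ?_, rfl⟩
  · intro h; have := congrArg ZMod.val h; rw [hv A (by omega), hv B (by omega)] at this; omega
  · intro h; have := congrArg ZMod.val h; rw [hv A (by omega), hv C hCn] at this; omega
  · intro h; have := congrArg ZMod.val h; rw [hv B (by omega), hv C hCn] at this; omega

lemma K_card {n : ℕ} [NeZero n] : (Kset n).card = nabla n := by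
  have h1 : (Kset n).card = ∑ x ∈ Finset.range n, (Qset (n - 1 - x)).card := by
    rw [Kset, Finset.card_image_of_injOn K_inj, Pset, Finset.card_sigma]
  have h2 : 2 * (Kset n).card = ∑ u ∈ Finset.range n, (u/2)*(u/2+1) := by
    rw [h1, Finset.mul_sum, ← Finset.sum_range_reflect (fun u => (u/2)*(u/2+1)) n]
    exact Finset.sum_congr rfl fun x _ => cardQ _
  have h3 : 24 * (Kset n).card = 24 * nabla n := by
    rw [nabla24, ← sumS n, ← h2]; ring
  omega

lemma choose2_mul (m : ℕ) : 2 * m.choose 2 = m * (m - 1) := by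
  induction m with
  | zero => simp
  | succ k ih =>
    rw [Nat.choose_succ_succ, Nat.mul_add, ih, Nat.choose_one_right]
    cases k <;> simp <;> ring

lemma choose3_mul (m : ℕ) : 6 * m.choose 3 = m * (m - 1) * (m - 2) := by
  induction m with
  | zero => simp
  | succ k ih =>
    rw [Nat.choose_succ_succ, Nat.mul_add, ih,
      show (6 : ℕ) * k.choose 2 = 3 * (2 * k.choose 2) by ring, choose2_mul]
    match k with
    | 0 => simp
    | 1 => simp
    | Nat.succ (Nat.succ m) =>
      simp only [Nat.succ_eq_add_one]
      rw [show m+1+1-1 = m+1 by omega, show m+1+1-2 = m by omega,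
        show m+1+1+1-1 = m+1+1 by omega, show m+1+1+1-2 = m+1 by omega]
      ring

lemma tournament_bound {n : ℕ} [NeZero n] (hn : 3 ≤ n) (o : ZMod n → ZMod n → Prop)
    (hasym : ∀ u v, o u v → o v u → False)
    (htot : ∀ u v : ZMod n, u ≠ v → o u v ∨ o v u)
    (H : Finset (Finset (ZMod n)))
    (hH3 : ∀ e ∈ H, e.card = 3)
    (hcyc : ∀ e ∈ H, ∀ v ∈ e, ∃ u ∈ e, o u v) :
    24 * H.card ≤ Efun n := by
  classical
  have hirr : ∀ v, ¬ o v v := fun v h => hasym v v h h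
  set d : ZMod n → ℕ := fun v => (univ.filter (o v)).card with hd
  set A : Finset ((_ : ZMod n) × Finset (ZMod n)) :=
    univ.sigma (fun v => (univ.filter (o v)).powersetCard 2) with hA
  set g : ((_ : ZMod n) × Finset (ZMod n)) → Finset (ZMod n) :=
    fun s => insert s.1 s.2 with hg
  have hmemA : ∀ (v : ZMod n) (p : Finset (ZMod n)),
      (⟨v, p⟩ : (_ : ZMod n) × Finset (ZMod n)) ∈ A →
      p ⊆ univ.filter (o v) ∧ p.card = 2 ∧ v ∉ p := by
    intro v p hs
    simp only [hA, Finset.mem_sigma, Finset.mem_powersetCard] at hs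
    refine ⟨hs.2.1, hs.2.2, fun hv => ?_⟩
    exact hirr v ((Finset.mem_filter.1 (hs.2.1 hv)).2)
  -- injectivity of g on A
  have hginj : Set.InjOn g A := by
    rintro ⟨v, p⟩ hs ⟨w, q⟩ ht hgeq
    obtain ⟨hp1, hp2, hp3⟩ := hmemA _ _ hs
    obtain ⟨hq1, hq2, hq3⟩ := hmemA _ _ ht
    have hgeq' : insert v p = insert w q := hgeq
    have hvw : v = w := by
      by_contra hne
      have hw : w ∈ insert v p := by rw [hgeq']; exact Finset.mem_insert_self w q
      have hv : v ∈ insert w q := by rw [← hgeq']; exact Finset.mem_insert_self v p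
      rcases Finset.mem_insert.1 hw with h | h
      · exact hne h.symm
      · rcases Finset.mem_insert.1 hv with h' | h'
        · exact hne h'
        · exact hasym v w ((Finset.mem_filter.1 (hp1 h)).2) ((Finset.mem_filter.1 (hq1 h')).2)
    subst hvw
    have : p = q := by
      rw [← Finset.erase_insert hp3, ← Finset.erase_insert hq3, hgeq']
    subst this
    rfl
  -- image of g avoids H and lands in P3
  set P3 : Finset (Finset (ZMod n)) := (univ : Finset (ZMod n)).powersetCard 3 with hP3
  have hgP3 : ∀ s ∈ A, g s ∈ P3 := by
    rintro ⟨v, p⟩ hs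
    obtain ⟨hp1, hp2, hp3⟩ := hmemA _ _ hs
    simp only [hP3, Finset.mem_powersetCard]
    refine ⟨Finset.subset_univ _, ?_⟩
    show (insert v p).card = 3
    rw [Finset.card_insert_of_notMem hp3, hp2]
  have hgH : ∀ s ∈ A, g s ∉ H := by
    rintro ⟨v, p⟩ hs hmem
    obtain ⟨hp1, hp2, hp3⟩ := hmemA _ _ hs
    have hmem' : insert v p ∈ H := hmem
    obtain ⟨u, hu, hou⟩ := hcyc _ hmem' v (Finset.mem_insert_self v p)
    rcases Finset.mem_insert.1 hu with h | h
    · exact hirr v (h ▸ hou)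
    · exact hasym v u ((Finset.mem_filter.1 (hp1 h)).2) hou
  have hHP3 : H ⊆ P3 := fun e he =>
    Finset.mem_powersetCard.2 ⟨Finset.subset_univ _, hH3 e he⟩
  -- cardinality bound
  have hcards : H.card + A.card ≤ n.choose 3 := by
    have hdisj : Disjoint H (A.image g) := by
      rw [Finset.disjoint_right]
      intro e he hH'
      obtain ⟨s, hs, rfl⟩ := Finset.mem_image.1 he
      exact hgH s hs hH'
    have hsub : H ∪ A.image g ⊆ P3 := by
      intro e he
      rcases Finset.mem_union.1 he with h | h
      · exact hHP3 h
      · obtain ⟨s, hs, rfl⟩ := Finset.mem_image.1 h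
        exact hgP3 s hs
    have h1 := Finset.card_le_card hsub
    rw [Finset.card_union_of_disjoint hdisj,
      Finset.card_image_of_injOn hginj] at h1
    have : P3.card = n.choose 3 := by
      rw [hP3, Finset.card_powersetCard, Finset.card_univ, ZMod.card]
    omega
  have hcardA : A.card = ∑ v : ZMod n, (d v).choose 2 := by
    rw [hA, Finset.card_sigma]
    exact Finset.sum_congr rfl fun v _ => Finset.card_powersetCard 2 _
  -- degree sum
  have hS1 : 2 * ∑ v : ZMod n, d v = n * (n - 1) := by
    have hdv : ∀ v, d v = ∑ u : ZMod n, if o v u then 1 else 0 := by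
      intro v; rw [hd]; exact Finset.card_filter _ _
    have hswap : ∑ v : ZMod n, ∑ u : ZMod n, (if o u v then (1:ℕ) else 0)
        = ∑ v : ZMod n, ∑ u : ZMod n, (if o v u then (1:ℕ) else 0) :=
      Finset.sum_comm
    have hcomb : ∑ v : ZMod n, ∑ u : ZMod n,
        ((if o v u then (1:ℕ) else 0) + (if o u v then 1 else 0))
        = ∑ v : ZMod n, ∑ u : ZMod n, (if v = u then (0:ℕ) else 1) := by
      refine Finset.sum_congr rfl fun v _ => Finset.sum_congr rfl fun u _ => ?_
      by_cases h : v = u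
      · subst h; simp [hirr v]
      · rcases htot v u h with h' | h'
        · have hnc : ¬ o u v := fun hc => hasym v u h' hc
          simp [h', hnc, h]
        · have hnc : ¬ o v u := fun hc => hasym u v h' hc
          simp [h', hnc, h]
    have hinner : ∀ v : ZMod n, ∑ u : ZMod n, (if v = u then (0:ℕ) else 1) = n - 1 := by
      intro v
      have h1 : ∑ u : ZMod n, ((if v = u then (0:ℕ) else 1) + (if v = u then 1 else 0))
          = n := by
        have : ∀ u : ZMod n, ((if v = u then (0:ℕ) else 1) + (if v = u then 1 else 0)) = 1 := by
          intro u; by_cases h : v = u <;> simp [h]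
        rw [Finset.sum_congr rfl fun u _ => this u]
        simp [Finset.card_univ, ZMod.card]
      have h2 : ∑ u : ZMod n, (if v = u then (1:ℕ) else 0) = 1 := by
        rw [Finset.sum_ite_eq]; simp
      rw [Finset.sum_add_distrib, h2] at h1
      omega
    have hfin : (∑ v : ZMod n, ∑ u : ZMod n, (if v = u then (0:ℕ) else 1)) = n * (n-1) := by
      rw [Finset.sum_congr rfl fun v _ => hinner v, Finset.sum_const,
        Finset.card_univ, ZMod.card, smul_eq_mul]
    rw [hfin] at hcomb
    rw [Finset.sum_congr rfl fun (v : ZMod n) (_ : v ∈ univ) =>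
      Finset.sum_add_distrib, Finset.sum_add_distrib, hswap] at hcomb
    have hsum : ∑ v : ZMod n, d v
        = ∑ v : ZMod n, ∑ u : ZMod n, (if o v u then (1:ℕ) else 0) :=
      Finset.sum_congr rfl fun v _ => hdv v
    omega
  -- integer assembly
  have castmul : ∀ m : ℕ, ((m * (m-1) : ℕ) : ℤ) = (m:ℤ)^2 - (m:ℤ) := by
    intro m
    cases m with
    | zero => simp
    | succ k => push_cast [Nat.succ_sub_one]; ring
  set N : ℤ := (n : ℤ) with hN
  set Dv : ℤ := ∑ v : ZMod n, (d v : ℤ) with hDv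
  set Qv : ℤ := ∑ v : ZMod n, (d v : ℤ)^2 with hQv
  have hD : 2 * Dv = N * (N - 1) := by
    have h := congrArg (Nat.cast : ℕ → ℤ) hS1
    push_cast [Nat.cast_sub (by omega : 1 ≤ n)] at h
    rw [hDv, hN]
    exact_mod_cast h
  have hT : 2 * (A.card : ℤ) = Qv - Dv := by
    have h1 : 2 * A.card = ∑ v : ZMod n, (d v) * (d v - 1) := by
      rw [hcardA, Finset.mul_sum]
      exact Finset.sum_congr rfl fun v _ => choose2_mul (d v)
    have h2 := congrArg (Nat.cast : ℕ → ℤ) h1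
    rw [Nat.cast_mul, Nat.cast_sum] at h2
    rw [Finset.sum_congr rfl fun (v : ZMod n) (_ : v ∈ univ) => castmul (d v),
      Finset.sum_sub_distrib] at h2
    rw [hQv, hDv]
    exact_mod_cast h2
  have hQ : 4 * (N - 1) * Dv ≤ 4 * Qv + N * ((N-1)^2 - (if Even n then 1 else 0)) := by
    have hpt : ∀ v : ZMod n, 4 * (N - 1) * (d v : ℤ)
        ≤ 4 * (d v : ℤ)^2 + ((N-1)^2 - (if Even n then 1 else 0)) := by
      intro v
      by_cases he : Even n
      · simp only [if_pos he]
        have hNe : N % 2 = 0 := by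
          rw [hN, Int.even_iff.mp (by exact_mod_cast he : Even (n:ℤ))]
        have hz0 : 2*(d v:ℤ) - (N-1) ≠ 0 := by omega
        have h1 : 1 ≤ |2*(d v:ℤ) - (N-1)| := Int.one_le_abs hz0
        nlinarith [sq_abs (2*(d v:ℤ) - (N-1)), h1]
      · simp only [if_neg he]
        nlinarith [sq_nonneg (2*(d v:ℤ) - (N-1))]
    have hsum := Finset.sum_le_sum (fun v (_ : v ∈ (univ : Finset (ZMod n))) => hpt v)
    rw [← Finset.mul_sum, Finset.sum_add_distrib, ← Finset.mul_sum,
      Finset.sum_const, Finset.card_univ, ZMod.card, nsmul_eq_mul] at hsum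
    rw [hDv, hQv]
    exact_mod_cast hsum
  have hcardsZ : (H.card : ℤ) + (A.card : ℤ) ≤ ((n.choose 3 : ℕ) : ℤ) := by
    exact_mod_cast hcards
  have hch3Z : 6 * ((n.choose 3 : ℕ) : ℤ) = N * (N - 1) * (N - 2) := by
    have h := congrArg (Nat.cast : ℕ → ℤ) (choose3_mul n)
    push_cast [Nat.cast_sub (by omega : 1 ≤ n), Nat.cast_sub (by omega : 2 ≤ n)] at h
    exact_mod_cast h
  have e5 : 12 * (N - 1) * Dv = 6 * N * (N-1)^2 := by linear_combination (6*(N-1)) * hD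
  have e6 : 12 * Dv = 6 * N * (N - 1) := by linear_combination 6 * hD
  by_cases hodd : Odd n
  · rw [Efun, if_pos hodd]
    have hc : (if Even n then (1:ℤ) else 0) = 0 := by
      simp [Nat.not_even_iff_odd.2 hodd]
    rw [hc] at hQ
    zify [show 1 ≤ n by omega]
    nlinarith [hcardsZ, hch3Z, hT, hQ, e5, e6]
  · rw [Efun, if_neg hodd]
    have hc : (if Even n then (1:ℤ) else 0) = 1 := by
      simp [Nat.not_odd_iff_even.1 hodd]
    rw [hc] at hQ
    zify [show 2 ≤ n by omega]
    nlinarith [hcardsZ, hch3Z, hT, hQ, e5, e6]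

lemma triACB {α : Type*} [DecidableEq α] (a b c : α) :
    ({a, c, b} : Finset α) = {a, b, c} := by ext t; simp; tauto
lemma triBAC {α : Type*} [DecidableEq α] (a b c : α) :
    ({b, a, c} : Finset α) = {a, b, c} := by ext t; simp; tauto
lemma triBCA {α : Type*} [DecidableEq α] (a b c : α) :
    ({b, c, a} : Finset α) = {a, b, c} := by ext t; simp; tauto
lemma triCAB {α : Type*} [DecidableEq α] (a b c : α) :
    ({c, a, b} : Finset α) = {a, b, c} := by ext t; simp; tauto
lemma triCBA {α : Type*} [DecidableEq α] (a b c : α) :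
    ({c, b, a} : Finset α) = {a, b, c} := by ext t; simp; tauto

def Rrel (n : ℕ) (H : Finset (Finset (ZMod n))) (u v : ZMod n) : Prop :=
  ∃ w : ZMod n, 0 < (w - u).val ∧ (w - u).val < (v - u).val ∧
    ({u, v, w} : Finset (ZMod n)) ∈ H

def Orel (n : ℕ) (H : Finset (Finset (ZMod n))) (u v : ZMod n) : Prop :=
  Rrel n H u v ∨ (¬ Rrel n H u v ∧ ¬ Rrel n H v u ∧ u.val < v.val)

section
variable {n : ℕ} [NeZero n] {H : Finset (Finset (ZMod n))}

lemma key1 (hD1 : ¬ HasD1 n H) :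
    ∀ u v, Rrel n H u v → Rrel n H v u → False := by
  rintro u v ⟨w1, a1, a2, a3⟩ ⟨w2, b1, b2, b3⟩
  apply hD1
  refine ⟨u, w1, v, w2, ?_, a3, ?_⟩
  · rw [cwlist4]
    refine ⟨a1, a2, ?_⟩
    have h1 := valsub v u
    have h2 := valsub w2 u
    have h3 := valsub w2 v
    have h4 := valsub u v
    have c1 := ZMod.val_lt (v - u)
    have c2 := ZMod.val_lt (w2 - u)
    have c3 := ZMod.val_lt (w2 - v)
    have c4 := ZMod.val_lt (u - v)
    have c5 := ZMod.val_lt u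
    have c6 := ZMod.val_lt v
    have c7 := ZMod.val_lt w2
    have m1 := addmod u.val (v - u).val (ZMod.val_lt _) (ZMod.val_lt _)
    have m2 := addmod u.val (w2 - u).val (ZMod.val_lt _) (ZMod.val_lt _)
    have m3 := addmod v.val (w2 - v).val (ZMod.val_lt _) (ZMod.val_lt _)
    have m4 := addmod v.val (u - v).val (ZMod.val_lt _) (ZMod.val_lt _)
    omega
  · rw [triBAC v u w2]
    exact b3

lemma keyAsym (hD1 : ¬ HasD1 n H) :
    ∀ u v, Orel n H u v → Orel n H v u → False := by
  intro u v h h'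
  rcases h with h | ⟨h1, h2, h3⟩ <;> rcases h' with h' | ⟨h1', h2', h3'⟩
  · exact key1 hD1 u v h h'
  · exact h2' h
  · exact h2 h'
  · omega

lemma keyTot : ∀ u v : ZMod n, u ≠ v → Orel n H u v ∨ Orel n H v u := by
  intro u v hne
  by_cases r1 : Rrel n H u v
  · exact Or.inl (Or.inl r1)
  by_cases r2 : Rrel n H v u
  · exact Or.inr (Or.inl r2)
  have hval : u.val ≠ v.val := fun h => hne (ZMod.val_injective n h)
  rcases lt_or_gt_of_ne hval with h | h
  · exact Or.inl (Or.inr ⟨r1, r2, h⟩)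
  · exact Or.inr (Or.inr ⟨r2, r1, h⟩)

lemma mainR {x y z : ZMod n} (h1 : x.val < y.val) (h2 : y.val < z.val)
    (hmem : ({x, y, z} : Finset (ZMod n)) ∈ H) :
    Rrel n H x z ∧ Rrel n H z y ∧ Rrel n H y x := by
  have bx := ZMod.val_lt x
  have by' := ZMod.val_lt y
  have bz := ZMod.val_lt z
  have c1 := ZMod.val_lt (y - x)
  have c2 := ZMod.val_lt (z - x)
  have c3 := ZMod.val_lt (x - z)
  have c4 := ZMod.val_lt (y - z)
  have c5 := ZMod.val_lt (z - y)
  have c6 := ZMod.val_lt (x - y)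
  have d1 := valsub y x
  have d2 := valsub z x
  have d3 := valsub x z
  have d4 := valsub y z
  have d5 := valsub z y
  have d6 := valsub x y
  have m1 := addmod x.val (y - x).val (ZMod.val_lt _) (ZMod.val_lt _)
  have m2 := addmod x.val (z - x).val (ZMod.val_lt _) (ZMod.val_lt _)
  have m3 := addmod z.val (x - z).val (ZMod.val_lt _) (ZMod.val_lt _)
  have m4 := addmod z.val (y - z).val (ZMod.val_lt _) (ZMod.val_lt _)
  have m5 := addmod y.val (z - y).val (ZMod.val_lt _) (ZMod.val_lt _)
  have m6 := addmod y.val (x - y).val (ZMod.val_lt _) (ZMod.val_lt _)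
  refine ⟨⟨y, by omega, by omega, ?_⟩, ⟨x, by omega, by omega, ?_⟩,
    ⟨z, by omega, by omega, ?_⟩⟩
  · rw [triACB x y z]
    exact hmem
  · rw [triCBA x y z]
    exact hmem
  · rw [triBAC x y z]
    exact hmem

lemma coverO {x y z : ZMod n} (h1 : x.val < y.val) (h2 : y.val < z.val)
    (hmem : ({x, y, z} : Finset (ZMod n)) ∈ H) :
    ∀ v ∈ ({x, y, z} : Finset (ZMod n)), ∃ u ∈ ({x, y, z} : Finset (ZMod n)),
      Orel n H u v := by
  obtain ⟨r1, r2, r3⟩ := mainR h1 h2 hmem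
  intro v hv
  rcases Finset.mem_insert.1 hv with rfl | hv'
  · exact ⟨y, by simp, Or.inl r3⟩
  rcases Finset.mem_insert.1 hv' with rfl | hv''
  · exact ⟨z, by simp, Or.inl r2⟩
  · rw [Finset.mem_singleton.1 hv'']
    exact ⟨x, by simp, Or.inl r1⟩

lemma keyCyc (hH3 : ∀ e ∈ H, e.card = 3) :
    ∀ e ∈ H, ∀ v ∈ e, ∃ u ∈ e, Orel n H u v := by
  intro e he
  obtain ⟨a, b, c, hab, hac, hbc, rfl⟩ := Finset.card_eq_three.1 (hH3 e he)
  have hval : ∀ p q : ZMod n, p ≠ q → p.val ≠ q.val :=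
    fun p q hne h => hne (ZMod.val_injective n h)
  have h6 : ∃ x y z : ZMod n, x.val < y.val ∧ y.val < z.val ∧
      ({a, b, c} : Finset (ZMod n)) = {x, y, z} := by
    have nab := hval a b hab
    have nac := hval a c hac
    have nbc := hval b c hbc
    rcases lt_or_gt_of_ne nab with h1 | h1 <;>
    rcases lt_or_gt_of_ne nac with h2 | h2 <;>
    rcases lt_or_gt_of_ne nbc with h3 | h3
    · exact ⟨a, b, c, h1, h3, rfl⟩
    · exact ⟨a, c, b, h2, h3, (triACB a b c).symm⟩
    · omega
    · exact ⟨c, a, b, h2, h1, (triCAB a b c).symm⟩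
    · exact ⟨b, a, c, h1, h2, (triBAC a b c).symm⟩
    · omega
    · exact ⟨b, c, a, h3, h2, (triBCA a b c).symm⟩
    · exact ⟨c, b, a, h3, h1, (triCBA a b c).symm⟩
  obtain ⟨x, y, z, hxy, hyz, hset⟩ := h6
  rw [hset] at he ⊢
  exact coverO hxy hyz he
end

theorem ex_D1 (n : ℕ) (hn : 3 ≤ n) :
    IsGreatest {m : ℕ | ∃ H : Finset (Finset (ZMod n)),
        IsCgh n H ∧ ¬ HasD1 n H ∧ H.card = m}
      (nabla n) := by
  haveI : NeZero n := ⟨by omega⟩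
  constructor
  · exact ⟨Kset n, fun e he => K_cgh e he, K_D1free, K_card⟩
  · rintro m ⟨H, hH, hD1, rfl⟩
    have hub := tournament_bound hn (Orel n H) (keyAsym hD1) keyTot H
      (fun e he => hH e he) (keyCyc (fun e he => hH e he))
    have h24 := nabla24 n
    omega
end

section
/- For every integer n ≥ 7, the maximum number of triples in an ordered 3-uniform hypergraph on the linearly ordered vertex set v_0 < v_1 < … < v_{n−1} containing no two triples {v_i,v_j,v_k} and {v_{i'},v_{j'},v_{k'}} with v_i < v_{i'} < v_j < v_{j'} < v_k < v_{k'} equals C(n,3) − C(n−3,3). -/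
/-- The ordered 3-uniform hypergraph `H` on the linearly ordered vertex set
`Fin n` contains the ordered configuration `M₃`: two triples
`{i, j, k}` and `{i', j', k'}` with `i < i' < j < j' < k < k'`. -/
def HasOrderedM3 (n : ℕ) (H : Finset (Finset (Fin n))) : Prop :=
  ∃ i i' j j' k k' : Fin n,
    i < i' ∧ i' < j ∧ j < j' ∧ j' < k ∧ k < k' ∧
    ({i, j, k} : Finset (Fin n)) ∈ H ∧ ({i', j', k'} : Finset (Fin n)) ∈ H


open Finset
open Fin.NatCast

/-- uniqueness of sorted triple representation over ℕ -/
lemma sorted3_eq {a b c a' b' c' : ℕ}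
    (h1 : a < b) (h2 : b < c) (h1' : a' < b') (h2' : b' < c')
    (he : ({a, b, c} : Finset ℕ) = {a', b', c'}) : a = a' ∧ b = b' ∧ c = c' := by
  have hmem : ∀ x : ℕ, x ∈ ({a, b, c} : Finset ℕ) ↔ x ∈ ({a', b', c'} : Finset ℕ) := by
    intro x; rw [he]
  simp only [mem_insert, mem_singleton] at hmem
  have ha' := (hmem a').2 (Or.inl rfl)
  have hb' := (hmem b').2 (Or.inr (Or.inl rfl))
  have hc' := (hmem c').2 (Or.inr (Or.inr rfl))
  have ha := (hmem a).1 (Or.inl rfl)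
  have hb := (hmem b).1 (Or.inr (Or.inl rfl))
  have hc := (hmem c).1 (Or.inr (Or.inr rfl))
  omega

/-- decomposition of a 3-element Finset ℕ into a sorted triple -/
lemma exists_sorted3 {e : Finset ℕ} (h : e.card = 3) :
    ∃ a b c : ℕ, a < b ∧ b < c ∧ e = {a, b, c} := by
  rcases Finset.card_eq_three.mp h with ⟨x, y, z, hxy, hxz, hyz, rfl⟩
  have hperm : ∀ u v w : ℕ, ({u, v, w} : Finset ℕ) = {x, y, z} →
      u < v → v < w → ∃ a b c : ℕ, a < b ∧ b < c ∧ ({x,y,z} : Finset ℕ) = {a, b, c} :=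
    fun u v w he h1 h2 => ⟨u, v, w, h1, h2, he.symm⟩
  rcases lt_trichotomy x y with h|h|h
  · rcases lt_trichotomy y z with g|g|g
    · exact ⟨x, y, z, h, g, rfl⟩
    · omega
    · rcases lt_trichotomy x z with f|f|f
      · refine hperm x z y ?_ f (by omega)
        ext t; simp [mem_insert, mem_singleton]; tauto
      · omega
      · refine hperm z x y ?_ f h
        ext t; simp [mem_insert, mem_singleton]; tauto
  · omega
  · rcases lt_trichotomy x z with g|g|g
    · refine hperm y x z ?_ h g
      ext t; simp [mem_insert, mem_singleton]; tauto
    · omega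
    · rcases lt_trichotomy y z with f|f|f
      · refine hperm y z x ?_ f g
        ext t; simp [mem_insert, mem_singleton]; tauto
      · omega
      · refine hperm z y x ?_ f h
        ext t; simp [mem_insert, mem_singleton]; tauto

lemma card_sorted3 {a b c : ℕ} (h1 : a < b) (h2 : b < c) :
    ({a, b, c} : Finset ℕ).card = 3 := by
  rw [card_insert_of_notMem (by simp; omega), card_insert_of_notMem (by simp; omega),
    card_singleton]


section LemA

variable (W : Finset (ℕ × ℕ))

/-- candidate set for the injection -/
def cands (w : ℕ × ℕ) : Finset ℕ :=
  insert (w.2 - 1) ((W.filter (fun w' => w'.2 = w.2 ∧ w.1 < w'.1)).image Prod.fst)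

lemma cands_nonempty (w : ℕ × ℕ) : (cands W w).Nonempty := ⟨w.2 - 1, mem_insert_self _ _⟩

noncomputable def iot (w : ℕ × ℕ) : ℕ := (cands W w).min' (cands_nonempty W w)

lemma iot_le (w : ℕ × ℕ) : iot W w ≤ w.2 - 1 := min'_le _ _ (mem_insert_self _ _)

lemma iot_gt (hW : ∀ w ∈ W, w.1 + 2 ≤ w.2) (w : ℕ × ℕ) (hw : w ∈ W) : w.1 < iot W w := by
  have hm : iot W w ∈ cands W w := min'_mem (cands W w) (cands_nonempty W w)
  rcases mem_insert.mp hm with h | h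
  · have := hW w hw; omega
  · rcases mem_image.mp h with ⟨w', hw', hfst⟩
    rcases mem_filter.mp hw' with ⟨_, _, hlt⟩
    have he : iot W w = w'.1 := hfst.symm
    omega

lemma iot_min (w : ℕ × ℕ) (a' : ℕ) (h : (a', w.2) ∈ W) (hlt : w.1 < a') : iot W w ≤ a' := by
  apply min'_le
  exact mem_insert_of_mem (mem_image.mpr ⟨(a', w.2), mem_filter.mpr ⟨h, rfl, hlt⟩, rfl⟩)

lemma iot_attain (w : ℕ × ℕ) (h : iot W w ≠ w.2 - 1) : (iot W w, w.2) ∈ W := by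
  have hm : iot W w ∈ cands W w := min'_mem (cands W w) (cands_nonempty W w)
  rcases mem_insert.mp hm with h' | h'
  · exact absurd h' h
  · rcases mem_image.mp h' with ⟨w', hw', hfst⟩
    rcases mem_filter.mp hw' with ⟨hmem, hsnd, _⟩
    have : w' = (iot W w, w.2) := by
      rw [Prod.ext_iff]; exact ⟨hfst, hsnd⟩
    rwa [this] at hmem

/-- Lemma A : a noncrossing family of nonempty open integer intervals injects into its union -/
lemma lemA (hW : ∀ w ∈ W, w.1 + 2 ≤ w.2)
    (hnc : ∀ w ∈ W, ∀ w' ∈ W, ¬(w.1 < w'.1 ∧ w'.1 < w.2 ∧ w.2 < w'.2)) :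
    W.card ≤ (W.biUnion (fun w => Finset.Ioo w.1 w.2)).card := by
  apply card_le_card_of_injOn (iot W)
  · intro w hw
    apply mem_biUnion.mpr ⟨w, hw, ?_⟩
    have h1 := iot_gt W hW w hw
    have h2 := iot_le W w
    have h3 := hW w hw
    exact mem_Ioo.mpr ⟨h1, by omega⟩
  · intro w₁ hw₁ w₂ hw₂ heq
    simp only [mem_coe] at hw₁ hw₂
    by_contra hne
    have g1 := iot_gt W hW w₁ hw₁
    have g2 := iot_gt W hW w₂ hw₂
    have l1 := iot_le W w₁
    have l2 := iot_le W w₂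
    have s1 := hW w₁ hw₁
    have s2 := hW w₂ hw₂
    rcases eq_or_ne w₁.2 w₂.2 with hb | hb
    · -- same second coordinate, different first
      have hfs : w₁.1 ≠ w₂.1 := by
        intro h; exact hne (Prod.ext h hb)
      rcases Nat.lt_or_ge w₁.1 w₂.1 with h | h
      · have := iot_min W w₁ w₂.1 (by rw [hb]; exact (Prod.mk.eta (p := w₂)) ▸ hw₂) h
        omega
      · have := iot_min W w₂ w₁.1 (by rw [← hb]; exact (Prod.mk.eta (p := w₁)) ▸ hw₁) (by omega)
        omega
    · -- different second coordinates: wlog via symmetry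
      rcases Nat.lt_or_ge w₁.2 w₂.2 with h | h
      · have hy2 : iot W w₂ ≠ w₂.2 - 1 := by omega
        have hatt := iot_attain W w₂ hy2
        have g2' := iot_gt W hW _ hatt  -- not needed maybe
        exact hnc w₁ hw₁ _ hatt ⟨by omega, by omega, by omega⟩
      · have h' : w₂.2 < w₁.2 := by omega
        have hy1 : iot W w₁ ≠ w₁.2 - 1 := by omega
        have hatt := iot_attain W w₁ hy1
        exact hnc w₂ hw₂ _ hatt ⟨by omega, by omega, by omega⟩

end LemA


def Rrect (T : ℕ × ℕ × ℕ) : Finset (ℕ × ℕ) := Finset.Ioo T.1 T.2.1 ×ˢ Finset.Ioo T.2.1 T.2.2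

lemma mem_Rrect {p : ℕ × ℕ} {T : ℕ × ℕ × ℕ} :
    p ∈ Rrect T ↔ (T.1 < p.1 ∧ p.1 < T.2.1) ∧ (T.2.1 < p.2 ∧ p.2 < T.2.2) := by
  simp [Rrect, Finset.mem_product, Finset.mem_Ioo]

def Spread3' (T : ℕ × ℕ × ℕ) : Prop := 1 ≤ T.1 ∧ T.1 + 2 ≤ T.2.1 ∧ T.2.1 + 2 ≤ T.2.2

instance : DecidablePred Spread3' := fun T => by unfold Spread3'; infer_instance

def PatFree (S : Finset (ℕ × ℕ × ℕ)) : Prop :=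
  ∀ T ∈ S, ∀ T' ∈ S, ¬(T.1 < T'.1 ∧ T'.1 < T.2.1 ∧ T.2.1 < T'.2.1 ∧ T'.2.1 < T.2.2 ∧
    T.2.2 < T'.2.2)


lemma lemD : ∀ S : Finset (ℕ × ℕ × ℕ), (∀ T ∈ S, Spread3' T) → PatFree S →
    S.card ≤ (S.biUnion Rrect).card := by
  intro S
  induction S using Finset.strongInduction with
  | _ S ih =>
    intro hsp hpf
    rcases S.eq_empty_or_nonempty with rfl | hne
    · simp
    have hneim : (S.image (fun T => T.2.2)).Nonempty := hne.image _
    set M := (S.image (fun T => T.2.2)).max' hneim with hMdef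
    have hMmem : ∃ T ∈ S, T.2.2 = M := by
      have := max'_mem _ hneim
      rcases mem_image.mp this with ⟨T, hT, hTe⟩
      exact ⟨T, hT, hTe⟩
    have hMmax : ∀ T ∈ S, T.2.2 ≤ M := by
      intro T hT
      exact le_max' _ _ (mem_image_of_mem (fun T => T.2.2) hT)
    set P := S.filter (fun T => T.2.2 = M) with hPdef
    set S' := S.filter (fun T => ¬(T.2.2 = M)) with hS'def
    have hPS : ∀ T ∈ P, T ∈ S := fun T hT => (mem_filter.mp hT).1
    have hS'S : ∀ T ∈ S', T ∈ S := fun T hT => (mem_filter.mp hT).1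
    have hsplit : P.card + S'.card = S.card := card_filter_add_card_filter_not _
    have hMbig : 5 ≤ M := by
      rcases hMmem with ⟨T, hT, hTe⟩
      have := hsp T hT
      rw [Spread3'] at this; omega
    -- strict subset for induction
    have hssub : S' ⊂ S := by
      rcases hMmem with ⟨T, hT, hTe⟩
      refine Finset.ssubset_iff_of_subset (filter_subset _ _) |>.mpr ⟨T, hT, ?_⟩
      simp [hS'def, mem_filter, hTe]
    have ihS' : S'.card ≤ (S'.biUnion Rrect).card :=
      ih S' hssub (fun T hT => hsp T (hS'S T hT))
        (fun T hT T' hT' => hpf T (hS'S T hT) T' (hS'S T' hT'))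
    -- rows and corners
    set rowset := P.biUnion (fun T => Finset.Ioo T.1 T.2.1) with hrowset
    set rows := rowset.image (fun y => (y, M - 1)) with hrows
    set PP := P.filter (fun q => ∃ p ∈ P, p.1 < q.1 ∧ q.1 < p.2.1 ∧ p.2.1 < q.2.1) with hPP
    set WW := P.filter (fun q => ¬ ∃ p ∈ P, p.1 < q.1 ∧ q.1 < p.2.1 ∧ p.2.1 < q.2.1) with hWW
    have hsplit2 : PP.card + WW.card = P.card := card_filter_add_card_filter_not _
    set corners := PP.image (fun T => (T.1, T.2.1)) with hcorners
    -- injectivity of pair map on P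
    have hpairinj : ∀ T ∈ P, ∀ T' ∈ P, (T.1, T.2.1) = (T'.1, T'.2.1) → T = T' := by
      intro T hT T' hT' h
      have h1 := (mem_filter.mp hT).2
      have h2 := (mem_filter.mp hT').2
      simp only [Prod.mk.injEq] at h
      have : T.2 = T'.2 := Prod.ext h.2 (by rw [h1, h2])
      exact Prod.ext h.1 this
    have hcornerscard : corners.card = PP.card := by
      rw [hcorners]
      apply card_image_of_injOn
      intro T hT T' hT' h
      exact hpairinj T (mem_of_mem_filter _ hT) T' (mem_of_mem_filter _ hT') h
    have hrowscard : rows.card = rowset.card := by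
      rw [hrows]
      apply card_image_of_injOn
      intro y _ y' _ h
      simpa using h
    -- WW pairs are noncrossing; apply lemA
    have hWWcard : WW.card ≤ rowset.card := by
      set W2 := WW.image (fun T => (T.1, T.2.1)) with hW2
      have hW2card : W2.card = WW.card := by
        rw [hW2]
        apply card_image_of_injOn
        intro T hT T' hT' h
        exact hpairinj T (mem_of_mem_filter _ hT) T' (mem_of_mem_filter _ hT') h
      have hA : W2.card ≤ (W2.biUnion (fun w => Finset.Ioo w.1 w.2)).card := by
        apply lemA W2
        · intro w hw
          rcases mem_image.mp hw with ⟨T, hT, rfl⟩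
          have := hsp T (hPS T (mem_of_mem_filter _ hT))
          rw [Spread3'] at this
          exact this.2.1
        · intro w hw w' hw' hcross
          rcases mem_image.mp hw with ⟨T, hT, rfl⟩
          rcases mem_image.mp hw' with ⟨T', hT', rfl⟩
          have hnp := (mem_filter.mp hT').2
          exact hnp ⟨T, mem_of_mem_filter _ hT, hcross.1, hcross.2.1, hcross.2.2⟩
      have hsub : W2.biUnion (fun w => Finset.Ioo w.1 w.2) ⊆ rowset := by
        intro y hy
        rcases mem_biUnion.mp hy with ⟨w, hw, hyw⟩
        rcases mem_image.mp hw with ⟨T, hT, rfl⟩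
        exact mem_biUnion.mpr ⟨T, mem_of_mem_filter _ hT, hyw⟩
      calc WW.card = W2.card := hW2card.symm
        _ ≤ _ := hA
        _ ≤ rowset.card := card_le_card hsub
    -- inclusions into the big union
    have hrowsub : rows ⊆ S.biUnion Rrect := by
      intro p hp
      rcases mem_image.mp hp with ⟨y, hy, rfl⟩
      rcases mem_biUnion.mp hy with ⟨T, hT, hyT⟩
      have hTP := (mem_filter.mp hT).2
      have hspT := hsp T (hPS T hT); rw [Spread3'] at hspT
      refine mem_biUnion.mpr ⟨T, hPS T hT, mem_Rrect.mpr ⟨?_, ?_⟩⟩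
      · exact mem_Ioo.mp hyT
      · constructor <;> omega
    have hcornsub : corners ⊆ S.biUnion Rrect := by
      intro p hp
      rcases mem_image.mp hp with ⟨q, hq, rfl⟩
      rcases (mem_filter.mp hq).2 with ⟨pr, hpr, h1, h2, h3⟩
      have hqP := (mem_filter.mp (mem_of_mem_filter _ hq)).2
      have hprP := (mem_filter.mp hpr).2
      have hspq := hsp q (hPS q (mem_of_mem_filter _ hq)); rw [Spread3'] at hspq
      refine mem_biUnion.mpr ⟨pr, hPS pr hpr, mem_Rrect.mpr ⟨⟨h1, h2⟩, ⟨h3, ?_⟩⟩⟩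
      omega
    -- disjointness
    have hdisj1 : Disjoint rows (S'.biUnion Rrect) := by
      rw [disjoint_left]
      intro p hp hp'
      rcases mem_image.mp hp with ⟨y, _, rfl⟩
      rcases mem_biUnion.mp hp' with ⟨T', hT', hmem⟩
      have h1 := (mem_filter.mp hT').2
      have h2 := hMmax T' (hS'S T' hT')
      have := (mem_Rrect.mp hmem).2.2
      simp only at this
      omega
    have hdisj2 : Disjoint corners (S'.biUnion Rrect) := by
      rw [disjoint_left]
      intro p hp hp'
      rcases mem_image.mp hp with ⟨q, hq, rfl⟩
      rcases mem_biUnion.mp hp' with ⟨T', hT', hmem⟩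
      rcases mem_Rrect.mp hmem with ⟨⟨g1, g2⟩, g3, g4⟩
      have h1 := (mem_filter.mp hT').2
      have h2 := hMmax T' (hS'S T' hT')
      have hqM := (mem_filter.mp (mem_of_mem_filter _ hq)).2
      exact hpf T' (hS'S T' hT') q (hPS q (mem_of_mem_filter _ hq))
        ⟨g1, g2, g3, g4, by omega⟩
    have hdisj3 : Disjoint rows corners := by
      rw [disjoint_left]
      intro p hp hp'
      rcases mem_image.mp hp with ⟨y, _, rfl⟩
      rcases mem_image.mp hp' with ⟨q, hq, hqe⟩
      have hqM := (mem_filter.mp (mem_of_mem_filter _ hq)).2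
      have hspq := hsp q (hPS q (mem_of_mem_filter _ hq)); rw [Spread3'] at hspq
      have : q.2.1 = M - 1 := by
        have := congrArg Prod.snd hqe
        simpa using this
      omega
    -- final counting
    have hunionsub : (S'.biUnion Rrect) ∪ rows ∪ corners ⊆ S.biUnion Rrect := by
      apply union_subset (union_subset ?_ hrowsub) hcornsub
      exact biUnion_subset_biUnion_of_subset_left _ (filter_subset _ _)
    have hcard1 : ((S'.biUnion Rrect) ∪ rows ∪ corners).card
        = (S'.biUnion Rrect).card + rows.card + corners.card := by
      rw [card_union_of_disjoint, card_union_of_disjoint]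
      · exact hdisj1.symm
      · rw [disjoint_union_left]
        exact ⟨hdisj2.symm, hdisj3⟩
    calc S.card = P.card + S'.card := hsplit.symm
      _ = PP.card + WW.card + S'.card := by rw [hsplit2]
      _ ≤ corners.card + rowset.card + (S'.biUnion Rrect).card := by
          have := hcornerscard
          omega
      _ = (S'.biUnion Rrect).card + rows.card + corners.card := by rw [hrowscard]; ring
      _ = ((S'.biUnion Rrect) ∪ rows ∪ corners).card := hcard1.symm
      _ ≤ (S.biUnion Rrect).card := card_le_card hunionsub

/-- all sorted triples with entries < m -/
def T3 (m : ℕ) : Finset (ℕ × ℕ × ℕ) :=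
  (Finset.range m ×ˢ (Finset.range m ×ˢ Finset.range m)).filter
    (fun τ => τ.1 < τ.2.1 ∧ τ.2.1 < τ.2.2)

lemma mem_T3 {m : ℕ} {τ : ℕ × ℕ × ℕ} :
    τ ∈ T3 m ↔ τ.1 < τ.2.1 ∧ τ.2.1 < τ.2.2 ∧ τ.2.2 < m := by
  simp only [T3, mem_filter, mem_product, mem_range]
  constructor
  · rintro ⟨⟨h1, h2, h3⟩, h4, h5⟩; exact ⟨h4, h5, h3⟩
  · rintro ⟨h1, h2, h3⟩; exact ⟨⟨by omega, by omega, h3⟩, h1, h2⟩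

lemma card_T3 (m : ℕ) : (T3 m).card = m.choose 3 := by
  have : (T3 m).card = (Finset.powersetCard 3 (Finset.range m)).card := by
    apply card_bij (fun τ _ => ({τ.1, τ.2.1, τ.2.2} : Finset ℕ))
    · intro τ hτ
      rcases mem_T3.mp hτ with ⟨h1, h2, h3⟩
      rw [mem_powersetCard]
      refine ⟨?_, card_sorted3 h1 h2⟩
      intro x hx
      simp only [mem_insert, mem_singleton] at hx
      rw [mem_range]; rcases hx with rfl|rfl|rfl <;> omega
    · intro τ hτ τ' hτ' he
      rcases mem_T3.mp hτ with ⟨h1, h2, _⟩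
      rcases mem_T3.mp hτ' with ⟨h1', h2', _⟩
      rcases sorted3_eq h1 h2 h1' h2' he with ⟨e1, e2, e3⟩
      exact Prod.ext e1 (Prod.ext e2 e3)
    · intro e he
      rw [mem_powersetCard] at he
      rcases exists_sorted3 he.2 with ⟨a, b, c, h1, h2, rfl⟩
      have hc : c < m := by
        have := he.1 (show c ∈ ({a,b,c} : Finset ℕ) by simp)
        rwa [mem_range] at this
      exact ⟨(a, b, c), mem_T3.mpr ⟨h1, h2, hc⟩, rfl⟩
  rw [this, card_powersetCard, card_range]

/-- spread sorted triples with entries < n -/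
def Sp3 (n : ℕ) : Finset (ℕ × ℕ × ℕ) := (T3 n).filter Spread3'

lemma card_Sp3 (n : ℕ) : (Sp3 n).card = (n - 3).choose 3 := by
  rw [← card_T3 (n - 3)]
  apply card_nbij' (fun τ => (τ.1 - 1, τ.2.1 - 2, τ.2.2 - 3))
    (fun σ => (σ.1 + 1, σ.2.1 + 2, σ.2.2 + 3))
  · intro τ hτ
    rcases mem_filter.mp hτ with ⟨ht, hs⟩
    rcases mem_T3.mp ht with ⟨h1, h2, h3⟩
    rcases hs with ⟨g1, g2, g3⟩
    rw [mem_coe, mem_T3]; dsimp only; refine ⟨by omega, by omega, by omega⟩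
  · intro σ hσ
    rcases mem_T3.mp hσ with ⟨h1, h2, h3⟩
    simp only [mem_coe, Sp3]; rw [mem_filter, mem_T3, Spread3']; dsimp only
    refine ⟨⟨by omega, by omega, by omega⟩, by omega, by omega, by omega⟩
  · intro τ hτ
    rcases mem_filter.mp hτ with ⟨ht, g1, g2, g3⟩
    rcases mem_T3.mp ht with ⟨h1, h2, h3⟩
    rw [Prod.ext_iff, Prod.ext_iff]; dsimp only
    refine ⟨by omega, by omega, by omega⟩
  · intro σ hσ
    rw [Prod.ext_iff, Prod.ext_iff]; dsimp only
    refine ⟨by omega, by omega, by omega⟩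

section Bridge

variable {n : ℕ} [NeZero n]

lemma image_val_triple {a b c : ℕ} (ha : a < n) (hb : b < n) (hc : c < n) :
    (({(↑a : Fin n), ↑b, ↑c} : Finset (Fin n)).image Fin.val) = {a, b, c} := by
  rw [image_insert, image_insert, image_singleton,
    Fin.val_cast_of_lt ha, Fin.val_cast_of_lt hb, Fin.val_cast_of_lt hc]

lemma card_triple {a b c : ℕ} (h1 : a < b) (h2 : b < c) (hc : c < n) :
    ({(↑a : Fin n), ↑b, ↑c} : Finset (Fin n)).card = 3 := by
  have h := card_image_of_injective ({(↑a : Fin n), ↑b, ↑c} : Finset (Fin n)) Fin.val_injective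
  rw [image_val_triple (by omega) (by omega) hc] at h
  rw [← h, card_sorted3 h1 h2]

lemma cast_lt_cast {a b : ℕ} (h : a < b) (hb : b < n) : (↑a : Fin n) < ↑b := by
  rw [Fin.lt_def, Fin.val_cast_of_lt (by omega), Fin.val_cast_of_lt hb]
  exact h

/-- e is a spread 3-set -/
def SpreadSet (n : ℕ) [NeZero n] (e : Finset (Fin n)) : Prop :=
  ∃ a b c : ℕ, a < b ∧ b < c ∧ c < n ∧ e.image Fin.val = {a, b, c} ∧
    1 ≤ a ∧ a + 2 ≤ b ∧ b + 2 ≤ c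

noncomputable instance {n : ℕ} [NeZero n] : DecidablePred (SpreadSet n) :=
  fun _ => Classical.dec _

lemma eq_triple_of_image_val {e : Finset (Fin n)} {a b c : ℕ}
    (ha : a < n) (hb : b < n) (hc : c < n)
    (h : e.image Fin.val = ({a, b, c} : Finset ℕ)) :
    e = {(↑a : Fin n), ↑b, ↑c} := by
  apply Finset.image_injective Fin.val_injective
  rw [h, image_val_triple ha hb hc]

noncomputable def NSet (n : ℕ) [NeZero n] : Finset (Finset (Fin n)) :=
  (Finset.powersetCard 3 (Finset.univ : Finset (Fin n))).filter (fun e => ¬ SpreadSet n e)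

lemma card_NSet : (NSet n).card = n.choose 3 - (n - 3).choose 3 := by
  have hall : (Finset.powersetCard 3 (Finset.univ : Finset (Fin n))).card = n.choose 3 := by
    rw [card_powersetCard, card_univ, Fintype.card_fin]
  have hsp : ((Finset.powersetCard 3 (Finset.univ : Finset (Fin n))).filter
      (fun e => SpreadSet n e)).card = (n - 3).choose 3 := by
    rw [← card_Sp3 n]
    symm
    apply card_bij (fun τ _ => ({(↑τ.1 : Fin n), ↑τ.2.1, ↑τ.2.2} : Finset (Fin n)))
    · intro τ hτ
      rcases mem_filter.mp hτ with ⟨ht, hs⟩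
      rcases mem_T3.mp ht with ⟨h1, h2, h3⟩
      refine mem_filter.mpr ⟨mem_powersetCard.mpr ⟨subset_univ _, card_triple h1 h2 h3⟩, ?_⟩
      exact ⟨τ.1, τ.2.1, τ.2.2, h1, h2, h3,
        image_val_triple (by omega) (by omega) h3, hs.1, hs.2.1, hs.2.2⟩
    · intro τ hτ τ' hτ' he
      rcases mem_T3.mp (mem_filter.mp hτ).1 with ⟨h1, h2, h3⟩
      rcases mem_T3.mp (mem_filter.mp hτ').1 with ⟨h1', h2', h3'⟩
      have himg : ({τ.1, τ.2.1, τ.2.2} : Finset ℕ) = {τ'.1, τ'.2.1, τ'.2.2} := by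
        rw [← image_val_triple (n := n) (by omega) (by omega) h3,
          ← image_val_triple (n := n) (by omega) (by omega) h3', he]
      rcases sorted3_eq h1 h2 h1' h2' himg with ⟨e1, e2, e3⟩
      exact Prod.ext e1 (Prod.ext e2 e3)
    · intro e he
      rcases mem_filter.mp he with ⟨hp, a, b, c, h1, h2, h3, himg, g1, g2, g3⟩
      exact ⟨(a, b, c), mem_filter.mpr ⟨mem_T3.mpr ⟨h1, h2, h3⟩, g1, g2, g3⟩,
        (eq_triple_of_image_val (by omega) (by omega) h3 himg).symm⟩
  have hsplit := card_filter_add_card_filter_not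
    (s := Finset.powersetCard 3 (Finset.univ : Finset (Fin n))) (p := fun e => SpreadSet n e)
  rw [NSet]
  omega

lemma NSet_card3 : ∀ e ∈ NSet n, e.card = 3 := by
  intro e he
  exact (mem_powersetCard.mp (mem_filter.mp he).1).2

lemma NSet_free : ¬ HasOrderedM3 n (NSet n) := by
  rintro ⟨i, i', j, j', k, k', h1, h2, h3, h4, h5, hm1, hm2⟩
  have hns := (mem_filter.mp hm2).2
  apply hns
  refine ⟨i'.val, j'.val, k'.val, ?_, ?_, k'.isLt, ?_, ?_⟩
  · exact Fin.lt_def.mp (h2.trans h3)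
  · exact Fin.lt_def.mp (h4.trans h5)
  · rw [image_insert, image_insert, image_singleton]
  · refine ⟨?_, ?_, ?_⟩
    · have := Fin.lt_def.mp h1; omega
    · have g1 := Fin.lt_def.mp h2; have g2 := Fin.lt_def.mp h3; omega
    · have g1 := Fin.lt_def.mp h4; have g2 := Fin.lt_def.mp h5; omega

end Bridge

section Upper

variable {n : ℕ} [NeZero n]

lemma upper_bound (H : Finset (Finset (Fin n)))
    (h3 : ∀ e ∈ H, e.card = 3) (hfree : ¬ HasOrderedM3 n H) :
    H.card ≤ n.choose 3 - (n - 3).choose 3 := by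
  classical
  set S := (Sp3 n).filter
    (fun τ => ({(↑τ.1 : Fin n), ↑τ.2.1, ↑τ.2.2} : Finset (Fin n)) ∈ H) with hSdef
  have hSfacts : ∀ τ ∈ S, τ.1 < τ.2.1 ∧ τ.2.1 < τ.2.2 ∧ τ.2.2 < n ∧
      (1 ≤ τ.1 ∧ τ.1 + 2 ≤ τ.2.1 ∧ τ.2.1 + 2 ≤ τ.2.2) ∧
      ({(↑τ.1 : Fin n), ↑τ.2.1, ↑τ.2.2} : Finset (Fin n)) ∈ H := by
    intro τ hτ
    rcases mem_filter.mp hτ with ⟨hsp, hH⟩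
    rcases mem_filter.mp hsp with ⟨ht, hs⟩
    rcases mem_T3.mp ht with ⟨h1, h2, h3'⟩
    exact ⟨h1, h2, h3', hs, hH⟩
  -- split H
  set Hs := H.filter (fun e => SpreadSet n e) with hHs
  set Hn := H.filter (fun e => ¬ SpreadSet n e) with hHn
  have hsplit : Hs.card + Hn.card = H.card := card_filter_add_card_filter_not _
  -- |Hs| = |S|
  have hHsS : S.card = Hs.card := by
    apply card_bij (fun τ _ => ({(↑τ.1 : Fin n), ↑τ.2.1, ↑τ.2.2} : Finset (Fin n)))
    · intro τ hτ
      rcases hSfacts τ hτ with ⟨h1, h2, h3', hs, hH⟩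
      refine mem_filter.mpr ⟨hH, τ.1, τ.2.1, τ.2.2, h1, h2, h3',
        image_val_triple (by omega) (by omega) h3', hs.1, hs.2.1, hs.2.2⟩
    · intro τ hτ τ' hτ' he
      rcases hSfacts τ hτ with ⟨h1, h2, h3', _, _⟩
      rcases hSfacts τ' hτ' with ⟨h1', h2', h3'', _, _⟩
      have himg : ({τ.1, τ.2.1, τ.2.2} : Finset ℕ) = {τ'.1, τ'.2.1, τ'.2.2} := by
        rw [← image_val_triple (n := n) (by omega) (by omega) h3',
          ← image_val_triple (n := n) (by omega) (by omega) h3'', he]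
      rcases sorted3_eq h1 h2 h1' h2' himg with ⟨e1, e2, e3⟩
      exact Prod.ext e1 (Prod.ext e2 e3)
    · intro e he
      rcases mem_filter.mp he with ⟨heH, a, b, c, h1, h2, h3', himg, g1, g2, g3⟩
      have heq : e = {(↑a : Fin n), ↑b, ↑c} :=
        eq_triple_of_image_val (by omega) (by omega) h3' himg
      refine ⟨(a, b, c), mem_filter.mpr ⟨mem_filter.mpr
        ⟨mem_T3.mpr ⟨h1, h2, h3'⟩, g1, g2, g3⟩, ?_⟩, heq.symm⟩
      rw [← heq]; exact heH
  -- S is pattern free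
  have hpf : PatFree S := by
    intro τ hτ τ' hτ' hpat
    rcases hSfacts τ hτ with ⟨h1, h2, h3', hs, hH⟩
    rcases hSfacts τ' hτ' with ⟨h1', h2', h3'', hs', hH'⟩
    rcases hpat with ⟨p1, p2, p3, p4, p5⟩
    exact hfree ⟨↑τ.1, ↑τ'.1, ↑τ.2.1, ↑τ'.2.1, ↑τ.2.2, ↑τ'.2.2,
      cast_lt_cast p1 (by omega), cast_lt_cast p2 (by omega), cast_lt_cast p3 (by omega),
      cast_lt_cast p4 (by omega), cast_lt_cast p5 h3'', hH, hH'⟩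
  -- apply the key lemma
  have hDS : S.card ≤ (S.biUnion Rrect).card :=
    lemD S (fun τ hτ => (hSfacts τ hτ).2.2.2.1) hpf
  set B := S.biUnion Rrect with hB
  have hBfacts : ∀ p ∈ B, 0 < p.1 ∧ p.1 < p.2 ∧ p.2 < n := by
    intro p hp
    rcases mem_biUnion.mp hp with ⟨τ, hτ, hmem⟩
    rcases hSfacts τ hτ with ⟨h1, h2, h3', hs, _⟩
    rcases mem_Rrect.mp hmem with ⟨⟨g1, g2⟩, g3, g4⟩
    exact ⟨by omega, by omega, by omega⟩
  set K := B.image (fun p => ({(↑(0:ℕ) : Fin n), ↑p.1, ↑p.2} : Finset (Fin n))) with hK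
  have hKcard : K.card = B.card := by
    rw [hK]
    apply card_image_of_injOn
    intro p hp p' hp' he
    rcases hBfacts p hp with ⟨g1, g2, g3⟩
    rcases hBfacts p' hp' with ⟨g1', g2', g3'⟩
    have he' : ({(↑(0:ℕ) : Fin n), ↑p.1, ↑p.2} : Finset (Fin n)) = {↑(0:ℕ), ↑p'.1, ↑p'.2} := he
    have himg : ({0, p.1, p.2} : Finset ℕ) = {0, p'.1, p'.2} := by
      rw [← image_val_triple (n := n) (Nat.pos_of_ne_zero (NeZero.ne n)) (by omega) g3,
        ← image_val_triple (n := n) (Nat.pos_of_ne_zero (NeZero.ne n)) (by omega) g3', he']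
    rcases sorted3_eq g1 (by omega) g1' (by omega) himg with ⟨_, e2, e3⟩
    exact Prod.ext e2 e3
  -- K avoids H
  have hKH : ∀ x ∈ K, x ∉ H := by
    intro x hx hxH
    rcases mem_image.mp hx with ⟨p, hp, rfl⟩
    rcases mem_biUnion.mp hp with ⟨τ, hτ, hmem⟩
    rcases hSfacts τ hτ with ⟨h1, h2, h3', hs, hH⟩
    rcases mem_Rrect.mp hmem with ⟨⟨g1, g2⟩, g3, g4⟩
    exact hfree ⟨↑(0:ℕ), ↑τ.1, ↑p.1, ↑τ.2.1, ↑p.2, ↑τ.2.2,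
      cast_lt_cast (by omega) (by omega), cast_lt_cast g1 (by omega),
      cast_lt_cast g2 (by omega), cast_lt_cast g3 (by omega),
      cast_lt_cast g4 h3', hxH, hH⟩
  -- K lands in NSet
  have hKN : K ⊆ NSet n := by
    intro x hx
    rcases mem_image.mp hx with ⟨p, hp, rfl⟩
    rcases hBfacts p hp with ⟨g1, g2, g3⟩
    refine mem_filter.mpr ⟨mem_powersetCard.mpr ⟨subset_univ _,
      card_triple g1 g2 g3⟩, ?_⟩
    rintro ⟨a, b, c, h1, h2, h3', himg, q1, q2, q3⟩
    rw [image_val_triple (Nat.pos_of_ne_zero (NeZero.ne n)) (by omega) g3] at himg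
    rcases sorted3_eq g1 g2 h1 h2 himg with ⟨e1, _, _⟩
    omega
  have hHnN : Hn ⊆ NSet n := by
    intro e he
    rcases mem_filter.mp he with ⟨heH, hns⟩
    exact mem_filter.mpr ⟨mem_powersetCard.mpr ⟨subset_univ _, h3 e heH⟩, hns⟩
  have hdisj : Disjoint K Hn := by
    rw [disjoint_left]
    intro x hx hxHn
    exact hKH x hx (mem_of_mem_filter _ hxHn)
  have hfinal : K.card + Hn.card ≤ (NSet n).card := by
    rw [← card_union_of_disjoint hdisj]
    exact card_le_card (union_subset hKN hHnN)
  have := card_NSet (n := n)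
  omega

end Upper

theorem ex_ordered_M3 (n : ℕ) (hn : 7 ≤ n) :
    IsGreatest {m : ℕ | ∃ H : Finset (Finset (Fin n)),
        (∀ e ∈ H, e.card = 3) ∧ ¬ HasOrderedM3 n H ∧ H.card = m}
      (n.choose 3 - (n - 3).choose 3) := by
  haveI : NeZero n := ⟨by omega⟩
  constructor
  · exact ⟨NSet n, NSet_card3, NSet_free, card_NSet⟩
  · rintro m ⟨H, h3, hfree, rfl⟩
    exact upper_bound H h3 hfree
end

section
/- For every even integer n ≥ 4, the maximum number of triples in an S_3-free cgh on Ω_n equals n(n−2)/2; that is, ex_circ(n, S_3) = n(n−2)/2. -/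
/-- `H` contains a copy of the configuration `S₃`: two triples sharing exactly
the vertex `v`, with the five vertices in clockwise cyclic order `v, a₁, b₁, a₂, b₂`. -/
def HasS3 (n : ℕ) (H : Finset (Finset (ZMod n))) : Prop :=
  ∃ v a₁ a₂ b₁ b₂ : ZMod n,
    CWList n [v, a₁, b₁, a₂, b₂] ∧
    ({v, a₁, a₂} : Finset (ZMod n)) ∈ H ∧ ({v, b₁, b₂} : Finset (ZMod n)) ∈ H

/-- Long chord lemma: pairwise non-crossing chords of length ≥ 2 on points 1..m. -/
theorem longChords (m : ℕ) (F : Finset (ℕ × ℕ))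
    (hF : ∀ c ∈ F, 1 ≤ c.1 ∧ c.1 + 2 ≤ c.2 ∧ c.2 ≤ m)
    (hnc : ∀ c ∈ F, ∀ c' ∈ F, ¬(c.1 < c'.1 ∧ c'.1 < c.2 ∧ c.2 < c'.2)) :
    F.card ≤ m - 2 := by
  classical
  set φ : ℕ × ℕ → ℕ := fun c =>
    if h : ((F.filter (fun d => d.2 = c.2 ∧ c.1 < d.1)).image Prod.fst).Nonempty then
      Finset.min' _ h
    else c.2 - 1 with hφ
  have key : ∀ c ∈ F,
      (∃ x, (x, c.2) ∈ F ∧ c.1 < x ∧ φ c = x ∧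
        (∀ d ∈ F, d.2 = c.2 → c.1 < d.1 → x ≤ d.1)) ∨
      (φ c = c.2 - 1 ∧ ∀ d ∈ F, d.2 = c.2 → ¬ c.1 < d.1) := by
    intro c hc
    by_cases h : ((F.filter (fun d => d.2 = c.2 ∧ c.1 < d.1)).image Prod.fst).Nonempty
    · left
      have hm := Finset.min'_mem _ h
      simp only [Finset.mem_image, Finset.mem_filter] at hm
      obtain ⟨d, ⟨hdF, hd2, hd1⟩, hdx⟩ := hm
      have hdF' : (d.1, c.2) ∈ F := by rw [← hd2]; exact hdF
      refine ⟨d.1, hdF', hd1, ?_, ?_⟩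
      · simp only [hφ, dif_pos h, hdx]
      · intro e heF he2 he1
        rw [hdx]
        exact Finset.min'_le _ _ (Finset.mem_image.2 ⟨e, Finset.mem_filter.2 ⟨heF, he2, he1⟩, rfl⟩)
    · right
      constructor
      · simp only [hφ, dif_neg h]
      · intro d hdF hd2 hd1
        exact h ⟨d.1, Finset.mem_image.2 ⟨d, Finset.mem_filter.2 ⟨hdF, hd2, hd1⟩, rfl⟩⟩
  have hmaps : ∀ c ∈ F, φ c ∈ Finset.Icc 2 (m - 1) := by
    intro c hc
    obtain ⟨h1, h2, h3⟩ := hF c hc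
    rcases key c hc with ⟨x, hxF, hcx, hfx, -⟩ | ⟨hfx, -⟩
    · obtain ⟨hx1, hx2, hx3⟩ := hF _ hxF
      rw [hfx]; simp only [Finset.mem_Icc]; omega
    · rw [hfx]; simp only [Finset.mem_Icc]; omega
  have hinj : Set.InjOn φ F := by
    intro c₁ hc₁ c₂ hc₂ heq
    by_contra hne
    rcases key c₁ hc₁ with ⟨x, hxF, hcx, hfx, hmin⟩ | ⟨hfx, hemp⟩ <;>
      rcases key c₂ hc₂ with ⟨y, hyF, hcy, hfy, hmin'⟩ | ⟨hfy, hemp'⟩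
    · -- both chain type
      rw [hfx, hfy] at heq; subst heq
      rcases Nat.lt_trichotomy c₁.2 c₂.2 with hlt | heq2 | hgt
      · -- c₁ crosses (x, c₂.2)
        have hx2 := (hF _ hxF).2.1
        exact hnc c₁ hc₁ (x, c₂.2) hyF ⟨hcx, by omega, hlt⟩
      · -- same right endpoint
        have h1 : c₁.1 ≠ c₂.1 := fun h => hne (Prod.ext h heq2)
        rcases Nat.lt_or_ge c₁.1 c₂.1 with h | h
        · have := hmin c₂ hc₂ heq2.symm h; omega
        · have h' : c₂.1 < c₁.1 := by omega
          have := hmin' c₁ hc₁ heq2 h'; omega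
      · have hy2 := (hF _ hyF).2.1
        exact hnc c₂ hc₂ (x, c₁.2) hxF ⟨hcy, by omega, hgt⟩
    · -- c₁ chain, c₂ end
      rw [hfx, hfy] at heq
      have hx2 := (hF _ hxF).2.1
      have hc22 := (hF c₂ hc₂).2.1
      have hc21 := (hF c₂ hc₂).1
      -- x = c₂.2 - 1, crossing: c₂ vs (x, c₁.2)
      exact hnc c₂ hc₂ (x, c₁.2) hxF ⟨by omega, by omega, by omega⟩
    · rw [hfx, hfy] at heq
      have hy2 := (hF _ hyF).2.1
      have hc12 := (hF c₁ hc₁).2.1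
      have hc11 := (hF c₁ hc₁).1
      exact hnc c₁ hc₁ (y, c₂.2) hyF ⟨by omega, by omega, by omega⟩
    · rw [hfx, hfy] at heq
      have hc12 := (hF c₁ hc₁).2.1
      have hc22 := (hF c₂ hc₂).2.1
      have h2 : c₁.2 = c₂.2 := by omega
      have h1 : c₁.1 ≠ c₂.1 := fun h => hne (Prod.ext h h2)
      rcases Nat.lt_or_ge c₁.1 c₂.1 with h | h
      · exact hemp c₂ hc₂ h2.symm h
      · exact hemp' c₁ hc₁ h2 (by omega)
  calc F.card ≤ (Finset.Icc 2 (m-1)).card :=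
        Finset.card_le_card_of_injOn φ hmaps hinj
    _ = m - 2 := by rw [Nat.card_Icc]; omega

theorem link_bound (n : ℕ) (hn : 4 ≤ n) (H : Finset (Finset (ZMod n)))
    (hcgh : IsCgh n H) (hS3 : ¬ HasS3 n H) (v : ZMod n) (S : Finset (Finset (ZMod n)))
    (hSsub : ∀ T ∈ S, T ∈ H ∧ v ∈ T ∧ ∀ x ∈ T, x ≠ v → x + 1 ∈ T → x + 1 = v) :
    S.card ≤ n - 3 := by
  classical
  haveI : NeZero n := ⟨by omega⟩
  set D : Finset (ZMod n) → Finset ℕ := fun T => (T.erase v).image (fun x => (x - v).val)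
    with hD
  set χ : Finset (ZMod n) → ℕ × ℕ := fun T =>
    if h : (D T).Nonempty then ((D T).min' h, (D T).max' h) else (0, 0) with hχ
  have main : ∀ T ∈ S, ∃ x y : ZMod n, x ∈ T ∧ y ∈ T ∧
      x - v = ((χ T).1 : ZMod n) ∧ y - v = ((χ T).2 : ZMod n) ∧
      1 ≤ (χ T).1 ∧ (χ T).1 + 2 ≤ (χ T).2 ∧ (χ T).2 ≤ n - 1 ∧
      T = {v, x, y} := by
    intro T hT
    obtain ⟨hTH, hvT, hdiag⟩ := hSsub T hT
    have hT3 : T.card = 3 := hcgh T hTH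
    have herase : (T.erase v).card = 2 := by
      rw [Finset.card_erase_of_mem hvT, hT3]
    have hDcard : (D T).card = 2 := by
      rw [hD]
      rw [Finset.card_image_of_injOn, herase]
      intro a _ b _ hab
      have : a - v = b - v := ZMod.val_injective n hab
      exact sub_left_injective this
    have hne : (D T).Nonempty := Finset.card_pos.1 (by omega)
    have hχT : χ T = ((D T).min' hne, (D T).max' hne) := by
      rw [hχ]; simp only [dif_pos hne]
    obtain ⟨x, hxe, hxval⟩ := Finset.mem_image.1 (Finset.min'_mem (D T) hne)
    obtain ⟨y, hye, hyval⟩ := Finset.mem_image.1 (Finset.max'_mem (D T) hne)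
    have hxT : x ∈ T := Finset.mem_of_mem_erase hxe
    have hyT : y ∈ T := Finset.mem_of_mem_erase hye
    have hxv : x ≠ v := Finset.ne_of_mem_erase hxe
    have hyv : y ≠ v := Finset.ne_of_mem_erase hye
    have hpq : (D T).min' hne < (D T).max' hne :=
      Finset.min'_lt_max'_of_card _ (by omega)
    have hxcast : x - v = (((D T).min' hne : ℕ) : ZMod n) := by
      rw [← hxval]; exact (ZMod.natCast_rightInverse (x - v)).symm
    have hycast : y - v = (((D T).max' hne : ℕ) : ZMod n) := by
      rw [← hyval]; exact (ZMod.natCast_rightInverse (y - v)).symm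
    have hp1 : 1 ≤ (D T).min' hne := by
      rcases Nat.eq_zero_or_pos ((D T).min' hne) with h | h
      · exfalso
        apply hxv
        have : (x - v).val = 0 := by rw [hxval, h]
        have := (ZMod.val_eq_zero _).1 this
        exact sub_eq_zero.1 this
      · exact h
    have hq : (D T).max' hne ≤ n - 1 := by
      have : (y - v).val < n := ZMod.val_lt _
      omega
    have hgap : (D T).min' hne + 2 ≤ (D T).max' hne := by
      by_contra hcon
      have hq1 : (D T).max' hne = (D T).min' hne + 1 := by omega
      have hyx : y = x + 1 := by
        have : y - x = 1 := by
          have : (y - v) - (x - v) = (1 : ZMod n) := by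
            rw [hxcast, hycast, hq1]
            push_cast
            ring
          rwa [sub_sub_sub_cancel_right] at this
        rw [← this]; ring
      have := hdiag x hxT hxv (by rw [← hyx]; exact hyT)
      rw [← hyx] at this
      exact hyv this
    have hTeq : T = {v, x, y} := by
      have hxy : x ≠ y := by
        intro h
        rw [h] at hxval
        rw [hyval] at hxval
        omega
      have hsub : ({v, x, y} : Finset (ZMod n)) ⊆ T := by
        intro z hz
        simp only [Finset.mem_insert, Finset.mem_singleton] at hz
        rcases hz with rfl | rfl | rfl
        exacts [hvT, hxT, hyT]
      have hcard : ({v, x, y} : Finset (ZMod n)).card = 3 := by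
        rw [Finset.card_insert_of_notMem (by simp [Ne.symm hxv, Ne.symm hyv]),
          Finset.card_insert_of_notMem (by simp [hxy]), Finset.card_singleton]
      exact (Finset.eq_of_subset_of_card_le hsub (by omega)).symm
    exact ⟨x, y, hxT, hyT, by rw [hχT]; exact hxcast, by rw [hχT]; exact hycast,
      by rw [hχT]; exact hp1, by rw [hχT]; exact hgap, by rw [hχT]; exact hq, hTeq⟩
  have hval : ∀ k : ℕ, k ≤ n - 1 → ((k : ZMod n)).val = k := by
    intro k hk
    exact ZMod.val_cast_of_lt (by omega)
  have hinj : Set.InjOn χ S := by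
    intro T₁ hT₁ T₂ hT₂ heq
    obtain ⟨x₁, y₁, _, _, hx₁, hy₁, _, _, _, hTe₁⟩ := main T₁ hT₁
    obtain ⟨x₂, y₂, _, _, hx₂, hy₂, _, _, _, hTe₂⟩ := main T₂ hT₂
    rw [hTe₁, hTe₂]
    have hxx : x₁ = x₂ := by
      have : x₁ - v = x₂ - v := by rw [hx₁, hx₂, heq]
      exact sub_left_injective this
    have hyy : y₁ = y₂ := by
      have : y₁ - v = y₂ - v := by rw [hy₁, hy₂, heq]
      exact sub_left_injective this
    rw [hxx, hyy]
  have hbound := longChords (n - 1) (S.image χ) ?_ ?_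
  · rw [Finset.card_image_of_injOn hinj] at hbound
    have : n - 1 - 2 = n - 3 := by omega
    rwa [this] at hbound
  · intro c hc
    obtain ⟨T, hT, hcT⟩ := Finset.mem_image.1 hc
    obtain ⟨x, y, _, _, _, _, h1, h2, h3, _⟩ := main T hT
    rw [← hcT]
    exact ⟨h1, h2, h3⟩
  · intro c hc c' hc'
    rintro ⟨hcross1, hcross2, hcross3⟩
    obtain ⟨T₁, hT₁, hcT₁⟩ := Finset.mem_image.1 hc
    obtain ⟨T₂, hT₂, hcT₂⟩ := Finset.mem_image.1 hc'
    obtain ⟨x₁, y₁, _, _, hx₁, hy₁, hp₁, hg₁, hq₁, hTe₁⟩ := main T₁ hT₁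
    obtain ⟨x₂, y₂, _, _, hx₂, hy₂, hp₂, hg₂, hq₂, hTe₂⟩ := main T₂ hT₂
    rw [← hcT₁, ← hcT₂] at hcross1 hcross2 hcross3
    apply hS3
    refine ⟨v, x₁, y₁, x₂, y₂, ?_, ?_, ?_⟩
    · show ((0 : ℕ) :: [x₁, x₂, y₁, y₂].map fun b => (b - v).val).Chain' (· < ·)
      have e1 : (x₁ - v).val = (χ T₁).1 := by rw [hx₁]; exact hval _ (by omega)
      have e2 : (x₂ - v).val = (χ T₂).1 := by rw [hx₂]; exact hval _ (by omega)
      have e3 : (y₁ - v).val = (χ T₁).2 := by rw [hy₁]; exact hval _ hq₁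
      have e4 : (y₂ - v).val = (χ T₂).2 := by rw [hy₂]; exact hval _ hq₂
      simp only [List.map_cons, List.map_nil, List.Chain', List.isChain_cons_cons, List.isChain_singleton,
        e1, e2, e3, e4]
      refine ⟨by omega, by omega, by omega, by omega, trivial⟩
    · rw [← hTe₁]; exact (hSsub T₁ hT₁).1
    · rw [← hTe₂]; exact (hSsub T₂ hT₂).1

theorem upper_bound_s8 (n : ℕ) (hn : 4 ≤ n) (H : Finset (Finset (ZMod n)))
    (hcgh : IsCgh n H) (hS3 : ¬ HasS3 n H) : 2 * H.card ≤ n * (n - 2) := by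
  classical
  haveI : NeZero n := ⟨by omega⟩
  have hkcast : ∀ k : ℕ, 0 < k → k < n → (k : ZMod n) ≠ 0 := by
    intro k h1 h2 h
    have h3 := ZMod.val_cast_of_lt h2
    rw [h, ZMod.val_zero] at h3; omega
  have hadd : ∀ (x : ZMod n) (k : ℕ), 0 < k → k < n → x + (k : ZMod n) ≠ x := by
    intro x k h1 h2 h
    exact hkcast k h1 h2 (by rwa [add_eq_left] at h)
  have hone' : ∀ x : ZMod n, x + 1 ≠ x := by
    intro x
    have := hadd x 1 one_pos (by omega); rwa [Nat.cast_one] at this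
  have htwo : ∀ x : ZMod n, x + 1 + 1 ≠ x := by
    intro x h
    exact hadd x 2 (by omega) (by omega) (by push_cast; linear_combination h)
  have hthree : ∀ x : ZMod n, x + 1 + 1 + 1 ≠ x := by
    intro x h
    exact hadd x 3 (by omega) (by omega) (by push_cast; linear_combination h)
  -- the "diagonal-from-v" predicate
  set g : ZMod n → Finset (ZMod n) → Prop :=
    fun v T => v ∈ T ∧ ∀ x ∈ T, x ≠ v → x + 1 ∈ T → x + 1 = v with hg
  -- double counting
  have hsum : ∑ v : ZMod n, (H.filter (g v)).card
      = ∑ T ∈ H, (Finset.univ.filter (fun v => g v T)).card := by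
    simp only [Finset.card_filter]
    exact Finset.sum_comm
  -- upper bound on the sum
  have hupper : ∑ v : ZMod n, (H.filter (g v)).card ≤ n * (n - 3) := by
    have hb : ∀ v : ZMod n, (H.filter (g v)).card ≤ n - 3 := by
      intro v
      apply link_bound n hn H hcgh hS3 v
      intro T hT
      have := Finset.mem_filter.1 hT
      exact ⟨this.1, this.2.1, this.2.2⟩
    calc ∑ v : ZMod n, (H.filter (g v)).card ≤ ∑ _v : ZMod n, (n - 3) :=
          Finset.sum_le_sum (fun v _ => hb v)
      _ = n * (n - 3) := by
          rw [Finset.sum_const, Finset.card_univ, ZMod.card, smul_eq_mul]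
  -- the set of "three consecutive" triples
  set DD : Finset (Finset (ZMod n)) :=
    H.filter (fun T => ∃ u : ZMod n, T = {u, u + 1, u + 1 + 1}) with hDD
  have hDDsub : DD ⊆ H := Finset.filter_subset _ _
  have hDDcard : DD.card ≤ n := by
    have hsub : DD ⊆ Finset.univ.image
        (fun u : ZMod n => ({u, u + 1, u + 1 + 1} : Finset (ZMod n))) := by
      intro T hT
      obtain ⟨u, hu⟩ := (Finset.mem_filter.1 hT).2
      exact Finset.mem_image.2 ⟨u, Finset.mem_univ u, hu.symm⟩
    calc DD.card ≤ _ := Finset.card_le_card hsub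
      _ ≤ Finset.univ.card := Finset.card_image_le
      _ = n := by rw [Finset.card_univ, ZMod.card]
  -- a helper: completing a pattern triple
  have hpatfull : ∀ T : Finset (ZMod n), T.card = 3 → ∀ u : ZMod n,
      u ∈ T → u + 1 ∈ T → u + 1 + 1 ∈ T → T = {u, u + 1, u + 1 + 1} := by
    intro T hT3 u h1 h2 h3
    have hsub : ({u, u + 1, u + 1 + 1} : Finset (ZMod n)) ⊆ T := by
      intro z hz
      simp only [Finset.mem_insert, Finset.mem_singleton] at hz
      rcases hz with rfl | rfl | rfl
      exacts [h1, h2, h3]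
    have hcard : ({u, u + 1, u + 1 + 1} : Finset (ZMod n)).card = 3 := by
      rw [Finset.card_insert_of_notMem, Finset.card_insert_of_notMem,
        Finset.card_singleton]
      · simp only [Finset.mem_singleton]
        intro h; exact hone' (u + 1) h.symm
      · simp only [Finset.mem_insert, Finset.mem_singleton]
        push_neg
        exact ⟨fun h => hone' u h.symm, fun h => htwo u h.symm⟩
    exact (Finset.eq_of_subset_of_card_le hsub (by omega)).symm
  -- per-triple lower bound
  have hlow : ∀ T ∈ H, 2 ≤ (Finset.univ.filter (fun v => g v T)).card
      + (if T ∈ DD then 1 else 0) := by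
    intro T hT
    have hT3 : T.card = 3 := hcgh T hT
    by_cases hpat : ∃ u : ZMod n, T = {u, u + 1, u + 1 + 1}
    · -- pattern triple : the middle vertex works
      obtain ⟨u, hu⟩ := hpat
      have hmem : u + 1 ∈ Finset.univ.filter (fun v => g v T) := by
        refine Finset.mem_filter.2 ⟨Finset.mem_univ _, ?_, ?_⟩
        · rw [hu]; simp
        · intro x hx hxv hx1
          rw [hu] at hx hx1
          simp only [Finset.mem_insert, Finset.mem_singleton] at hx hx1
          rcases hx with rfl | rfl | rfl
          · rfl
          · exact absurd rfl hxv
          · rcases hx1 with h | h | h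
            · exact absurd h (hthree u)
            · exact absurd h (htwo (u + 1))
            · exact absurd h (hone' (u + 1 + 1))
      have h1 : 1 ≤ (Finset.univ.filter (fun v => g v T)).card :=
        Finset.card_pos.2 ⟨u + 1, hmem⟩
      have h2 : T ∈ DD := Finset.mem_filter.2 ⟨hT, ⟨u, hu⟩⟩
      rw [if_pos h2]; omega
    · -- not a pattern triple
      have hTDD : T ∉ DD := by
        intro h
        exact hpat ((Finset.mem_filter.1 h).2)
      rw [if_neg hTDD, add_zero]
      by_cases hE : ∃ a ∈ T, a + 1 ∈ T
      · obtain ⟨a, haT, ha1T⟩ := hE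
        -- four-distinct helper
        have hfour : ∀ x : ZMod n, x ∈ T → x + 1 ∈ T → x ≠ a → x ≠ a + 1 →
            x + 1 ≠ a → x + 1 ≠ a + 1 → False := by
          intro x hx hx1 d1 d2 d3 d4
          have h4 : ({a, a + 1, x, x + 1} : Finset (ZMod n)) ⊆ T := by
            intro z hz
            simp only [Finset.mem_insert, Finset.mem_singleton] at hz
            rcases hz with rfl | rfl | rfl | rfl
            exacts [haT, ha1T, hx, hx1]
          have hcard4 : ({a, a + 1, x, x + 1} : Finset (ZMod n)).card = 4 := by
            rw [Finset.card_insert_of_notMem, Finset.card_insert_of_notMem,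
              Finset.card_insert_of_notMem, Finset.card_singleton]
            · simp only [Finset.mem_singleton]
              intro h; exact hone' x h.symm
            · simp only [Finset.mem_insert, Finset.mem_singleton]
              push_neg
              exact ⟨fun h => d2 h.symm, fun h => d4 h.symm⟩
            · simp only [Finset.mem_insert, Finset.mem_singleton]
              push_neg
              refine ⟨fun h => hone' a h.symm, fun h => d1 h.symm, fun h => d3 h.symm⟩
          have := Finset.card_le_card h4
          omega
        have hga : g a T := by
          refine ⟨haT, ?_⟩
          intro x hx hxa hx1
          by_contra hx1a
          by_cases hxa1 : x = a + 1
          · subst hxa1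
            exact hpat ⟨a, hpatfull T hT3 a haT ha1T hx1⟩
          · by_cases h4 : x + 1 = a + 1
            · exact hxa (by rwa [add_left_inj] at h4)
            · exact hfour x hx hx1 hxa hxa1 hx1a h4
        have hga1 : g (a + 1) T := by
          refine ⟨ha1T, ?_⟩
          intro x hx hxa1 hx1
          by_contra hx1a1
          by_cases hxa : x = a
          · exact hx1a1 (by rw [hxa])
          · by_cases h3 : x + 1 = a
            · apply hpat
              refine ⟨x, hpatfull T hT3 x hx hx1 ?_⟩
              rw [h3]; exact ha1T
            · exact hfour x hx hx1 hxa hxa1 h3 hx1a1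
        have hsub2 : ({a, a + 1} : Finset (ZMod n)) ⊆
            Finset.univ.filter (fun v => g v T) := by
          intro z hz
          simp only [Finset.mem_insert, Finset.mem_singleton] at hz
          rcases hz with rfl | rfl
          · exact Finset.mem_filter.2 ⟨Finset.mem_univ _, hga⟩
          · exact Finset.mem_filter.2 ⟨Finset.mem_univ _, hga1⟩
        have hc2 : ({a, a + 1} : Finset (ZMod n)).card = 2 := by
          rw [Finset.card_insert_of_notMem, Finset.card_singleton]
          simp only [Finset.mem_singleton]
          intro h; exact hone' a h.symm
        calc 2 = ({a, a + 1} : Finset (ZMod n)).card := hc2.symm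
          _ ≤ _ := Finset.card_le_card hsub2
      · -- no consecutive pair at all
        push_neg at hE
        obtain ⟨x, y, z, hxy, hxz, hyz, hTxyz⟩ := Finset.card_eq_three.1 hT3
        have hxT : x ∈ T := by rw [hTxyz]; simp
        have hyT : y ∈ T := by rw [hTxyz]; simp
        have hgany : ∀ v : ZMod n, v ∈ T → g v T := by
          intro v hv
          exact ⟨hv, fun w hw _ hw1 => absurd hw1 (hE w hw)⟩
        have hsub2 : ({x, y} : Finset (ZMod n)) ⊆
            Finset.univ.filter (fun v => g v T) := by
          intro z' hz'
          simp only [Finset.mem_insert, Finset.mem_singleton] at hz'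
          rcases hz' with rfl | rfl
          · exact Finset.mem_filter.2 ⟨Finset.mem_univ _, hgany _ hxT⟩
          · exact Finset.mem_filter.2 ⟨Finset.mem_univ _, hgany _ hyT⟩
        have hc2 : ({x, y} : Finset (ZMod n)).card = 2 := by
          rw [Finset.card_insert_of_notMem (by simpa using hxy), Finset.card_singleton]
        calc 2 = ({x, y} : Finset (ZMod n)).card := hc2.symm
          _ ≤ _ := Finset.card_le_card hsub2
  -- assemble
  have hDDsum : DD.card = ∑ T ∈ H, (if T ∈ DD then 1 else 0) := by
    rw [Finset.sum_ite_mem, Finset.inter_eq_right.2 hDDsub, Finset.sum_const,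
      smul_eq_mul, mul_one]
  have h2H : 2 * H.card ≤ n * (n - 3) + n := by
    calc 2 * H.card = ∑ _T ∈ H, 2 := by
          rw [Finset.sum_const, smul_eq_mul, mul_comm]
      _ ≤ ∑ T ∈ H, ((Finset.univ.filter (fun v => g v T)).card
            + (if T ∈ DD then 1 else 0)) := Finset.sum_le_sum hlow
      _ = (∑ T ∈ H, (Finset.univ.filter (fun v => g v T)).card) + DD.card := by
          rw [Finset.sum_add_distrib, ← hDDsum]
      _ ≤ n * (n - 3) + n := by
          rw [← hsum]
          exact Nat.add_le_add hupper hDDcard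
  have : n * (n - 3) + n = n * (n - 2) := by
    have h : n - 2 = (n - 3) + 1 := by omega
    rw [h, Nat.mul_succ]
  omega

theorem construction (n : ℕ) (hn : 4 ≤ n) (hev : Even n) :
    ∃ H : Finset (Finset (ZMod n)),
      IsCgh n H ∧ ¬ HasS3 n H ∧ H.card = n * (n - 2) / 2 := by
  classical
  haveI : NeZero n := ⟨by omega⟩
  haveI : Fact (1 < n) := ⟨by omega⟩
  obtain ⟨m, hm⟩ := hev
  have hone' : ∀ x : ZMod n, x + 1 ≠ x := by
    intro x h
    have h0 : (1 : ZMod n) = 0 := by rwa [add_comm, add_eq_right] at h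
    have := ZMod.val_one n
    rw [h0, ZMod.val_zero] at this
    omega
  -- parity of val of successor
  have hpar : ∀ x : ZMod n, (x + 1).val % 2 = (x.val + 1) % 2 := by
    intro x
    rw [ZMod.val_add, ZMod.val_one]
    have h2 : (2 : ℕ) ∣ n := ⟨m, by omega⟩
    rw [Nat.mod_mod_of_dvd _ h2]
  set E : Finset (ZMod n) := Finset.univ.filter (fun a => a.val % 2 = 0) with hE
  set f : ZMod n → Finset (Finset (ZMod n)) :=
    fun a => ((Finset.univ.erase a).erase (a + 1)).image
      (fun y => ({a, a + 1, y} : Finset (ZMod n))) with hf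
  set H : Finset (Finset (ZMod n)) := E.biUnion f with hH
  -- membership characterization
  have hmemH : ∀ T, T ∈ H → ∃ a y : ZMod n, a.val % 2 = 0 ∧ y ≠ a ∧ y ≠ a + 1 ∧
      T = {a, a + 1, y} := by
    intro T hT
    obtain ⟨a, haE, hImg⟩ := Finset.mem_biUnion.1 hT
    obtain ⟨y, hy, hTeq⟩ := Finset.mem_image.1 hImg
    have hy1 : y ≠ a + 1 := (Finset.mem_erase.1 hy).1
    have hy2 : y ≠ a := (Finset.mem_erase.1 (Finset.mem_erase.1 hy).2).1
    exact ⟨a, y, (Finset.mem_filter.1 haE).2, hy2, hy1, hTeq.symm⟩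
  have hmemH' : ∀ (a y : ZMod n), a.val % 2 = 0 → y ≠ a → y ≠ a + 1 →
      ({a, a + 1, y} : Finset (ZMod n)) ∈ H := by
    intro a y ha hy2 hy1
    apply Finset.mem_biUnion.2
    refine ⟨a, Finset.mem_filter.2 ⟨Finset.mem_univ _, ha⟩, ?_⟩
    apply Finset.mem_image.2
    exact ⟨y, Finset.mem_erase.2 ⟨hy1, Finset.mem_erase.2 ⟨hy2, Finset.mem_univ _⟩⟩, rfl⟩
  refine ⟨H, ?_, ?_, ?_⟩
  · -- IsCgh
    intro T hT
    obtain ⟨a, y, ha, hy2, hy1, hTeq⟩ := hmemH T hT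
    rw [hTeq]
    rw [Finset.card_insert_of_notMem, Finset.card_insert_of_notMem,
      Finset.card_singleton]
    · simp only [Finset.mem_singleton]
      exact fun h => hy1 h.symm
    · simp only [Finset.mem_insert, Finset.mem_singleton]
      push_neg
      exact ⟨fun h => hone' a h.symm, fun h => hy2 h.symm⟩
  · -- ¬ HasS3
    rintro ⟨v, a₁, a₂, b₁, b₂, hcw, hm1, hm2⟩
    have hcw' : ((0 : ℕ) :: List.map (fun b => (b - v).val) [a₁, b₁, a₂, b₂]).Chain'
        (· < ·) := hcw
    simp only [List.map_cons, List.map_nil, List.Chain', List.isChain_cons_cons, List.isChain_singleton,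
      and_true] at hcw'
    obtain ⟨c1, c2, c3, c4⟩ := hcw'
    have hb2n : (b₂ - v).val < n := ZMod.val_lt _
    have hnev : ∀ x : ZMod n, 0 < (x - v).val → x ≠ v := by
      intro x h hx
      rw [hx, sub_self, ZMod.val_zero] at h
      omega
    have ha₁v : a₁ ≠ v := hnev _ c1
    have hb₁v : b₁ ≠ v := hnev _ (by omega)
    have ha₂v : a₂ ≠ v := hnev _ (by omega)
    have hb₂v : b₂ ≠ v := hnev _ (by omega)
    have hW : ∀ x y : ZMod n, x ≠ v → y ≠ v → y = x + 1 →
        (y - v).val = (x - v).val + 1 := by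
      intro x y hx hy hxy
      have hlt : (x - v).val < n := ZMod.val_lt _
      have hyv : y - v = (x - v) + 1 := by rw [hxy]; ring
      rcases Nat.lt_or_ge ((x - v).val + 1) n with h | h
      · rw [hyv, ZMod.val_add, ZMod.val_one, Nat.mod_eq_of_lt h]
      · exfalso
        have hxn : (x - v).val = n - 1 := by omega
        have hcast : x - v = ((n - 1 : ℕ) : ZMod n) := by
          conv_lhs => rw [← ZMod.natCast_rightInverse (x - v)]
          rw [hxn]
        have : y - v = 0 := by
          rw [hyv, hcast, Nat.cast_sub (by omega : 1 ≤ n), ZMod.natCast_self,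
            Nat.cast_one]
          ring
        exact hy (sub_eq_zero.1 this)
    have hD1 : ∀ y : ZMod n, y = v + 1 → (y - v).val = 1 := by
      intro y h
      rw [h, add_sub_cancel_left, ZMod.val_one]
    have hDm : ∀ x : ZMod n, v = x + 1 → (x - v).val = n - 1 := by
      intro x h
      have : x - v = ((n - 1 : ℕ) : ZMod n) := by
        rw [h, Nat.cast_sub (by omega : 1 ≤ n), ZMod.natCast_self, Nat.cast_one]
        ring
      rw [this, ZMod.val_cast_of_lt (by omega)]
    -- analysis of the first triple : v is even
    obtain ⟨a, y, ha, hy2, hy1, hTeq⟩ := hmemH _ hm1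
    have haT : a ∈ ({v, a₁, a₂} : Finset (ZMod n)) := by
      rw [hTeq]; simp
    have ha1T : a + 1 ∈ ({v, a₁, a₂} : Finset (ZMod n)) := by
      rw [hTeq]; simp
    simp only [Finset.mem_insert, Finset.mem_singleton] at haT ha1T
    have hveven : v.val % 2 = 0 := by
      rcases haT with h0 | h0 | h0
      · -- a = v
        rcases ha1T with h1 | h1 | h1
        · exact absurd (h0 ▸ h1) (hone' v)
        · rw [← h0]; exact ha
        · have := hD1 a₂ (by rw [← h1, h0])
          omega
      · -- a = a₁
        rcases ha1T with h1 | h1 | h1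
        · have := hDm a₁ (by rw [← h1, h0])
          omega
        · exact absurd (h0 ▸ h1) (hone' a₁)
        · have := hW a₁ a₂ ha₁v ha₂v (by rw [← h1, h0])
          omega
      · -- a = a₂
        rcases ha1T with h1 | h1 | h1
        · have := hDm a₂ (by rw [← h1, h0])
          omega
        · have := hW a₂ a₁ ha₂v ha₁v (by rw [← h1, h0])
          omega
        · exact absurd (h0 ▸ h1) (hone' a₂)
    -- analysis of the second triple : b₂ is even and v = b₂ + 1
    obtain ⟨a', y', ha', hy2', hy1', hTeq'⟩ := hmemH _ hm2
    have haT' : a' ∈ ({v, b₁, b₂} : Finset (ZMod n)) := by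
      rw [hTeq']; simp
    have ha1T' : a' + 1 ∈ ({v, b₁, b₂} : Finset (ZMod n)) := by
      rw [hTeq']; simp
    simp only [Finset.mem_insert, Finset.mem_singleton] at haT' ha1T'
    have hfinal : b₂.val % 2 = 0 ∧ v = b₂ + 1 := by
      rcases haT' with h0 | h0 | h0
      · rcases ha1T' with h1 | h1 | h1
        · exact absurd (h0 ▸ h1) (hone' v)
        · have := hD1 b₁ (by rw [← h1, h0])
          omega
        · have := hD1 b₂ (by rw [← h1, h0])
          omega
      · rcases ha1T' with h1 | h1 | h1
        · have := hDm b₁ (by rw [← h1, h0])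
          omega
        · exact absurd (h0 ▸ h1) (hone' b₁)
        · have := hW b₁ b₂ hb₁v hb₂v (by rw [← h1, h0])
          omega
      · rcases ha1T' with h1 | h1 | h1
        · refine ⟨by rw [← h0]; exact ha', by rw [← h0]; exact h1.symm⟩
        · have := hW b₂ b₁ hb₂v hb₁v (by rw [← h1, h0])
          omega
        · exact absurd (h0 ▸ h1) (hone' b₂)
    -- parity contradiction
    obtain ⟨hb₂e, hvb⟩ := hfinal
    have := hpar b₂
    rw [← hvb] at this
    omega
  · -- cardinality
    have hdisj : ∀ a ∈ E, ∀ a' ∈ E, a ≠ a' → Disjoint (f a) (f a') := by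
      intro a haE a' haE' hne
      rw [Finset.disjoint_left]
      intro T hTa hTa'
      obtain ⟨y, hy, hTeq⟩ := Finset.mem_image.1 hTa
      obtain ⟨y', hy', hTeq'⟩ := Finset.mem_image.1 hTa'
      have ha : a.val % 2 = 0 := (Finset.mem_filter.1 haE).2
      have ha' : a'.val % 2 = 0 := (Finset.mem_filter.1 haE').2
      have hy1 : y ≠ a + 1 := (Finset.mem_erase.1 hy).1
      have hy2 : y ≠ a := (Finset.mem_erase.1 (Finset.mem_erase.1 hy).2).1
      have hy1' : y' ≠ a' + 1 := (Finset.mem_erase.1 hy').1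
      have hy2' : y' ≠ a' := (Finset.mem_erase.1 (Finset.mem_erase.1 hy').2).1
      have hset : ({a, a + 1, y} : Finset (ZMod n)) = {a', a' + 1, y'} := by
        rw [hTeq, hTeq']
      -- derive a = a'
      have hpar2 : ∀ x : ZMod n, x.val % 2 = 0 → (x + 1).val % 2 = 1 := by
        intro x hx
        rw [hpar x]
        omega
      apply hne
      have ha'mem : a' ∈ ({a, a + 1, y} : Finset (ZMod n)) := by
        rw [hset]; simp
      simp only [Finset.mem_insert, Finset.mem_singleton] at ha'mem
      rcases ha'mem with h | h | h
      · exact h.symm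
      · exfalso
        have := hpar2 a ha
        rw [← h] at this
        omega
      · -- a' = y
        exfalso
        have hamem : a ∈ ({a', a' + 1, y'} : Finset (ZMod n)) := by
          rw [← hset]; simp
        simp only [Finset.mem_insert, Finset.mem_singleton] at hamem
        rcases hamem with h2 | h2 | h2
        · exact hne h2
        · have := hpar2 a' ha'
          rw [← h2] at this
          omega
        · -- a = y' ; consider a + 1
          have ha1mem : a + 1 ∈ ({a', a' + 1, y'} : Finset (ZMod n)) := by
            rw [← hset]; simp
          simp only [Finset.mem_insert, Finset.mem_singleton] at ha1mem
          rcases ha1mem with h3 | h3 | h3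
          · exact hy1 (h.symm.trans h3.symm)
          · exact hne ((add_left_inj 1).1 h3)
          · rw [← h2] at h3
            exact hone' a h3
    rw [hH, Finset.card_biUnion hdisj]
    have himg : ∀ a ∈ E, (f a).card = n - 2 := by
      intro a haE
      have hinj : Set.InjOn (fun y => ({a, a + 1, y} : Finset (ZMod n)))
          ((Finset.univ.erase a).erase (a + 1)) := by
        intro y hy y2 hy2 heq
        simp only [Finset.coe_erase, Set.mem_diff, Finset.coe_univ] at hy hy2
        have heq' : ({a, a + 1, y} : Finset (ZMod n)) = {a, a + 1, y2} := heq
        have h1 : y ∈ ({a, a + 1, y2} : Finset (ZMod n)) := by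
          rw [← heq']; simp
        simp only [Finset.mem_insert, Finset.mem_singleton] at h1
        have hya : y ≠ a := by simpa using hy.1.2
        have hya1 : y ≠ a + 1 := by simpa using hy.2
        rcases h1 with h | h | h
        · exact absurd h hya
        · exact absurd h hya1
        · exact h
      rw [hf]
      simp only []
      rw [Finset.card_image_of_injOn hinj,
        Finset.card_erase_of_mem (Finset.mem_erase.2 ⟨hone' a, Finset.mem_univ _⟩),
        Finset.card_erase_of_mem (Finset.mem_univ a), Finset.card_univ, ZMod.card]
      omega
    rw [Finset.sum_congr rfl himg, Finset.sum_const, smul_eq_mul]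
    -- |E| = m
    have hEcard : E.card = m := by
      rw [show m = (Finset.range m).card from (Finset.card_range m).symm]
      refine Finset.card_bij' (fun a _ => a.val / 2)
        (fun k _ => ((2 * k : ℕ) : ZMod n)) ?_ ?_ ?_ ?_
      · intro a ha
        have h1 : a.val < n := ZMod.val_lt a
        have h2 : a.val % 2 = 0 := (Finset.mem_filter.1 ha).2
        exact Finset.mem_range.2 (by omega)
      · intro k hk
        have hk' : k < m := Finset.mem_range.1 hk
        refine Finset.mem_filter.2 ⟨Finset.mem_univ _, ?_⟩
        rw [ZMod.val_cast_of_lt (by omega)]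
        omega
      · intro a ha
        have h2 : a.val % 2 = 0 := (Finset.mem_filter.1 ha).2
        have : 2 * (a.val / 2) = a.val := by omega
        rw [this]
        exact ZMod.natCast_rightInverse a
      · intro k hk
        have hk' : k < m := Finset.mem_range.1 hk
        rw [ZMod.val_cast_of_lt (by omega)]
        omega
    rw [hEcard]
    have : n * (n - 2) = 2 * (m * (n - 2)) := by
      rw [hm]
      ring
    rw [this, Nat.mul_div_cancel_left _ (by norm_num)]

theorem ex_S3 (n : ℕ) (hn : 4 ≤ n) (hev : Even n) :
    IsGreatest {m : ℕ | ∃ H : Finset (Finset (ZMod n)),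
        IsCgh n H ∧ ¬ HasS3 n H ∧ H.card = m}
      (n * (n - 2) / 2) := by
  constructor
  · obtain ⟨H₀, h1, h2, h3⟩ := construction n hn hev
    exact ⟨H₀, h1, h2, h3⟩
  · rintro m ⟨H, h1, h2, h3⟩
    have hb := upper_bound_s8 n hn H h1 h2
    rw [← h3]
    generalize hK : n * (n - 2) = K at hb ⊢
    omega
end

section
/- For every integer n ≥ 5, there exists an S_2-free cgh on Ω_n with at least ⌊n²/4⌋ − 1 triples; that is, ex_circ(n, S_2) ≥ ⌊n²/4⌋ − 1. -/
/-- `H` contains a copy of the configuration `S₂`: two triples sharing exactly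
the vertex `v`, with the five vertices in clockwise cyclic order `v, b₁, a₁, a₂, b₂`. -/
def HasS2 (n : ℕ) (H : Finset (Finset (ZMod n))) : Prop :=
  ∃ v a₁ a₂ b₁ b₂ : ZMod n,
    CWList n [v, b₁, a₁, a₂, b₂] ∧
    ({v, a₁, a₂} : Finset (ZMod n)) ∈ H ∧ ({v, b₁, b₂} : Finset (ZMod n)) ∈ H

lemma val_sub_cast {n : ℕ} [NeZero n] (k V : ℕ) (hk : k < n) (hV : V < n) :
    ((k : ZMod n) - (V : ZMod n)).val = if V ≤ k then k - V else k + n - V := by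
  split_ifs with h
  · rw [← Nat.cast_sub h, ZMod.val_cast_of_lt (by omega)]
  · have h1 : ((k + n - V : ℕ) : ZMod n) = (k : ZMod n) - V := by
      have : k + n - V = k + (n - V) := by omega
      rw [this, Nat.cast_add, Nat.cast_sub hV.le, ZMod.natCast_self]
      ring
    rw [← h1, ZMod.val_cast_of_lt (by omega)]

theorem ex_S2_lower (n : ℕ) (hn : 5 ≤ n) :
    ∃ H : Finset (Finset (ZMod n)), IsCgh n H ∧ ¬ HasS2 n H ∧
      n ^ 2 / 4 - 1 ≤ H.card := by
  haveI : NeZero n := ⟨by omega⟩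
  set t := (n - 2) / 2 with ht
  set P : Finset (ℕ × ℕ) :=
    (Finset.range t ×ˢ Finset.Ico t (n - 1)) ∪
      (Finset.Ico t (n - 2)).image (fun y => (y + 2, y)) with hP
  have hPmem : ∀ p : ℕ × ℕ, p ∈ P ↔
      ((p.1 < t ∧ t ≤ p.2 ∧ p.2 < n - 1) ∨ (p.1 = p.2 + 2 ∧ t ≤ p.2 ∧ p.2 < n - 2)) := by
    rintro ⟨x, y⟩
    simp only [hP, Finset.mem_union, Finset.mem_product, Finset.mem_range, Finset.mem_Ico,
      Finset.mem_image, Prod.mk.injEq]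
    constructor
    · rintro (⟨h1, h2, h3⟩ | ⟨a, ⟨h1, h2⟩, h3, h4⟩) <;> omega
    · rintro (⟨h1, h2, h3⟩ | ⟨h1, h2, h3⟩)
      · exact Or.inl ⟨h1, h2, h3⟩
      · exact Or.inr ⟨y, ⟨h2, h3⟩, h1.symm, rfl⟩
  refine ⟨P.image (fun p => ({((p.1 : ℕ) : ZMod n), ((p.2 : ℕ) : ZMod n),
      ((p.2 + 1 : ℕ) : ZMod n)} : Finset (ZMod n))), ?_, ?_, ?_⟩
  · -- IsCgh
    intro e he
    obtain ⟨p, hp, rfl⟩ := Finset.mem_image.1 he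
    rw [hPmem] at hp
    have hb : p.1 < n ∧ p.2 + 1 < n ∧ p.1 ≠ p.2 ∧ p.1 ≠ p.2 + 1 ∧ p.2 ≠ p.2 + 1 := by omega
    refine Finset.card_eq_three.mpr ⟨_, _, _, ?_, ?_, ?_, rfl⟩ <;>
      · intro h
        apply_fun ZMod.val at h
        rw [ZMod.val_cast_of_lt (by omega), ZMod.val_cast_of_lt (by omega)] at h
        omega
  · -- not HasS2
    rintro ⟨v, a1, a2, b1, b2, hcw, hA, hB⟩
    obtain ⟨hc1, hc2, hc3, hc4⟩ :
        0 < (b1 - v).val ∧ (b1 - v).val < (a1 - v).val ∧ (a1 - v).val < (a2 - v).val ∧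
          (a2 - v).val < (b2 - v).val := by
      simpa [CWList, List.Chain', List.isChain_cons_cons, and_assoc] using hcw
    obtain ⟨p, hp, hpe⟩ := Finset.mem_image.1 hA
    obtain ⟨q, hq, hqe⟩ := Finset.mem_image.1 hB
    rw [hPmem] at hp hq
    obtain ⟨x1, y1⟩ := p
    obtain ⟨x2, y2⟩ := q
    simp only at hp hq hpe hqe
    have hx1n : x1 < n := by omega
    have hy1n : y1 + 1 < n := by omega
    have hx2n : x2 < n := by omega
    have hy2n : y2 + 1 < n := by omega
    have hvn : v.val < n := ZMod.val_lt v
    have hA1n : a1.val < n := ZMod.val_lt a1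
    have hA2n : a2.val < n := ZMod.val_lt a2
    have hB1n : b1.val < n := ZMod.val_lt b1
    have hB2n : b2.val < n := ZMod.val_lt b2
    have ev : ((v.val : ℕ) : ZMod n) = v := ZMod.natCast_rightInverse v
    have ea1 : ((a1.val : ℕ) : ZMod n) = a1 := ZMod.natCast_rightInverse a1
    have ea2 : ((a2.val : ℕ) : ZMod n) = a2 := ZMod.natCast_rightInverse a2
    have eb1 : ((b1.val : ℕ) : ZMod n) = b1 := ZMod.natCast_rightInverse b1
    have eb2 : ((b2.val : ℕ) : ZMod n) = b2 := ZMod.natCast_rightInverse b2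
    have key : ∀ u : ZMod n, u ∈ ({v, a1, a2} : Finset (ZMod n)) →
        u.val = x1 ∨ u.val = y1 ∨ u.val = y1 + 1 := by
      intro u hu
      rw [← hpe] at hu
      simp only [Finset.mem_insert, Finset.mem_singleton] at hu
      rcases hu with h | h | h
      · exact Or.inl (by rw [h, ZMod.val_cast_of_lt (by omega)])
      · exact Or.inr (Or.inl (by rw [h, ZMod.val_cast_of_lt (by omega)]))
      · exact Or.inr (Or.inr (by rw [h, ZMod.val_cast_of_lt (by omega)]))
    have keyB : ∀ u : ZMod n, u ∈ ({v, b1, b2} : Finset (ZMod n)) →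
        u.val = x2 ∨ u.val = y2 ∨ u.val = y2 + 1 := by
      intro u hu
      rw [← hqe] at hu
      simp only [Finset.mem_insert, Finset.mem_singleton] at hu
      rcases hu with h | h | h
      · exact Or.inl (by rw [h, ZMod.val_cast_of_lt (by omega)])
      · exact Or.inr (Or.inl (by rw [h, ZMod.val_cast_of_lt (by omega)]))
      · exact Or.inr (Or.inr (by rw [h, ZMod.val_cast_of_lt (by omega)]))
    have hV1 := key v (by simp)
    have hA1 := key a1 (by simp)
    have hA2 := key a2 (by simp)
    have hV2 := keyB v (by simp)
    have hB1 := keyB b1 (by simp)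
    have hB2 := keyB b2 (by simp)
    have mkD : ∀ u : ZMod n, ((u.val : ℕ) : ZMod n) = u →
        (v.val ≤ u.val ∧ (u - v).val = u.val - v.val) ∨
        (u.val < v.val ∧ (u - v).val = u.val + n - v.val) := by
      intro u eu
      have h := val_sub_cast (n := n) u.val v.val (ZMod.val_lt u) (ZMod.val_lt v)
      rw [eu, ev] at h
      rcases le_or_gt v.val u.val with hle | hlt
      · exact Or.inl ⟨hle, by rw [h, if_pos hle]⟩
      · exact Or.inr ⟨hlt, by rw [h, if_neg (by omega)]⟩
    have hDA1 := mkD a1 ea1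
    have hDA2 := mkD a2 ea2
    have hDB1 := mkD b1 eb1
    have hDB2 := mkD b2 eb2
    clear ev ea1 ea2 eb1 eb2 key keyB hpe hqe hcw hA hB mkD
    rcases hV1 with hv1 | hv1 | hv1 <;> rcases hV2 with hv2 | hv2 | hv2 <;> omega
  · -- cardinality
    have hinj : Set.InjOn (fun p : ℕ × ℕ => ({((p.1 : ℕ) : ZMod n), ((p.2 : ℕ) : ZMod n),
        ((p.2 + 1 : ℕ) : ZMod n)} : Finset (ZMod n))) P := by
      intro p hp q hq hfe
      rw [Finset.mem_coe, hPmem] at hp hq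
      obtain ⟨x1, y1⟩ := p
      obtain ⟨x2, y2⟩ := q
      simp only at hp hq hfe
      have hx1n : x1 < n := by omega
      have hy1n : y1 + 1 < n := by omega
      have hx2n : x2 < n := by omega
      have hy2n : y2 + 1 < n := by omega
      have key : ∀ k : ℕ, k < n → ((k : ℕ) : ZMod n) ∈
          ({((x2 : ℕ) : ZMod n), ((y2 : ℕ) : ZMod n), ((y2 + 1 : ℕ) : ZMod n)} : Finset (ZMod n)) →
          k = x2 ∨ k = y2 ∨ k = y2 + 1 := by
        intro k hk hm
        simp only [Finset.mem_insert, Finset.mem_singleton] at hm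
        rcases hm with h | h | h
        · exact Or.inl (by apply_fun ZMod.val at h; rwa [ZMod.val_cast_of_lt hk,
            ZMod.val_cast_of_lt (by omega)] at h)
        · exact Or.inr (Or.inl (by apply_fun ZMod.val at h; rwa [ZMod.val_cast_of_lt hk,
            ZMod.val_cast_of_lt (by omega)] at h))
        · exact Or.inr (Or.inr (by apply_fun ZMod.val at h; rwa [ZMod.val_cast_of_lt hk,
            ZMod.val_cast_of_lt (by omega)] at h))
      have h1 := key x1 hx1n (by rw [← hfe]; simp)
      have h2 := key y1 (by omega) (by rw [← hfe]; simp)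
      have h3 := key (y1 + 1) hy1n (by rw [← hfe]; simp)
      have : x1 = x2 ∧ y1 = y2 := by omega
      exact Prod.ext this.1 this.2
    rw [Finset.card_image_of_injOn hinj]
    have hdisj : Disjoint (Finset.range t ×ˢ Finset.Ico t (n - 1))
        ((Finset.Ico t (n - 2)).image (fun y => (y + 2, y))) := by
      rw [Finset.disjoint_left]
      rintro ⟨x, y⟩ hx hy
      simp only [Finset.mem_product, Finset.mem_range, Finset.mem_Ico, Finset.mem_image,
        Prod.mk.injEq] at hx hy
      omega
    have hinj2 : Function.Injective (fun y : ℕ => (y + 2, y)) := by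
      intro a b h
      simpa using (Prod.ext_iff.1 h).2
    have hPcard : P.card = t * (n - 1 - t) + (n - 2 - t) := by
      rw [hP, Finset.card_union_of_disjoint hdisj, Finset.card_product, Finset.card_range,
        Nat.card_Ico, Finset.card_image_of_injective _ hinj2, Nat.card_Ico]
    rw [hPcard]
    rcases Nat.even_or_odd n with ⟨m, hm⟩ | ⟨m, hm⟩
    · have h1 : t = m - 1 := by omega
      have h2 : n - 1 - t = m := by omega
      have hprod : t * (n - 1 - t) + m = m * m := by
        rw [h2, h1]
        rcases m with _ | k
        · simp
        · have : (k + 1) * (k + 1) = k * (k + 1) + (k + 1) := by ring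
          simp only [Nat.add_sub_cancel]
          omega
      have hsq : n ^ 2 = 4 * (m * m) := by subst hm; ring
      omega
    · have h1 : t = m - 1 := by omega
      have h2 : n - 1 - t = m + 1 := by omega
      have hprod : t * (n - 1 - t) + 1 = m * m := by
        rw [h2, h1]
        rcases m with _ | k
        · omega
        · have : (k + 1) * (k + 1) = k * (k + 1 + 1) + 1 := by ring
          simp only [Nat.add_sub_cancel]
          omega
      have hsq : n ^ 2 = 4 * (m * m) + 4 * m + 1 := by subst hm; ring
      omega
end

section
/- For every ε > 0 there exists N such that for all n ≥ N, every D_2-free cgh on Ω_n has at most (1/4 − 1/936 + ε)·n² triples; in particular, ex_circ(n, D_2) ≤ 0.499·C(n,2) for all sufficiently large n. -/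
/-- `H` contains a copy of the configuration `D₂`: two distinct triples sharing
exactly the pair `{x, y}`, with the third vertices `c ≠ d` lying in the same
open arc of `Ω_n` determined by `x` and `y`. -/
def HasD2 (n : ℕ) (H : Finset (Finset (ZMod n))) : Prop :=
  ∃ x y c d : ZMod n, c ≠ d ∧
    ((CWList n [x, c, y] ∧ CWList n [x, d, y]) ∨
     (CWList n [y, c, x] ∧ CWList n [y, d, x])) ∧
    ({x, y, c} : Finset (ZMod n)) ∈ H ∧ ({x, y, d} : Finset (ZMod n)) ∈ H

/-! ### Auxiliary machinery for the slot-counting argument -/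

/-- The weight of a slot of arc length `ℓ`. -/
def slotW (n : ℕ) (ℓ : ℕ) : ℕ := ℓ - (n / 3 + 1)

/-- The slots (pair plus side, encoded as (left endpoint, clockwise arc length))
used by the triple `e`. -/
noncomputable def slotsOf (n : ℕ) (e : Finset (ZMod n)) : Finset (ZMod n × ℕ) :=
  @Finset.filter _ (fun p => p.1 ∈ e ∧ p.1 + (p.2 : ZMod n) ∈ e ∧
      ∃ z ∈ e, 0 < (z - p.1).val ∧ (z - p.1).val < p.2) (Classical.decPred _)
    (e ×ˢ Finset.Icc 1 (n - 1))

lemma mem_slotsOf {n : ℕ} {e : Finset (ZMod n)} {p : ZMod n × ℕ} :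
    p ∈ slotsOf n e ↔ p.1 ∈ e ∧ p.2 ∈ Finset.Icc 1 (n - 1) ∧
      p.1 + (p.2 : ZMod n) ∈ e ∧
      ∃ z ∈ e, 0 < (z - p.1).val ∧ (z - p.1).val < p.2 := by
  classical
  unfold slotsOf
  rw [Finset.filter_congr_decidable, Finset.mem_filter, Finset.mem_product]
  tauto

lemma val_add_neg {n : ℕ} [NeZero n] {x : ZMod n} (hx : x ≠ 0) :
    x.val + (-x).val = n := by
  have hd : n ∣ x.val + (-x).val := by
    rw [← ZMod.natCast_eq_zero_iff]
    push_cast [ZMod.natCast_zmod_val]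
    ring
  have b1 : 0 < x.val := ZMod.val_pos.mpr hx
  have b2 : 0 < (-x).val := ZMod.val_pos.mpr (neg_ne_zero.mpr hx)
  have l1 : x.val < n := ZMod.val_lt x
  have l2 : (-x).val < n := ZMod.val_lt (-x)
  obtain ⟨k, hk⟩ := hd
  have hk2 : k < 2 := by
    by_contra h
    push_neg at h
    have := Nat.mul_le_mul_left n h
    linarith
  interval_cases k <;> omega

lemma val_sum3 {n : ℕ} [NeZero n] {x y z : ZMod n} (h : x + y + z = 0)
    (hx : x ≠ 0) (hy : y ≠ 0) (hz : z ≠ 0) :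
    x.val + y.val + z.val = n ∨ x.val + y.val + z.val = 2 * n := by
  have hd : n ∣ x.val + y.val + z.val := by
    rw [← ZMod.natCast_eq_zero_iff]
    push_cast [ZMod.natCast_zmod_val]
    exact h
  have b1 : 0 < x.val := ZMod.val_pos.mpr hx
  have b2 : 0 < y.val := ZMod.val_pos.mpr hy
  have b3 : 0 < z.val := ZMod.val_pos.mpr hz
  have l1 : x.val < n := ZMod.val_lt x
  have l2 : y.val < n := ZMod.val_lt y
  have l3 : z.val < n := ZMod.val_lt z
  obtain ⟨k, hk⟩ := hd
  have hk3 : k < 3 := by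
    by_contra h3
    push_neg at h3
    have := Nat.mul_le_mul_left n h3
    linarith
  interval_cases k <;> omega

/-- Every triple can be listed in clockwise order: the three gaps sum to `n`. -/
lemma exists_cw_order {n : ℕ} [NeZero n] {e : Finset (ZMod n)} (he : e.card = 3) :
    ∃ a b c : ZMod n, e = {a, b, c} ∧ a ≠ b ∧ b ≠ c ∧ a ≠ c ∧
      (b - a).val + (c - b).val + (a - c).val = n := by
  obtain ⟨a, b, c, hab, hac, hbc, rfl⟩ := Finset.card_eq_three.mp he
  have n1 : (b - a) ≠ 0 := sub_ne_zero.mpr (Ne.symm hab)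
  have n2 : (c - b) ≠ 0 := sub_ne_zero.mpr (Ne.symm hbc)
  have n3 : (a - c) ≠ 0 := sub_ne_zero.mpr hac
  have hsum : (b - a) + (c - b) + (a - c) = 0 := by ring
  rcases val_sum3 hsum n1 n2 n3 with h | h
  · exact ⟨a, b, c, rfl, hab, hbc, hac, h⟩
  · refine ⟨a, c, b, ?_, hac, Ne.symm hbc, hab, ?_⟩
    · ext x
      simp only [Finset.mem_insert, Finset.mem_singleton]
      tauto
    · have e1 : (b - a).val + (a - b).val = n := by
        have := val_add_neg n1
        rwa [neg_sub] at this
      have e2 : (c - b).val + (b - c).val = n := by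
        have := val_add_neg n2
        rwa [neg_sub] at this
      have e3 : (a - c).val + (c - a).val = n := by
        have := val_add_neg n3
        rwa [neg_sub] at this
      omega

/-- Each triple collects weight at least `n - 5` from its slots. -/
lemma weight_lower {n : ℕ} (hn : 3 ≤ n) {e : Finset (ZMod n)} (he : e.card = 3) :
    n - 5 ≤ ∑ p ∈ slotsOf n e, slotW n p.2 := by
  haveI : NeZero n := ⟨by omega⟩
  obtain ⟨a, b, c, rfl, hab, hbc, hac, hsum⟩ := exists_cw_order he
  set d1 := (b - a).val with hd1
  set d2 := (c - b).val with hd2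
  set d3 := (a - c).val with hd3
  have p1 : 0 < d1 := ZMod.val_pos.mpr (sub_ne_zero.mpr (Ne.symm hab))
  have p2 : 0 < d2 := ZMod.val_pos.mpr (sub_ne_zero.mpr (Ne.symm hbc))
  have p3 : 0 < d3 := ZMod.val_pos.mpr (sub_ne_zero.mpr hac)
  have l1 : d1 < n := ZMod.val_lt _
  have l2 : d2 < n := ZMod.val_lt _
  have l3 : d3 < n := ZMod.val_lt _
  -- the endpoint computation
  have hcast : ∀ x y : ZMod n, y + ((n - (y - x).val : ℕ) : ZMod n) = x := by
    intro x y
    have h := (ZMod.val_lt (y - x)).le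
    push_cast [Nat.cast_sub h, ZMod.natCast_self, ZMod.natCast_zmod_val]
    ring
  have ha : a ∈ ({a, b, c} : Finset (ZMod n)) := by simp
  have hb : b ∈ ({a, b, c} : Finset (ZMod n)) := by simp
  have hc : c ∈ ({a, b, c} : Finset (ZMod n)) := by simp
  have hend1 : b + ((n - d1 : ℕ) : ZMod n) = a := hcast a b
  have hend2 : c + ((n - d2 : ℕ) : ZMod n) = b := hcast b c
  have hend3 : a + ((n - d3 : ℕ) : ZMod n) = c := hcast c a
  have hs1 : ((b, n - d1) : ZMod n × ℕ) ∈ slotsOf n {a, b, c} := by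
    rw [mem_slotsOf]
    refine ⟨hb, Finset.mem_Icc.mpr (by omega), ?_, c, hc, ?_, ?_⟩
    · show b + ((n - d1 : ℕ) : ZMod n) ∈ _
      rw [hend1]; exact ha
    · show 0 < (c - b).val
      exact p2
    · show (c - b).val < n - d1
      omega
  have hs2 : ((c, n - d2) : ZMod n × ℕ) ∈ slotsOf n {a, b, c} := by
    rw [mem_slotsOf]
    refine ⟨hc, Finset.mem_Icc.mpr (by omega), ?_, a, ha, ?_, ?_⟩
    · show c + ((n - d2 : ℕ) : ZMod n) ∈ _
      rw [hend2]; exact hb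
    · show 0 < (a - c).val
      exact p3
    · show (a - c).val < n - d2
      omega
  have hs3 : ((a, n - d3) : ZMod n × ℕ) ∈ slotsOf n {a, b, c} := by
    rw [mem_slotsOf]
    refine ⟨ha, Finset.mem_Icc.mpr (by omega), ?_, b, hb, ?_, ?_⟩
    · show a + ((n - d3 : ℕ) : ZMod n) ∈ _
      rw [hend3]; exact hc
    · show 0 < (b - a).val
      exact p1
    · show (b - a).val < n - d3
      omega
  have hsub : ({((b, n - d1) : ZMod n × ℕ), (c, n - d2), (a, n - d3)} : Finset (ZMod n × ℕ))
      ⊆ slotsOf n {a, b, c} := by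
    intro p hp
    simp only [Finset.mem_insert, Finset.mem_singleton] at hp
    rcases hp with rfl | rfl | rfl <;> assumption
  calc n - 5 ≤ slotW n (n - d1) + slotW n (n - d2) + slotW n (n - d3) := by
        unfold slotW; omega
    _ = ∑ p ∈ ({((b, n - d1) : ZMod n × ℕ), (c, n - d2), (a, n - d3)} :
          Finset (ZMod n × ℕ)), slotW n p.2 := by
        rw [Finset.sum_insert (by simp [hbc, Ne.symm hab]), Finset.sum_insert (by simp [Ne.symm hac]),
          Finset.sum_singleton]
        dsimp only
        ring
    _ ≤ ∑ p ∈ slotsOf n {a, b, c}, slotW n p.2 := Finset.sum_le_sum_of_subset hsub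

/-- Distinct triples of a `D₂`-free cgh use disjoint slot sets. -/
lemma slots_pairwiseDisjoint {n : ℕ} (hn : 3 ≤ n) {H : Finset (Finset (ZMod n))}
    (hH : IsCgh n H) (hD2 : ¬ HasD2 n H) :
    Set.PairwiseDisjoint (↑H : Set (Finset (ZMod n))) (slotsOf n) := by
  haveI : NeZero n := ⟨by omega⟩
  intro e he f hf hef
  rw [Function.onFun, Finset.disjoint_left]
  intro p hpe hpf
  obtain ⟨x, ℓ⟩ := p
  rw [mem_slotsOf] at hpe hpf
  obtain ⟨hxe, hℓ, hye, z, hze, hz1, hz2⟩ := hpe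
  obtain ⟨hxf, -, hyf, w, hwf, hw1, hw2⟩ := hpf
  rw [Finset.mem_Icc] at hℓ
  set y := x + (ℓ : ZMod n) with hy
  have hℓn : ℓ < n := by omega
  have hyx : (y - x).val = ℓ := by
    rw [hy, add_sub_cancel_left, ZMod.val_cast_of_lt hℓn]
  have hxy : x ≠ y := by
    intro h
    have : (y - x).val = 0 := by rw [← h, sub_self, ZMod.val_zero]
    omega
  have triple : ∀ g : Finset (ZMod n), g ∈ H → x ∈ g → y ∈ g →
      ∀ u : ZMod n, u ∈ g → 0 < (u - x).val → (u - x).val < ℓ → g = {x, y, u} := by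
    intro g hg hxg hyg u hug hu1 hu2
    have hux : u ≠ x := by
      intro h; rw [h, sub_self, ZMod.val_zero] at hu1; omega
    have huy : u ≠ y := by
      intro h; rw [h, hyx] at hu2; omega
    refine (Finset.eq_of_subset_of_card_le ?_ ?_).symm
    · intro t ht
      simp only [Finset.mem_insert, Finset.mem_singleton] at ht
      rcases ht with rfl | rfl | rfl <;> assumption
    · rw [hH g hg]
      have : ({x, y, u} : Finset (ZMod n)).card = 3 :=
        Finset.card_eq_three.mpr ⟨x, y, u, hxy, Ne.symm hux, Ne.symm huy, rfl⟩
      omega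
  have he3 : e = {x, y, z} := triple e he hxe hye z hze hz1 hz2
  have hf3 : f = {x, y, w} := triple f hf hxf hyf w hwf hw1 hw2
  have hzw : z ≠ w := by
    intro h
    apply hef
    rw [he3, hf3, h]
  apply hD2
  refine ⟨x, y, z, w, hzw, Or.inl ⟨?_, ?_⟩, he3 ▸ he, hf3 ▸ hf⟩
  · show List.Chain' (· < ·) [(0 : ℕ), (z - x).val, (y - x).val]
    rw [hyx]
    simp [List.Chain', List.isChain_cons_cons, hz1, hz2]
  · show List.Chain' (· < ·) [(0 : ℕ), (w - x).val, (y - x).val]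
    rw [hyx]
    simp [List.Chain', List.isChain_cons_cons, hw1, hw2]

lemma gaussBound (a : ℕ) : ∀ m : ℕ, 2 * ∑ ℓ ∈ Finset.range m, (ℓ - a) ≤ (m - a) ^ 2
  | 0 => by simp
  | m + 1 => by
    rw [Finset.sum_range_succ, Nat.mul_add]
    have ih := gaussBound a m
    have h1 : (m - a) ^ 2 + 2 * (m - a) ≤ (m + 1 - a) ^ 2 := by
      rcases le_or_gt a m with h | h
      · have hm : m + 1 - a = (m - a) + 1 := by omega
        rw [hm]
        calc (m - a) ^ 2 + 2 * (m - a) ≤ (m - a) ^ 2 + 2 * (m - a) + 1 := Nat.le_succ _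
          _ = ((m - a) + 1) ^ 2 := by ring
      · have h2 : m - a = 0 := by omega
        simp [h2]
    linarith

/-- Main counting inequality, in `ℕ`. -/
lemma main_nat {n : ℕ} (hn : 3 ≤ n) {H : Finset (Finset (ZMod n))}
    (hH : IsCgh n H) (hD2 : ¬ HasD2 n H) :
    9 * (H.card * (n - 5)) ≤ 2 * n ^ 3 := by
  haveI : NeZero n := ⟨by omega⟩
  have step1 : H.card * (n - 5) ≤ ∑ e ∈ H, ∑ p ∈ slotsOf n e, slotW n p.2 := by
    have := Finset.card_nsmul_le_sum H (fun e => ∑ p ∈ slotsOf n e, slotW n p.2)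
      (n - 5) (fun e he => weight_lower hn (hH e he))
    simpa [smul_eq_mul] using this
  have step2 : ∑ e ∈ H, ∑ p ∈ slotsOf n e, slotW n p.2
      = ∑ p ∈ H.biUnion (slotsOf n), slotW n p.2 :=
    (Finset.sum_biUnion (slots_pairwiseDisjoint hn hH hD2)).symm
  have hsub : H.biUnion (slotsOf n) ⊆ Finset.univ ×ˢ Finset.Icc 1 (n - 1) := by
    intro p hp
    rw [Finset.mem_biUnion] at hp
    obtain ⟨e, _, hpe⟩ := hp
    rw [mem_slotsOf] at hpe
    exact Finset.mem_product.mpr ⟨Finset.mem_univ _, hpe.2.1⟩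
  have step3 : ∑ p ∈ H.biUnion (slotsOf n), slotW n p.2
      ≤ ∑ p ∈ Finset.univ ×ˢ Finset.Icc 1 (n - 1), slotW n p.2 :=
    Finset.sum_le_sum_of_subset hsub
  have step4 : ∑ p ∈ (Finset.univ : Finset (ZMod n)) ×ˢ Finset.Icc 1 (n - 1), slotW n p.2
      = n * ∑ ℓ ∈ Finset.Icc 1 (n - 1), slotW n ℓ := by
    rw [Finset.sum_product]
    dsimp only
    rw [Finset.sum_const, Finset.card_univ, ZMod.card, smul_eq_mul]
  have step5 : ∑ ℓ ∈ Finset.Icc 1 (n - 1), slotW n ℓ ≤ ∑ ℓ ∈ Finset.range n, slotW n ℓ :=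
    Finset.sum_le_sum_of_subset (by
      intro ℓ hℓ
      rw [Finset.mem_Icc] at hℓ
      rw [Finset.mem_range]
      omega)
  have step6 : 2 * ∑ ℓ ∈ Finset.range n, slotW n ℓ ≤ (n - (n / 3 + 1)) ^ 2 :=
    gaussBound (n / 3 + 1) n
  have step7 : 9 * (n - (n / 3 + 1)) ^ 2 ≤ 4 * n ^ 2 := by
    have h3 : 3 * (n - (n / 3 + 1)) ≤ 2 * n := by omega
    calc 9 * (n - (n / 3 + 1)) ^ 2 = (3 * (n - (n / 3 + 1))) ^ 2 := by ring
      _ ≤ (2 * n) ^ 2 := Nat.pow_le_pow_left h3 2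
      _ = 4 * n ^ 2 := by ring
  -- combine everything
  have key : H.card * (n - 5) ≤ n * ∑ ℓ ∈ Finset.range n, slotW n ℓ := by
    calc H.card * (n - 5) ≤ ∑ e ∈ H, ∑ p ∈ slotsOf n e, slotW n p.2 := step1
      _ = ∑ p ∈ H.biUnion (slotsOf n), slotW n p.2 := step2
      _ ≤ ∑ p ∈ Finset.univ ×ˢ Finset.Icc 1 (n - 1), slotW n p.2 := step3
      _ = n * ∑ ℓ ∈ Finset.Icc 1 (n - 1), slotW n ℓ := step4
      _ ≤ n * ∑ ℓ ∈ Finset.range n, slotW n ℓ := Nat.mul_le_mul_left n step5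
  have key2 : 18 * (H.card * (n - 5)) ≤ 9 * (n * (2 * ∑ ℓ ∈ Finset.range n, slotW n ℓ)) := by
    have := Nat.mul_le_mul_left 18 key
    linarith
  have key3 : 9 * (n * (2 * ∑ ℓ ∈ Finset.range n, slotW n ℓ))
      ≤ n * (9 * (n - (n / 3 + 1)) ^ 2) := by
    have := Nat.mul_le_mul_left n step6
    linarith
  have key4 : n * (9 * (n - (n / 3 + 1)) ^ 2) ≤ n * (4 * n ^ 2) :=
    Nat.mul_le_mul_left n step7
  have : 18 * (H.card * (n - 5)) ≤ 4 * n ^ 3 := by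
    calc 18 * (H.card * (n - 5)) ≤ 9 * (n * (2 * ∑ ℓ ∈ Finset.range n, slotW n ℓ)) := key2
      _ ≤ n * (9 * (n - (n / 3 + 1)) ^ 2) := key3
      _ ≤ n * (4 * n ^ 2) := key4
      _ = 4 * n ^ 3 := by ring
  linarith

/-- The counting inequality over `ℝ`. -/
lemma main_real {n : ℕ} (hn : 100 ≤ n) {H : Finset (Finset (ZMod n))}
    (hH : IsCgh n H) (hD2 : ¬ HasD2 n H) :
    (H.card : ℝ) ≤ 2 * (n : ℝ) ^ 3 / (9 * ((n : ℝ) - 5)) := by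
  have hmain := main_nat (by omega) hH hD2
  have hcast : ((9 * (H.card * (n - 5)) : ℕ) : ℝ) ≤ ((2 * n ^ 3 : ℕ) : ℝ) :=
    Nat.cast_le.mpr hmain
  have h5 : (5 : ℕ) ≤ n := by omega
  push_cast [Nat.cast_sub h5] at hcast
  have hpos : (0 : ℝ) < 9 * ((n : ℝ) - 5) := by
    have : (100 : ℝ) ≤ (n : ℝ) := by exact_mod_cast hn
    linarith
  rw [le_div_iff₀ hpos]
  linarith

theorem ex_D2_upper :
    (∀ ε : ℝ, 0 < ε → ∃ N : ℕ, ∀ n : ℕ, N ≤ n →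
      ∀ H : Finset (Finset (ZMod n)), IsCgh n H → ¬ HasD2 n H →
        (H.card : ℝ) ≤ (1 / 4 - 1 / 936 + ε) * n ^ 2) ∧
    (∃ N : ℕ, ∀ n : ℕ, N ≤ n →
      ∀ H : Finset (Finset (ZMod n)), IsCgh n H → ¬ HasD2 n H →
        (H.card : ℝ) ≤ 0.499 * (n.choose 2)) := by
  constructor
  · intro ε hε
    refine ⟨100, fun n hn H hH hD2 => ?_⟩
    have hc := main_real hn hH hD2
    have hn' : (100 : ℝ) ≤ (n : ℝ) := by exact_mod_cast hn
    have hpos : (0 : ℝ) < 9 * ((n : ℝ) - 5) := by linarith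
    refine le_trans hc ?_
    rw [div_le_iff₀ hpos]
    have h100 : 100 * (n : ℝ) ^ 2 ≤ (n : ℝ) ^ 3 := by nlinarith
    have hA : (0 : ℝ) ≤ ε * ((n : ℝ) ^ 2 * (9 * ((n : ℝ) - 5))) := by
      apply mul_nonneg hε.le
      nlinarith
    nlinarith
  · refine ⟨100, fun n hn H hH hD2 => ?_⟩
    have hc := main_real hn hH hD2
    have hn' : (100 : ℝ) ≤ (n : ℝ) := by exact_mod_cast hn
    have hpos : (0 : ℝ) < 9 * ((n : ℝ) - 5) := by linarith
    refine le_trans hc ?_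
    rw [div_le_iff₀ hpos, Nat.cast_choose_two]
    have h100 : 100 * (n : ℝ) ^ 2 ≤ (n : ℝ) ^ 3 := by nlinarith
    nlinarith
end

section
/- There exists a constant C > 0 such that for every integer n ≥ 3 there is a D_2-free cgh on Ω_n with at least (8/21)·C(n,2) − C·n triples; that is, ex_circ(n, D_2) ≥ (8/21)·C(n,2) + O(n). -/
lemma cwlist_iff {n : ℕ} (x c y : ZMod n) :
    CWList n [x, c, y] ↔ 0 < (c - x).val ∧ (c - x).val < (y - x).val := by
  show ((0 : ℕ) :: ([c, y].map fun b => (b - x).val)).Chain' (· < ·) ↔ _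
  simp [List.Chain', List.isChain_cons_cons]

lemma cast_inj' {n u v : ℕ} (hu : u < n) (hv : v < n) (h : (u : ZMod n) = v) : u = v := by
  have := congrArg ZMod.val h
  rwa [ZMod.val_natCast_of_lt hu, ZMod.val_natCast_of_lt hv] at this

lemma vsub₁ {n : ℕ} (A : ZMod n) {p q : ℕ} (hq : q ≤ p) (hp : p < n) :
    ((A + (p : ZMod n)) - (A + (q : ZMod n))).val = p - q := by
  have h : (A + (p : ZMod n)) - (A + (q : ZMod n)) = ((p - q : ℕ) : ZMod n) := by
    rw [Nat.cast_sub hq]; ring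
  rw [h, ZMod.val_natCast_of_lt (by omega)]

lemma vsub₂ {n : ℕ} (A : ZMod n) {p q : ℕ} (hpq : p < q) (hq : q < n) :
    ((A + (p : ZMod n)) - (A + (q : ZMod n))).val = n - (q - p) := by
  have h : (A + (p : ZMod n)) - (A + (q : ZMod n)) = ((n - (q - p) : ℕ) : ZMod n) := by
    rw [Nat.cast_sub (show q - p ≤ n by omega), Nat.cast_sub hpq.le, ZMod.natCast_self]; ring
  rw [h, ZMod.val_natCast_of_lt (by omega)]

/-- The key rigidity lemma: if `{x,y,c}` is one of our triples and `c` lies in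
the open clockwise arc from `x` to `y`, then the clockwise arc-length
`(y-x).val` determines which vertex `x` is, and `c` is determined by `x`. -/
lemma triCase {n k i : ℕ} (hn : 5 * k + 1 ≤ n) (hi1 : 1 ≤ i) (hik : i ≤ k)
    (A x y c : ZMod n)
    (hset : ({x, y, c} : Finset (ZMod n)) =
      {A, A + (i : ZMod n), A + ((k + 2 * i : ℕ) : ZMod n)})
    (h1 : 0 < (c - x).val) (h2 : (c - x).val < (y - x).val) :
    (x = A ∧ c = x + (i : ZMod n) ∧ (y - x).val = k + 2 * i) ∨
    (x = A + (i : ZMod n) ∧ c = x + ((k + i : ℕ) : ZMod n) ∧ (y - x).val = n - i) ∨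
    (x = A + ((k + 2 * i : ℕ) : ZMod n) ∧ c = x + ((n - (k + 2 * i) : ℕ) : ZMod n) ∧
      (y - x).val = n - (k + i)) := by
  haveI : NeZero n := ⟨by omega⟩
  have hin : i < n := by omega
  have hkin : k + 2 * i < n := by omega
  have memx : x = A ∨ x = A + (i : ZMod n) ∨ x = A + ((k + 2 * i : ℕ) : ZMod n) := by
    have : x ∈ ({A, A + (i : ZMod n), A + ((k + 2 * i : ℕ) : ZMod n)} : Finset (ZMod n)) := by
      rw [← hset]; simp
    simpa using this
  have memy : y = A ∨ y = A + (i : ZMod n) ∨ y = A + ((k + 2 * i : ℕ) : ZMod n) := by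
    have : y ∈ ({A, A + (i : ZMod n), A + ((k + 2 * i : ℕ) : ZMod n)} : Finset (ZMod n)) := by
      rw [← hset]; simp
    simpa using this
  have memc : c = A ∨ c = A + (i : ZMod n) ∨ c = A + ((k + 2 * i : ℕ) : ZMod n) := by
    have : c ∈ ({A, A + (i : ZMod n), A + ((k + 2 * i : ℕ) : ZMod n)} : Finset (ZMod n)) := by
      rw [← hset]; simp
    simpa using this
  have hxc : x ≠ c := by
    intro h; rw [← h, sub_self, ZMod.val_zero] at h1; omega
  have hxy : x ≠ y := by
    intro h; rw [← h, sub_self, ZMod.val_zero] at h2; omega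
  have hcy : c ≠ y := by
    intro h; rw [h] at h2; omega
  rcases memx with hx | hx | hx <;> rcases memc with hc | hc | hc
  · exact absurd (hx.trans hc.symm) hxc
  · -- x = A, c = A + i, y = A + (k+2i)
    have hy : y = A + ((k + 2 * i : ℕ) : ZMod n) := by
      rcases memy with h | h | h
      · exact absurd (hx.trans h.symm) hxy
      · exact absurd (hc.trans h.symm) hcy
      · exact h
    have hx0 : x = A + ((0 : ℕ) : ZMod n) := by rw [hx]; simp
    left
    refine ⟨hx, by rw [hc, hx], ?_⟩
    rw [hy, hx0, vsub₁ A (Nat.zero_le _) hkin]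
    omega
  · -- x = A, c = A + (k+2i), y = A + i : contradiction with h2
    have hy : y = A + (i : ZMod n) := by
      rcases memy with h | h | h
      · exact absurd (hx.trans h.symm) hxy
      · exact h
      · exact absurd (hc.trans h.symm) hcy
    exfalso
    have hx0 : x = A + ((0 : ℕ) : ZMod n) := by rw [hx]; simp
    rw [hc, hy, hx0, vsub₁ A (Nat.zero_le _) hkin, vsub₁ A (Nat.zero_le _) hin] at h2
    omega
  · -- x = A + i, c = A, y = A + (k+2i) : contradiction
    have hy : y = A + ((k + 2 * i : ℕ) : ZMod n) := by
      rcases memy with h | h | h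
      · exact absurd (hc.trans h.symm) hcy
      · exact absurd (hx.trans h.symm) hxy
      · exact h
    exfalso
    have hc0 : c = A + ((0 : ℕ) : ZMod n) := by rw [hc]; simp
    rw [hc0, hy, hx, vsub₂ A (show 0 < i by omega) hin,
      vsub₁ A (show i ≤ k + 2 * i by omega) hkin] at h2
    omega
  · exact absurd (hx.trans hc.symm) hxc
  · -- x = A + i, c = A + (k+2i), y = A
    have hy : y = A := by
      rcases memy with h | h | h
      · exact h
      · exact absurd (hx.trans h.symm) hxy
      · exact absurd (hc.trans h.symm) hcy
    right; left
    refine ⟨hx, ?_, ?_⟩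
    · rw [hc, hx]; push_cast; ring
    · have hy0 : y = A + ((0 : ℕ) : ZMod n) := by rw [hy]; simp
      rw [hy0, hx, vsub₂ A (show 0 < i by omega) hin]
      omega
  · -- x = A + (k+2i), c = A, y = A + i
    have hy : y = A + (i : ZMod n) := by
      rcases memy with h | h | h
      · exact absurd (hc.trans h.symm) hcy
      · exact h
      · exact absurd (hx.trans h.symm) hxy
    right; right
    refine ⟨hx, ?_, ?_⟩
    · rw [hc, hx, add_assoc, ← Nat.cast_add,
        show k + 2 * i + (n - (k + 2 * i)) = n by omega, ZMod.natCast_self, add_zero]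
    · rw [hy, hx, vsub₂ A (show i < k + 2 * i by omega) hkin]
      omega
  · -- x = A + (k+2i), c = A + i, y = A : contradiction
    have hy : y = A := by
      rcases memy with h | h | h
      · exact h
      · exact absurd (hc.trans h.symm) hcy
      · exact absurd (hx.trans h.symm) hxy
    exfalso
    have hy0 : y = A + ((0 : ℕ) : ZMod n) := by rw [hy]; simp
    rw [hc, hy0, hx, vsub₂ A (show i < k + 2 * i by omega) hkin,
      vsub₂ A (show 0 < k + 2 * i by omega) hkin] at h2
    omega
  · exact absurd (hx.trans hc.symm) hxc

theorem ex_D2_lower :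
    ∃ C : ℝ, 0 < C ∧ ∀ n : ℕ, 3 ≤ n →
      ∃ H : Finset (Finset (ZMod n)), IsCgh n H ∧ ¬ HasD2 n H ∧
        (8 : ℝ) / 21 * (n.choose 2) - C * n ≤ (H.card : ℝ) := by
  refine ⟨1, one_pos, fun n hn => ?_⟩
  haveI : NeZero n := ⟨by omega⟩
  set k : ℕ := (n - 1) / 5 with hkdef
  have hkn : 5 * k + 1 ≤ n := by
    have := Nat.div_mul_le_self (n - 1) 5
    omega
  set f : ℕ × ℕ → Finset (ZMod n) := fun p =>
    {(p.1 : ZMod n), (p.1 : ZMod n) + (p.2 : ZMod n),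
      (p.1 : ZMod n) + ((k + 2 * p.2 : ℕ) : ZMod n)} with hfdef
  set H : Finset (Finset (ZMod n)) :=
    (Finset.range n ×ˢ Finset.Icc 1 k).image f with hHdef
  have hmem : ∀ e ∈ H, ∃ a i : ℕ, a < n ∧ 1 ≤ i ∧ i ≤ k ∧
      e = {(a : ZMod n), (a : ZMod n) + (i : ZMod n),
        (a : ZMod n) + ((k + 2 * i : ℕ) : ZMod n)} := by
    intro e he
    obtain ⟨⟨a, i⟩, hp, hfe⟩ := Finset.mem_image.mp he
    simp only [Finset.mem_product, Finset.mem_range, Finset.mem_Icc] at hp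
    exact ⟨a, i, hp.1, hp.2.1, hp.2.2, hfe.symm⟩
  refine ⟨H, ?_, ?_, ?_⟩
  · -- IsCgh
    intro e he
    obtain ⟨a, i, ha, hi1, hik, rfl⟩ := hmem e he
    have hin : i < n := by omega
    have hkin : k + 2 * i < n := by omega
    have ne1 : (a : ZMod n) ≠ (a : ZMod n) + (i : ZMod n) := by
      intro h
      have h' : ((0 : ℕ) : ZMod n) = (i : ZMod n) := by
        have := (left_eq_add.mp h).symm
        simpa using this
      have := cast_inj' (show 0 < n by omega) hin h'
      omega
    have ne2 : (a : ZMod n) ≠ (a : ZMod n) + ((k + 2 * i : ℕ) : ZMod n) := by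
      intro h
      have h' : ((0 : ℕ) : ZMod n) = ((k + 2 * i : ℕ) : ZMod n) := by
        have := (left_eq_add.mp h).symm
        simpa using this
      have := cast_inj' (show 0 < n by omega) hkin h'
      omega
    have ne3 : (a : ZMod n) + (i : ZMod n) ≠ (a : ZMod n) + ((k + 2 * i : ℕ) : ZMod n) := by
      intro h
      have h' : (i : ZMod n) = ((k + 2 * i : ℕ) : ZMod n) := add_left_cancel h
      have := cast_inj' hin hkin h'
      omega
    rw [Finset.card_insert_of_notMem (by
        simp only [Finset.mem_insert, Finset.mem_singleton]
        push_neg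
        exact ⟨ne1, ne2⟩),
      Finset.card_insert_of_notMem (by
        simp only [Finset.mem_singleton]
        exact ne3), Finset.card_singleton]
  · -- no D2
    have key : ∀ x y c : ZMod n, ({x, y, c} : Finset (ZMod n)) ∈ H →
        0 < (c - x).val → (c - x).val < (y - x).val →
        ∃ i : ℕ, 1 ≤ i ∧ i ≤ k ∧
          (((y - x).val = k + 2 * i ∧ c = x + (i : ZMod n)) ∨
           ((y - x).val = n - i ∧ c = x + ((k + i : ℕ) : ZMod n)) ∨
           ((y - x).val = n - (k + i) ∧ c = x + ((n - (k + 2 * i) : ℕ) : ZMod n))) := by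
      intro x y c hc h1 h2
      obtain ⟨a, i, ha, hi1, hik, heq⟩ := hmem _ hc
      rcases triCase hkn hi1 hik (a : ZMod n) x y c heq h1 h2 with
        ⟨_, hcx, hD⟩ | ⟨_, hcx, hD⟩ | ⟨_, hcx, hD⟩
      · exact ⟨i, hi1, hik, Or.inl ⟨hD, hcx⟩⟩
      · exact ⟨i, hi1, hik, Or.inr (Or.inl ⟨hD, hcx⟩)⟩
      · exact ⟨i, hi1, hik, Or.inr (Or.inr ⟨hD, hcx⟩)⟩
    rintro ⟨x, y, c, d, hcd, hor, hxc, hxd⟩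
    rcases hor with ⟨h1, h2⟩ | ⟨h1, h2⟩
    · rw [cwlist_iff] at h1 h2
      obtain ⟨i, hi1, hik, hbc⟩ := key x y c hxc h1.1 h1.2
      obtain ⟨j, hj1, hjk, hbd⟩ := key x y d hxd h2.1 h2.2
      apply hcd
      rcases hbc with ⟨hD, hc'⟩ | ⟨hD, hc'⟩ | ⟨hD, hc'⟩ <;>
        rcases hbd with ⟨hD', hd'⟩ | ⟨hD', hd'⟩ | ⟨hD', hd'⟩ <;>
        first
          | (exfalso; omega)
          | (have hij : i = j := by omega
             rw [hc', hd', hij])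
    · rw [cwlist_iff] at h1 h2
      have hswap : ∀ z : ZMod n, ({y, x, z} : Finset (ZMod n)) = {x, y, z} := fun z =>
        Finset.insert_comm y x {z}
      obtain ⟨i, hi1, hik, hbc⟩ := key y x c (by rw [hswap]; exact hxc) h1.1 h1.2
      obtain ⟨j, hj1, hjk, hbd⟩ := key y x d (by rw [hswap]; exact hxd) h2.1 h2.2
      apply hcd
      rcases hbc with ⟨hD, hc'⟩ | ⟨hD, hc'⟩ | ⟨hD, hc'⟩ <;>
        rcases hbd with ⟨hD', hd'⟩ | ⟨hD', hd'⟩ | ⟨hD', hd'⟩ <;>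
        first
          | (exfalso; omega)
          | (have hij : i = j := by omega
             rw [hc', hd', hij])
  · -- cardinality bound
    have hinj : Set.InjOn f ↑(Finset.range n ×ˢ Finset.Icc 1 k) := by
      rintro ⟨a, i⟩ hp ⟨b, j⟩ hq hfab
      simp only [Finset.coe_product, Set.mem_prod, Finset.mem_coe, Finset.mem_range,
        Finset.mem_Icc, Finset.coe_range, Set.mem_Iio, Finset.coe_Icc, Set.mem_Icc] at hp hq
      have ha := hp.1
      have hi1 := hp.2.1
      have hik := hp.2.2
      have hb := hq.1
      have hj1 := hq.2.1
      have hjk := hq.2.2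
      have hin : i < n := by omega
      have hkin : k + 2 * i < n := by omega
      have hset : ({(a : ZMod n), (a : ZMod n) + ((k + 2 * i : ℕ) : ZMod n),
          (a : ZMod n) + (i : ZMod n)} : Finset (ZMod n)) =
          {(b : ZMod n), (b : ZMod n) + (j : ZMod n),
            (b : ZMod n) + ((k + 2 * j : ℕ) : ZMod n)} := by
        refine Eq.trans ?_ hfab
        exact congrArg (insert (a : ZMod n)) (Finset.pair_comm _ _)
      have e1 : (((a : ZMod n) + (i : ZMod n)) - (a : ZMod n)).val = i := by
        rw [add_sub_cancel_left, ZMod.val_natCast_of_lt hin]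
      have e2 : (((a : ZMod n) + ((k + 2 * i : ℕ) : ZMod n)) - (a : ZMod n)).val
          = k + 2 * i := by
        rw [add_sub_cancel_left, ZMod.val_natCast_of_lt hkin]
      rcases triCase hkn hj1 hjk (b : ZMod n) (a : ZMod n)
          ((a : ZMod n) + ((k + 2 * i : ℕ) : ZMod n)) ((a : ZMod n) + (i : ZMod n)) hset
          (by rw [e1]; omega) (by rw [e1, e2]; omega) with
        ⟨hab, _, hD⟩ | ⟨_, _, hD⟩ | ⟨_, _, hD⟩
      · rw [e2] at hD
        have hij : i = j := by omega
        have hab' : a = b := cast_inj' ha hb hab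
        simp [hij, hab']
      · rw [e2] at hD; exfalso; omega
      · rw [e2] at hD; exfalso; omega
    have hcard : H.card = n * k := by
      rw [hHdef, Finset.card_image_of_injOn hinj, Finset.card_product, Finset.card_range,
        Nat.card_Icc, Nat.add_sub_cancel]
    rw [hcard]
    have hlin : 4 * (n - 1) ≤ 21 * k + 21 := by omega
    obtain ⟨m, hm⟩ : Even ((n - 1) * n) := by
      have := Nat.even_mul_succ_self (n - 1)
      rwa [show n - 1 + 1 = n by omega] at this
    have hch : n.choose 2 = m := by
      rw [Nat.choose_two_right]
      have : n * (n - 1) = m + m := by rw [← hm]; ring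
      omega
    have hnat : 8 * n.choose 2 ≤ 21 * (n * k) + 21 * n := by
      have h1 : n * (4 * (n - 1)) ≤ n * (21 * k + 21) := Nat.mul_le_mul le_rfl hlin
      have h2 : n * (4 * (n - 1)) = 4 * ((n - 1) * n) := by ring
      have h3 : n * (21 * k + 21) = 21 * (n * k) + 21 * n := by ring
      rw [hch]
      omega
    have hR : (8 : ℝ) * (n.choose 2 : ℝ) ≤ 21 * ((n * k : ℕ) : ℝ) + 21 * n := by
      have := (Nat.cast_le (α := ℝ)).mpr hnat
      push_cast at this ⊢
      linarith
    push_cast at hR ⊢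
    linarith
end
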